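/- Let s and t be n-colored rooted trees, v a vertex of t and p ∈ {1,…,n} a color, and let u = s ∘_v^p t be the tree obtained by grafting s onto v by an edge of color p. Then a_s · a_t · n(s,t,u) = a_u · m(v,t), where a_x denotes the order of the automorphism group of the n-colored rooted tree x, m(v,t) denotes the size of the orbit of v under the automorphism group of t, and n(s,t,u) denotes the number of edges e of u such that deleting e leaves the component not containing the root isomorphic to s and the component containing the root isomorphic to t (as n-colored rooted trees). -/

import Mathlib

/- Core combinatorics of n-edge-colored rooted forests.

A forest is encoded by a finite set of vertices (natural numbers), a
parent function (pointing one step towards the root) and a coloring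
function assigning to each non-root vertex the color of the edge
connecting it to its parent.  Well-formedness (`WF`) asks that the parent
function is supported on the vertex set and is acyclic. -/

open scoped Classical

noncomputable section

structure PForest (n : ℕ) where
  verts : Finset ℕ
  parent : ℕ → Option ℕ
  color : ℕ → Fin n

namespace PForest

variable {n : ℕ}

/-- well-formedness: edges join vertices, and the parent relation is
acyclic. -/
def WF (t : PForest n) : Prop :=
  (∀ v w : ℕ, t.parent v = some w → v ∈ t.verts ∧ w ∈ t.verts) ∧
    ∃ rk : ℕ → ℕ, ∀ v w : ℕ, t.parent v = some w → rk w < rk v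

/-- one step towards the root: `w` is the parent of `v`. -/
def Step (t : PForest n) (v w : ℕ) : Prop := t.parent v = some w

/-- `w` lies (weakly) on the path from `v` to the root of its component. -/
def Anc (t : PForest n) (v w : ℕ) : Prop := Relation.ReflTransGen t.Step v w

def nearestAncAux (t : PForest n) (S : Finset ℕ) : ℕ → ℕ → Option ℕ
  | 0, _ => none
  | fuel + 1, v =>
    match t.parent v with
    | none => none
    | some w => if w ∈ S then some w else nearestAncAux t S fuel w

/-- the first vertex of `S` strictly below `v`; this is the parent of `v`
in the subforest induced on `S`. -/
def nearestAnc (t : PForest n) (S : Finset ℕ) (v : ℕ) : Option ℕ :=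
  nearestAncAux t S t.verts.card v

def lastBeforeAux (t : PForest n) (S : Finset ℕ) : ℕ → ℕ → ℕ
  | 0, v => v
  | fuel + 1, v =>
    match t.parent v with
    | none => v
    | some w => if w ∈ S then v else lastBeforeAux t S fuel w

/-- the last vertex on the path from `v` down to `nearestAnc t S v`
before reaching it; the color of the edge of the induced subforest below
`v` is the (ambient) color of this vertex. -/
def lastBefore (t : PForest n) (S : Finset ℕ) (v : ℕ) : ℕ :=
  lastBeforeAux t S t.verts.card v

/-- `pcount t S s j v` is the number of edges of (induced) color `j` on
the path from `v` to the root of its component in the subforest of `t`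
induced on `S`, whose lower vertex lies outside `s`.  (Edges of the
induced subforest are indexed by their upper vertex `x`; the lower vertex
is `nearestAnc t S x` and the induced color is the ambient color of
`lastBefore t S x`.) -/
def pcount (t : PForest n) (S s : Finset ℕ) (j : Fin n) (v : ℕ) : ℕ :=
  (S.filter fun x => t.Anc v x ∧ t.color (t.lastBefore S x) = j ∧
      ∃ w, t.nearestAnc S x = some w ∧ w ∉ s).card

/-- the subforest of `u` induced on `S`, as a forest in its own right. -/
def restrict (u : PForest n) (S : Finset ℕ) : PForest n where
  verts := S ∩ u.verts
  parent := fun v => if v ∈ S ∩ u.verts then u.nearestAnc S v else none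
  color := fun v => u.color (u.lastBefore S v)

/-- a forest is a (nonempty) tree when it has exactly one root. -/
def IsTree (t : PForest n) : Prop :=
  (t.verts.filter fun v => t.parent v = none).card = 1

/-- `e` is an isomorphism of n-colored forests from `s` to `t`: a
bijection of the vertices preserving the parent relation and the colors
of edges. -/
def IsIsoFn (s t : PForest n) (e : {x // x ∈ s.verts} ≃ {x // x ∈ t.verts}) : Prop :=
  (∀ v w : {x // x ∈ s.verts},
      s.parent (v : ℕ) = some (w : ℕ) ↔ t.parent ((e v : ℕ)) = some ((e w : ℕ))) ∧
    ∀ v : {x // x ∈ s.verts}, (s.parent (v : ℕ)).isSome →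
      t.color ((e v : ℕ)) = s.color (v : ℕ)

/-- isomorphism of n-colored forests. -/
def PIso (s t : PForest n) : Prop := ∃ e, IsIsoFn s t e

end PForest

/-- a (well-formed, nonempty) n-colored rooted tree. -/
def TreeObj (n : ℕ) : Type := {t : PForest n // t.WF ∧ t.IsTree}

/-- isomorphism classes of n-colored rooted trees. -/
def TreeClass (n : ℕ) : Type := Quot fun a b : TreeObj n => PForest.PIso a.1 b.1

/-- the one-vertex tree. -/
def unitTree (n : ℕ) [NeZero n] : PForest n :=
  ⟨{0}, fun _ => none, fun _ => 0⟩

theorem unitTree_wf (n : ℕ) [NeZero n] : (unitTree n).WF :=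
  ⟨fun v w h => by simp [unitTree] at h, ⟨id, fun v w h => by simp [unitTree] at h⟩⟩

theorem unitTree_isTree (n : ℕ) [NeZero n] : (unitTree n).IsTree := by
  simp [PForest.IsTree, unitTree]

def defaultTreeObj (n : ℕ) [NeZero n] : TreeObj n :=
  ⟨unitTree n, unitTree_wf n, unitTree_isTree n⟩

/-- the isomorphism class of a tree (junk value: the class of the
one-vertex tree, if the given forest is not a well-formed tree). -/
def mkClass {n : ℕ} [NeZero n] (t : PForest n) : TreeClass n :=
  if h : t.WF ∧ t.IsTree then Quot.mk _ (⟨t, h⟩ : TreeObj n)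
  else Quot.mk _ (defaultTreeObj n)

end

noncomputable section

namespace PForest

variable {n : ℕ}

/-- grafting of s onto the vertex v of t by an edge of color p: the
disjoint union of s and t (t relabelled by doubling, s by doubling plus
one) with one new edge, of color p, joining the root of s to v. -/
def graft (s t : PForest n) (v : ℕ) (p : Fin n) : PForest n where
  verts := t.verts.image (fun x => 2 * x) ∪ s.verts.image (fun x => 2 * x + 1)
  parent := fun x =>
    if x % 2 = 0 then (t.parent (x / 2)).map fun w => 2 * w
    else
      match s.parent (x / 2) with
      | some w => some (2 * w + 1)
      | none => if x / 2 ∈ s.verts then some (2 * v) else none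
  color := fun x =>
    if x % 2 = 0 then t.color (x / 2)
    else
      match s.parent (x / 2) with
      | some _ => s.color (x / 2)
      | none => p

/-- the vertices lying (weakly) above x: the component not containing the
root after deleting the edge below x. -/
def aboveSet (u : PForest n) (x : ℕ) : Finset ℕ :=
  u.verts.filter fun y => u.Anc y x

/-- n(s,t,u): the number of edges of u (indexed by their upper vertex)
whose deletion leaves the component not containing the root isomorphic to
s and the component containing the root isomorphic to t. -/
def nCount (s t u : PForest n) : ℕ :=
  (u.verts.filter fun x => (u.parent x).isSome ∧
    PIso (u.restrict (u.aboveSet x)) s ∧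
    PIso (u.restrict (u.verts \ u.aboveSet x)) t).card

/-- the order of the automorphism group of the n-colored forest t. -/
def autCount (t : PForest n) : ℕ :=
  Nat.card {e : {x // x ∈ t.verts} ≃ {x // x ∈ t.verts} // IsIsoFn t t e}

/-- the size of the orbit of the vertex v under the automorphism group. -/
def orbitCount (t : PForest n) (v : ℕ) (hv : v ∈ t.verts) : ℕ :=
  Nat.card {w : {x // x ∈ t.verts} //
    ∃ e : {x // x ∈ t.verts} ≃ {x // x ∈ t.verts}, IsIsoFn t t e ∧ e ⟨v, hv⟩ = w}

end PForest

end


open scoped Classical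
noncomputable section
namespace PForest

section


variable {n : ℕ} {t : PForest n}

lemma anc_refl (v : ℕ) : t.Anc v v := Relation.ReflTransGen.refl

lemma anc_of_parent {v w : ℕ} (h : t.parent v = some w) : t.Anc v w :=
  Relation.ReflTransGen.single h

lemma anc_trans {v w z : ℕ} (h1 : t.Anc v w) (h2 : t.Anc w z) : t.Anc v z :=
  Relation.ReflTransGen.trans h1 h2

lemma anc_head {v w z : ℕ} (h : t.parent v = some w) (h2 : t.Anc w z) : t.Anc v z :=
  Relation.ReflTransGen.head h h2

lemma rank_anti {rk : ℕ → ℕ} (hrk : ∀ v w, t.parent v = some w → rk w < rk v)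
    {v w : ℕ} (h : t.Anc v w) : rk w ≤ rk v := by
  induction h with
  | refl => exact le_rfl
  | tail _ h2 ih => exact le_trans (le_of_lt (hrk _ _ h2)) ih

lemma rank_strict {rk : ℕ → ℕ} (hrk : ∀ v w, t.parent v = some w → rk w < rk v)
    {v w : ℕ} (h : t.Anc v w) (hne : v ≠ w) : rk w < rk v := by
  rcases (Relation.ReflTransGen.cases_head h) with h | ⟨c, hc, h2⟩
  · exact absurd h.symm (Ne.symm hne)
  · exact lt_of_le_of_lt (rank_anti hrk h2) (hrk _ _ hc)

lemma anc_antisymm (ht : t.WF) {v w : ℕ} (h1 : t.Anc v w) (h2 : t.Anc w v) : v = w := by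
  obtain ⟨-, rk, hrk⟩ := ht
  by_contra hne
  exact absurd (rank_strict hrk h1 hne) (not_lt.2 (le_of_lt (rank_strict hrk h2 (Ne.symm hne))))

lemma anc_mem_left (ht : t.WF) {v w : ℕ} (h : t.Anc v w) (hne : v ≠ w) : v ∈ t.verts := by
  rcases (Relation.ReflTransGen.cases_head h) with h | ⟨c, hc, h2⟩
  · exact absurd h.symm (Ne.symm hne)
  · exact (ht.1 _ _ hc).1

lemma anc_mem_right (ht : t.WF) {v w : ℕ} (h : t.Anc v w) (hne : v ≠ w) : w ∈ t.verts := by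
  induction h with
  | refl => exact absurd rfl hne
  | tail h1 h2 ih => exact (ht.1 _ _ h2).2

lemma anc_total {x a b : ℕ} (h1 : t.Anc x a) (h2 : t.Anc x b) : t.Anc a b ∨ t.Anc b a := by
  induction h1 using Relation.ReflTransGen.head_induction_on with
  | refl => exact Or.inl h2
  | head hc h1' ih =>
    rename_i x' c
    rcases Relation.ReflTransGen.cases_head h2 with h | ⟨c', hc', h2'⟩
    · exact Or.inr (h ▸ Relation.ReflTransGen.head hc h1')
    · have hc2 : t.parent x' = some c := hc
      have hc'2 : t.parent x' = some c' := hc'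
      rw [hc2] at hc'2; injection hc'2 with e; exact ih (e ▸ h2')

/-! ### root -/

def root (t : PForest n) : ℕ :=
  if h : (t.verts.filter fun v => t.parent v = none).Nonempty then
    (t.verts.filter fun v => t.parent v = none).min' h else 0

lemma IsTree.filter_eq (h1 : t.IsTree) :
    (t.verts.filter fun v => t.parent v = none) = {root t} := by
  obtain ⟨a, ha⟩ := Finset.card_eq_one.mp h1
  have hne : (t.verts.filter fun v => t.parent v = none).Nonempty := by
    rw [ha]; exact ⟨a, Finset.mem_singleton_self a⟩
  have hr : root t = a := by
    have hm := Finset.min'_mem _ hne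
    have h2 : root t = (t.verts.filter fun v => t.parent v = none).min' hne := by
      rw [root, dif_pos hne]
    rw [h2]; exact Finset.mem_singleton.mp ((Finset.ext_iff.1 ha _).1 hm)
  rw [hr, ha]

lemma root_mem (h1 : t.IsTree) : root t ∈ t.verts := by
  have := h1.filter_eq ▸ Finset.mem_singleton_self (root t)
  exact (Finset.mem_filter.mp this).1

lemma parent_root (h1 : t.IsTree) : t.parent (root t) = none := by
  have := h1.filter_eq ▸ Finset.mem_singleton_self (root t)
  exact (Finset.mem_filter.mp this).2

lemma eq_root (h1 : t.IsTree) {v : ℕ} (hv : v ∈ t.verts) (hp : t.parent v = none) :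
    v = root t := by
  have : v ∈ (t.verts.filter fun v => t.parent v = none) := Finset.mem_filter.mpr ⟨hv, hp⟩
  rw [h1.filter_eq] at this; exact Finset.mem_singleton.mp this

lemma anc_root (ht : t.WF) (h1 : t.IsTree) {v : ℕ} (hv : v ∈ t.verts) :
    t.Anc v (root t) := by
  obtain ⟨hm, rk, hrk⟩ := ht
  suffices H : ∀ N v, rk v ≤ N → v ∈ t.verts → t.Anc v (root t) from H (rk v) v le_rfl hv
  intro N
  induction N with
  | zero =>
    intro v hr hv
    cases hp : t.parent v with
    | none => exact (eq_root h1 hv hp) ▸ anc_refl v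
    | some w => exact absurd (hrk _ _ hp) (by omega)
  | succ N ih =>
    intro v hr hv
    cases hp : t.parent v with
    | none => exact (eq_root h1 hv hp) ▸ anc_refl v
    | some w => exact anc_head hp (ih w (by have := hrk _ _ hp; omega) (hm _ _ hp).2)

lemma exists_child (ht : t.WF) {v r : ℕ} (h : t.Anc v r) (hne : v ≠ r) :
    ∃ b, t.Anc v b ∧ t.parent b = some r := by
  obtain ⟨hm, rk, hrk⟩ := ht
  suffices H : ∀ N v, rk v ≤ N → t.Anc v r → v ≠ r → ∃ b, t.Anc v b ∧ t.parent b = some r from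
    H (rk v) v le_rfl h hne
  intro N
  induction N with
  | zero =>
    intro v hr h hne
    rcases Relation.ReflTransGen.cases_head h with h | ⟨c, hc, h2⟩
    · exact absurd h.symm (Ne.symm hne)
    · exact absurd (hrk _ _ hc) (by omega)
  | succ N ih =>
    intro v hr h hne
    rcases Relation.ReflTransGen.cases_head h with h | ⟨c, hc, h2⟩
    · exact absurd h.symm (Ne.symm hne)
    · by_cases hcr : c = r
      · exact ⟨v, anc_refl v, hcr ▸ hc⟩
      · obtain ⟨b, hb1, hb2⟩ := ih c (by have := hrk _ _ hc; omega) h2 hcr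
        exact ⟨b, anc_head hc hb1, hb2⟩

lemma child_unique (ht : t.WF) {x b b' z : ℕ} (h1 : t.Anc x b) (h2 : t.Anc x b')
    (hb : t.parent b = some z) (hb' : t.parent b' = some z) : b = b' := by
  obtain ⟨-, rk, hrk⟩ := ht
  have key : ∀ c c' : ℕ, t.Anc c c' → t.parent c = some z → t.parent c' = some z → c = c' := by
    intro c c' h hc hc'
    by_contra hne
    rcases Relation.ReflTransGen.cases_head h with h | ⟨d, hd, h2'⟩
    · exact hne h
    · have hd2 : t.parent c = some d := hd
      rw [hc] at hd2; injection hd2 with e; subst e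
      exact absurd (rank_anti hrk h2') (not_le.2 (hrk _ _ hc'))
  rcases anc_total h1 h2 with h | h
  · exact key _ _ h hb hb'
  · exact (key _ _ h hb' hb).symm


/-! ### strict ancestors, fuel -/

def sanc (t : PForest n) (v : ℕ) : Finset ℕ :=
  t.verts.filter fun w => t.Anc v w ∧ w ≠ v

lemma sanc_parent (ht : t.WF) {v w : ℕ} (hp : t.parent v = some w) :
    t.sanc v = insert w (t.sanc w) := by
  obtain ⟨hm, rk, hrk⟩ := ht
  ext z
  simp only [sanc, Finset.mem_insert, Finset.mem_filter]
  constructor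
  · rintro ⟨hz, hanc, hne⟩
    rcases Relation.ReflTransGen.cases_head hanc with h | ⟨c, hc, h2⟩
    · exact absurd h (Ne.symm hne)
    · have hc2 : t.parent v = some c := hc
      rw [hp] at hc2; injection hc2 with e; subst e
      by_cases hzw : z = w
      · exact Or.inl hzw
      · exact Or.inr ⟨hz, h2, hzw⟩
  · rintro (rfl | ⟨hz, hanc, hne⟩)
    · refine ⟨(hm _ _ hp).2, anc_of_parent hp, fun e => ?_⟩
      exact absurd (hrk _ _ hp) (e ▸ lt_irrefl _)
    · refine ⟨hz, anc_head hp hanc, fun e => ?_⟩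
      subst e
      have h1 := rank_anti hrk hanc
      have h2 := hrk _ _ hp
      omega

lemma sanc_card_parent (ht : t.WF) {v w : ℕ} (hp : t.parent v = some w) :
    (t.sanc w).card < (t.sanc v).card := by
  rw [sanc_parent ht hp]
  have hw : w ∉ t.sanc w := by simp [sanc]
  rw [Finset.card_insert_of_notMem hw]
  omega

lemma sanc_card_lt (hv : v ∈ t.verts) : (t.sanc v).card < t.verts.card := by
  have hsub : t.sanc v ⊆ t.verts.erase v := by
    intro z hz
    simp only [sanc, Finset.mem_filter] at hz
    exact Finset.mem_erase.mpr ⟨hz.2.2, hz.1⟩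
  calc (t.sanc v).card ≤ (t.verts.erase v).card := Finset.card_le_card hsub
    _ < t.verts.card := Finset.card_erase_lt_of_mem hv

lemma nearestAncAux_eq_none (ht : t.WF) (S : Finset ℕ) :
    ∀ fuel v, (t.sanc v).card < fuel → (∀ w ∈ t.sanc v, w ∉ S) →
      t.nearestAncAux S fuel v = none := by
  intro fuel
  induction fuel with
  | zero => intro v h; omega
  | succ fuel ih =>
    intro v h hS
    obtain ⟨hm, rk, hrk⟩ := ht
    cases hp : t.parent v with
    | none => simp [nearestAncAux, hp]
    | some w =>
      have hw : w ∈ t.sanc v := by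
        simp only [sanc, Finset.mem_filter]
        refine ⟨(hm _ _ hp).2, anc_of_parent hp, fun e => ?_⟩
        exact absurd (hrk _ _ hp) (e ▸ lt_irrefl _)
      have hwS : w ∉ S := hS w hw
      have hrec : (t.sanc w).card < fuel := by
        have := sanc_card_parent ⟨hm, rk, hrk⟩ hp; omega
      have hS' : ∀ z ∈ t.sanc w, z ∉ S := by
        intro z hz
        refine hS z ?_
        rw [sanc_parent ⟨hm, rk, hrk⟩ hp]
        exact Finset.mem_insert_of_mem hz
      simp [nearestAncAux, hp, hwS, ih w hrec hS']

lemma nearestAnc_eq_none (ht : t.WF) {S : Finset ℕ} {v : ℕ} (hv : v ∈ t.verts)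
    (hS : ∀ w ∈ t.sanc v, w ∉ S) : t.nearestAnc S v = none :=
  nearestAncAux_eq_none ht S _ v (sanc_card_lt hv) hS

lemma nearestAnc_eq_some (hcard : t.verts.card ≠ 0) {S : Finset ℕ} {v w : ℕ}
    (hp : t.parent v = some w) (hw : w ∈ S) : t.nearestAnc S v = some w := by
  obtain ⟨f, hf⟩ := Nat.exists_eq_succ_of_ne_zero hcard
  rw [nearestAnc, hf]
  simp [nearestAncAux, hp, hw]

lemma lastBefore_of_parent_mem (hcard : t.verts.card ≠ 0) {S : Finset ℕ} {v w : ℕ}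
    (hp : t.parent v = some w) (hw : w ∈ S) : t.lastBefore S v = v := by
  obtain ⟨f, hf⟩ := Nat.exists_eq_succ_of_ne_zero hcard
  rw [lastBefore, hf]
  simp [lastBeforeAux, hp, hw]

/-! ### function-level isomorphisms -/

def Iso' (s t : PForest n) (f : ℕ → ℕ) : Prop :=
  Set.BijOn f ↑s.verts ↑t.verts ∧
  (∀ v ∈ s.verts, ∀ w ∈ s.verts, (s.parent v = some w ↔ t.parent (f v) = some (f w))) ∧
  (∀ v ∈ s.verts, (s.parent v).isSome → t.color (f v) = s.color v)

variable {s r : PForest n} {f g : ℕ → ℕ}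

lemma Iso'.maps (h : Iso' s t f) {v : ℕ} (hv : v ∈ s.verts) : f v ∈ t.verts :=
  h.1.1 hv

lemma iso'_refl (t : PForest n) : Iso' t t id := by
  refine ⟨Set.bijOn_id _, ?_, ?_⟩ <;> simp

lemma Iso'.parent_some (hs : s.WF) (h : Iso' s t f) {v w : ℕ} (hv : v ∈ s.verts)
    (hp : s.parent v = some w) : t.parent (f v) = some (f w) :=
  ((h.2.1 v hv w (hs.1 _ _ hp).2).mp hp)

lemma Iso'.isSome (hs : s.WF) (h : Iso' s t f) {v : ℕ} (hv : v ∈ s.verts)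
    (hp : (s.parent v).isSome) : (t.parent (f v)).isSome := by
  obtain ⟨w, hw⟩ := Option.isSome_iff_exists.mp hp
  rw [h.parent_some hs hv hw]; rfl

lemma Iso'.comp (hs : s.WF) (h1 : Iso' s t f) (h2 : Iso' t r g) : Iso' s r (g ∘ f) := by
  refine ⟨h2.1.comp h1.1, ?_, ?_⟩
  · intro v hv w hw
    simp only [Function.comp]
    rw [h1.2.1 v hv w hw, h2.2.1 _ (h1.maps hv) _ (h1.maps hw)]
  · intro v hv hp
    have := h1.2.2 v hv hp
    have h2c := h2.2.2 _ (h1.maps hv) (h1.isSome hs hv hp)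
    simp only [Function.comp]
    rw [h2c, this]

lemma Iso'.invOn (h : Iso' s t f) :
    Set.InvOn (Function.invFunOn f ↑s.verts) f ↑s.verts ↑t.verts :=
  Set.BijOn.invOn_invFunOn h.1

lemma Iso'.symm (htw : t.WF) (h : Iso' s t f) :
    Iso' t s (Function.invFunOn f ↑s.verts) := by
  set g := Function.invFunOn f ↑s.verts with hg
  have hinv := h.invOn
  have hbij : Set.BijOn g ↑t.verts ↑s.verts := Set.BijOn.symm hinv.symm h.1
  refine ⟨hbij, ?_, ?_⟩
  · intro v' hv' w' hw'
    have hv : g v' ∈ s.verts := hbij.1 hv'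
    have hw : g w' ∈ s.verts := hbij.1 hw'
    have e1 : f (g v') = v' := hinv.2 hv'
    have e2 : f (g w') = w' := hinv.2 hw'
    have hiff := h.2.1 _ hv _ hw
    rw [e1, e2] at hiff
    exact hiff.symm
  · intro v' hv' hp
    have hv : g v' ∈ s.verts := hbij.1 hv'
    have e1 : f (g v') = v' := hinv.2 hv'
    obtain ⟨z', hz'⟩ := Option.isSome_iff_exists.mp hp
    have hz'm : z' ∈ t.verts := (htw.1 _ _ hz').2
    have hzz : f (g z') = z' := hinv.2 hz'm
    have hsp : s.parent (g v') = some (g z') := by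
      rw [h.2.1 _ hv _ (hbij.1 hz'm), e1, hzz]; exact hz'
    have hcol := h.2.2 _ hv (by rw [hsp]; rfl)
    rw [e1] at hcol
    exact hcol.symm

lemma Iso'.card_eq (h : Iso' s t f) : s.verts.card = t.verts.card := by
  have himg : s.verts.image f = t.verts := by
    ext z
    simp only [Finset.mem_image]
    constructor
    · rintro ⟨y, hy, rfl⟩; exact h.maps hy
    · intro hz
      obtain ⟨y, hy, hyz⟩ := h.1.2.2 hz
      exact ⟨y, hy, hyz⟩
  rw [← himg, Finset.card_image_of_injOn (by exact_mod_cast h.1.2.1)]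

lemma Iso'.anc (hs : s.WF) (h : Iso' s t f) {v w : ℕ} (hv : v ∈ s.verts)
    (ha : s.Anc v w) : t.Anc (f v) (f w) := by
  induction ha with
  | refl => exact anc_refl _
  | tail h1 h2 ih =>
    rename_i b c
    have hb : b ∈ s.verts := by
      rcases Relation.ReflTransGen.cases_head h1 with e | ⟨d, hd, h2'⟩
      · exact e ▸ hv
      · exact (hs.1 _ _ h2).1
    exact Relation.ReflTransGen.tail ih (h.parent_some hs hb h2)

lemma Iso'.anc_iff (hs : s.WF) (htw : t.WF) (h : Iso' s t f) {v w : ℕ}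
    (hv : v ∈ s.verts) (hw : w ∈ s.verts) : s.Anc v w ↔ t.Anc (f v) (f w) := by
  constructor
  · exact h.anc hs hv
  · intro ha
    have hsym := h.symm htw
    have e1 : Function.invFunOn f ↑s.verts (f v) = v := h.invOn.1 hv
    have e2 : Function.invFunOn f ↑s.verts (f w) = w := h.invOn.1 hw
    have := hsym.anc htw (h.maps hv) ha
    rw [e1, e2] at this
    exact this

lemma Iso'.above_eq (hs : s.WF) (htw : t.WF) (h : Iso' s t f) {x : ℕ}
    (hx : x ∈ s.verts) : (s.aboveSet x).image f = t.aboveSet (f x) := by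
  ext z
  constructor
  · intro hz
    obtain ⟨y, hy, rfl⟩ := Finset.mem_image.mp hz
    have hy' := Finset.mem_filter.mp hy
    exact Finset.mem_filter.mpr ⟨h.maps hy'.1, h.anc hs hy'.1 hy'.2⟩
  · intro hz
    have hz' := Finset.mem_filter.mp hz
    obtain ⟨y, hy, rfl⟩ := h.1.2.2 (Finset.mem_coe.mpr hz'.1)
    have hym : y ∈ s.verts := Finset.mem_coe.mp hy
    exact Finset.mem_image.mpr
      ⟨y, Finset.mem_filter.mpr ⟨hym, (h.anc_iff hs htw hym hx).mpr hz'.2⟩, rfl⟩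

lemma Iso'.root_eq (hsw : s.WF) (hs1 : s.IsTree) (htw : t.WF) (ht1 : t.IsTree)
    (h : Iso' s t f) : f (root s) = root t := by
  have hrm : root s ∈ s.verts := root_mem hs1
  have : t.parent (f (root s)) = none := by
    cases hq : t.parent (f (root s)) with
    | none => rfl
    | some z =>
      have hz : z ∈ t.verts := (htw.1 _ _ hq).2
      obtain ⟨y, hy, rfl⟩ := h.1.2.2 hz
      have := (h.2.1 _ hrm _ hy).mpr hq
      rw [parent_root hs1] at this
      exact absurd this (by simp)
  exact eq_root ht1 (h.maps hrm) this

/-! ### conversions to PIso -/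

lemma PIso.of_iso' (h : Iso' s t f) : PIso s t := by
  have hbij : Function.Bijective (fun x : {x // x ∈ s.verts} =>
      (⟨f x, h.maps x.2⟩ : {x // x ∈ t.verts})) := by
    constructor
    · rintro ⟨a, ha⟩ ⟨b, hb⟩ hab
      simp only [Subtype.mk.injEq] at hab
      exact Subtype.ext (h.1.2.1 ha hb hab)
    · rintro ⟨y, hy⟩
      obtain ⟨x, hx, rfl⟩ := h.1.2.2 hy
      exact ⟨⟨x, hx⟩, rfl⟩
  refine ⟨Equiv.ofBijective _ hbij, ?_, ?_⟩
  · rintro ⟨a, ha⟩ ⟨b, hb⟩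
    exact h.2.1 a ha b hb
  · rintro ⟨a, ha⟩ hp
    exact h.2.2 a ha hp

lemma PIso.to_iso' (h : PIso s t) : ∃ f, Iso' s t f := by
  obtain ⟨e, he1, he2⟩ := h
  refine ⟨fun x => if hx : x ∈ s.verts then (e ⟨x, hx⟩ : ℕ) else x, ⟨?_, ?_, ?_⟩, ?_, ?_⟩
  · intro x hx
    simp only [Finset.mem_coe] at hx
    simp only [hx, dif_pos]
    exact (e ⟨x, hx⟩).2
  · intro a ha b hb hab
    simp only [Finset.mem_coe] at ha hb
    simp only [ha, hb, dif_pos] at hab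
    have := e.injective (Subtype.ext hab)
    exact congrArg Subtype.val this
  · intro y hy
    simp only [Finset.mem_coe] at hy
    refine ⟨(e.symm ⟨y, hy⟩ : ℕ), (e.symm ⟨y, hy⟩).2, ?_⟩
    simp only [(e.symm ⟨y, hy⟩).2, dif_pos]
    rw [show (⟨(e.symm ⟨y, hy⟩ : ℕ), (e.symm ⟨y, hy⟩).2⟩ : {x // x ∈ s.verts}) = e.symm ⟨y, hy⟩ from rfl]
    simp
  · intro a ha b hb
    simp only [ha, hb, dif_pos]
    exact he1 ⟨a, ha⟩ ⟨b, hb⟩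
  · intro a ha hp
    simp only [ha, dif_pos]
    exact he2 ⟨a, ha⟩ hp

lemma piso_iff_iso' : PIso s t ↔ ∃ f, Iso' s t f :=
  ⟨PIso.to_iso', fun ⟨_, h⟩ => PIso.of_iso' h⟩

end

section


variable {n : ℕ} {s t : PForest n} {v : ℕ} {p : Fin n}

lemma two_mul_mod (a : ℕ) : (2*a) % 2 = 0 := by omega
lemma two_mul_div (a : ℕ) : (2*a) / 2 = a := by omega
lemma odd_mod (b : ℕ) : (2*b+1) % 2 = 1 := by omega
lemma odd_div (b : ℕ) : (2*b+1) / 2 = b := by omega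

lemma graft_mem_even {a : ℕ} (ha : a ∈ t.verts) : 2*a ∈ (graft s t v p).verts := by
  simp only [graft, Finset.mem_union, Finset.mem_image]
  exact Or.inl ⟨a, ha, rfl⟩

lemma graft_mem_odd {b : ℕ} (hb : b ∈ s.verts) : 2*b+1 ∈ (graft s t v p).verts := by
  simp only [graft, Finset.mem_union, Finset.mem_image]
  exact Or.inr ⟨b, hb, rfl⟩

lemma graft_mem_elim {x : ℕ} (hx : x ∈ (graft s t v p).verts) :
    (∃ a ∈ t.verts, x = 2*a) ∨ (∃ b ∈ s.verts, x = 2*b+1) := by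
  simp only [graft, Finset.mem_union, Finset.mem_image] at hx
  rcases hx with ⟨a, ha, rfl⟩ | ⟨b, hb, rfl⟩
  · exact Or.inl ⟨a, ha, rfl⟩
  · exact Or.inr ⟨b, hb, rfl⟩

lemma graft_parent_even (a : ℕ) :
    (graft s t v p).parent (2*a) = (t.parent a).map (fun w => 2*w) := by
  simp [graft, two_mul_mod, two_mul_div]

lemma graft_parent_odd_some {b c : ℕ} (h : s.parent b = some c) :
    (graft s t v p).parent (2*b+1) = some (2*c+1) := by
  simp [graft, odd_mod, odd_div, h]

lemma graft_parent_odd_root {b : ℕ} (h : s.parent b = none) (hb : b ∈ s.verts) :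
    (graft s t v p).parent (2*b+1) = some (2*v) := by
  simp [graft, odd_mod, odd_div, h, hb]

lemma graft_parent_odd_out {b : ℕ} (h : s.parent b = none) (hb : b ∉ s.verts) :
    (graft s t v p).parent (2*b+1) = none := by
  simp [graft, odd_mod, odd_div, h, hb]

lemma graft_color_even (a : ℕ) : (graft s t v p).color (2*a) = t.color a := by
  simp [graft, two_mul_mod, two_mul_div]

lemma graft_color_odd_some {b c : ℕ} (h : s.parent b = some c) :
    (graft s t v p).color (2*b+1) = s.color b := by
  simp [graft, odd_mod, odd_div, h]

lemma graft_color_odd_root {b : ℕ} (h : s.parent b = none) :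
    (graft s t v p).color (2*b+1) = p := by
  simp [graft, odd_mod, odd_div, h]

def graftRk (rks rkt : ℕ → ℕ) (v : ℕ) (x : ℕ) : ℕ :=
  if x % 2 = 0 then rkt (x/2) else rks (x/2) + rkt v + 1

lemma graftRk_even {rks rkt : ℕ → ℕ} {v a : ℕ} : graftRk rks rkt v (2*a) = rkt a := by
  simp [graftRk, two_mul_mod, two_mul_div]

lemma graftRk_odd {rks rkt : ℕ → ℕ} {v b : ℕ} : graftRk rks rkt v (2*b+1) = rks b + rkt v + 1 := by
  simp [graftRk, odd_mod, odd_div]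

lemma graft_wf (hs : s.WF) (ht : t.WF) (hv : v ∈ t.verts) : (graft s t v p).WF := by
  obtain ⟨hsm, rks, hrks⟩ := hs
  obtain ⟨htm, rkt, hrkt⟩ := ht
  constructor
  · intro x y hxy
    have hx : x % 2 = 0 ∨ x % 2 = 1 := by omega
    rcases hx with hx | hx
    · have hxe : x = 2 * (x/2) := by omega
      rw [hxe, graft_parent_even] at hxy
      cases hp : t.parent (x/2) with
      | none => rw [hp] at hxy; simp at hxy
      | some w =>
        rw [hp] at hxy
        simp only [Option.map_some] at hxy
        injection hxy with e
        refine ⟨hxe ▸ graft_mem_even (htm _ _ hp).1, e ▸ graft_mem_even (htm _ _ hp).2⟩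
    · have hxe : x = 2 * (x/2) + 1 := by omega
      cases hp : s.parent (x/2) with
      | some c =>
        rw [hxe, graft_parent_odd_some hp] at hxy
        injection hxy with e
        exact ⟨hxe ▸ graft_mem_odd (hsm _ _ hp).1, e ▸ graft_mem_odd (hsm _ _ hp).2⟩
      | none =>
        by_cases hb : x/2 ∈ s.verts
        · rw [hxe, graft_parent_odd_root hp hb] at hxy
          injection hxy with e
          exact ⟨hxe ▸ graft_mem_odd hb, e ▸ graft_mem_even hv⟩
        · rw [hxe, graft_parent_odd_out hp hb] at hxy
          simp at hxy
  · refine ⟨graftRk rks rkt v, ?_⟩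
    intro x y hxy
    have hx : x % 2 = 0 ∨ x % 2 = 1 := by omega
    rcases hx with hx | hx
    · have hxe : x = 2 * (x/2) := by omega
      rw [hxe, graft_parent_even] at hxy
      cases hp : t.parent (x/2) with
      | none => rw [hp] at hxy; simp at hxy
      | some w =>
        rw [hp] at hxy
        simp only [Option.map_some] at hxy
        injection hxy with e
        subst e
        rw [hxe, graftRk_even, graftRk_even]
        exact hrkt _ _ hp
    · have hxe : x = 2 * (x/2) + 1 := by omega
      cases hp : s.parent (x/2) with
      | some c =>
        rw [hxe, graft_parent_odd_some hp] at hxy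
        injection hxy with e
        subst e
        rw [hxe, graftRk_odd, graftRk_odd]
        have := hrks _ _ hp
        omega
      | none =>
        by_cases hb : x/2 ∈ s.verts
        · rw [hxe, graft_parent_odd_root hp hb] at hxy
          injection hxy with e
          subst e
          rw [hxe, graftRk_odd, graftRk_even]
          omega
        · rw [hxe, graft_parent_odd_out hp hb] at hxy
          simp at hxy

lemma graft_istree (hs : s.WF) (hs1 : s.IsTree) (ht1 : t.IsTree) :
    (graft s t v p).IsTree := by
  have hfil : ((graft s t v p).verts.filter fun x => (graft s t v p).parent x = none)
      = {2 * root t} := by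
    ext x
    simp only [Finset.mem_filter, Finset.mem_singleton]
    constructor
    · rintro ⟨hx, hpx⟩
      rcases graft_mem_elim hx with ⟨a, ha, rfl⟩ | ⟨b, hb, rfl⟩
      · rw [graft_parent_even] at hpx
        cases hp : t.parent a with
        | none => rw [eq_root ht1 ha hp]
        | some w => rw [hp] at hpx; simp at hpx
      · cases hp : s.parent b with
        | some c => rw [graft_parent_odd_some hp] at hpx; simp at hpx
        | none => rw [graft_parent_odd_root hp hb] at hpx; simp at hpx
    · rintro rfl
      refine ⟨graft_mem_even (root_mem ht1), ?_⟩
      rw [graft_parent_even, parent_root ht1]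
      rfl
  rw [IsTree, hfil, Finset.card_singleton]

lemma graft_root (hs : s.WF) (hs1 : s.IsTree) (ht1 : t.IsTree) :
    root (graft s t v p) = 2 * root t := by
  have h1 := graft_istree (s := s) (t := t) (v := v) (p := p) hs hs1 ht1
  refine (eq_root h1 (graft_mem_even (root_mem ht1)) ?_).symm
  rw [graft_parent_even, parent_root ht1]
  rfl

lemma graft_card : (graft s t v p).verts.card = t.verts.card + s.verts.card := by
  rw [graft]
  rw [Finset.card_union_of_disjoint]
  · rw [Finset.card_image_of_injective _ (fun a b h => by omega),
      Finset.card_image_of_injective _ (fun a b h => by omega)]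
  · rw [Finset.disjoint_left]
    rintro x hx hy
    simp only [Finset.mem_image] at hx hy
    obtain ⟨a, _, rfl⟩ := hx
    obtain ⟨b, _, e⟩ := hy
    omega

/-! ### Anc in graft -/

lemma graft_anc_even_elim {a x : ℕ} (h : (graft s t v p).Anc (2*a) x) :
    ∃ a', x = 2*a' ∧ t.Anc a a' := by
  induction h with
  | refl => exact ⟨a, rfl, anc_refl a⟩
  | tail h1 h2 ih =>
    rename_i y
    obtain ⟨a', rfl, ha'⟩ := ih
    have h2' : (graft s t v p).parent (2*a') = some y := h2
    rw [graft_parent_even] at h2'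
    cases hp : t.parent a' with
    | none => rw [hp] at h2'; simp at h2'
    | some c =>
      rw [hp] at h2'
      simp only [Option.map_some] at h2'
      injection h2' with e
      exact ⟨c, e.symm, Relation.ReflTransGen.tail ha' hp⟩

lemma graft_anc_even_intro {a a' : ℕ} (h : t.Anc a a') :
    (graft s t v p).Anc (2*a) (2*a') := by
  induction h with
  | refl => exact anc_refl _
  | tail h1 h2 ih =>
    refine Relation.ReflTransGen.tail ih ?_
    show (graft s t v p).parent _ = _
    rw [graft_parent_even, h2]
    rfl

lemma graft_anc_odd_intro {b b' : ℕ} (h : s.Anc b b') :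
    (graft s t v p).Anc (2*b+1) (2*b'+1) := by
  induction h with
  | refl => exact anc_refl _
  | tail h1 h2 ih =>
    exact Relation.ReflTransGen.tail ih (graft_parent_odd_some h2)

lemma graft_anc_odd_elim {b x : ℕ} (h : (graft s t v p).Anc (2*b+1) x) :
    (∃ b', x = 2*b'+1 ∧ s.Anc b b') ∨ (∃ a, x = 2*a ∧ t.Anc v a) := by
  induction h with
  | refl => exact Or.inl ⟨b, rfl, anc_refl b⟩
  | tail h1 h2 ih =>
    rename_i y
    rcases ih with ⟨b', rfl, hb'⟩ | ⟨a, rfl, ha⟩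
    · have h2' : (graft s t v p).parent (2*b'+1) = some y := h2
      cases hp : s.parent b' with
      | some d =>
        rw [graft_parent_odd_some hp] at h2'
        injection h2' with e
        exact Or.inl ⟨d, e.symm, Relation.ReflTransGen.tail hb' hp⟩
      | none =>
        by_cases hbv : b' ∈ s.verts
        · rw [graft_parent_odd_root hp hbv] at h2'
          injection h2' with e
          exact Or.inr ⟨v, e.symm, anc_refl v⟩
        · rw [graft_parent_odd_out hp hbv] at h2'
          simp at h2'
    · have h2' : (graft s t v p).parent (2*a) = some y := h2
      rw [graft_parent_even] at h2'
      cases hp : t.parent a with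
      | none => rw [hp] at h2'; simp at h2'
      | some c' =>
        rw [hp] at h2'
        simp only [Option.map_some] at h2'
        injection h2' with e
        exact Or.inr ⟨c', e.symm, Relation.ReflTransGen.tail ha hp⟩

lemma graft_anc_cross (hs : s.WF) (hs1 : s.IsTree) {b a : ℕ} (hb : b ∈ s.verts)
    (h : t.Anc v a) : (graft s t v p).Anc (2*b+1) (2*a) := by
  refine anc_trans (graft_anc_odd_intro (anc_root hs hs1 hb)) ?_
  refine anc_head ?_ (graft_anc_even_intro h)
  exact graft_parent_odd_root (parent_root hs1) (root_mem hs1)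

/-! ### aboveSet in graft -/

lemma graft_above_top (hs : s.WF) (hs1 : s.IsTree) :
    (graft s t v p).aboveSet (2*root s+1) = s.verts.image (fun b => 2*b+1) := by
  ext z
  simp only [aboveSet, Finset.mem_filter, Finset.mem_image]
  constructor
  · rintro ⟨hz, hanc⟩
    rcases graft_mem_elim hz with ⟨a, ha, rfl⟩ | ⟨b, hb, rfl⟩
    · obtain ⟨a', e, -⟩ := graft_anc_even_elim hanc
      omega
    · exact ⟨b, hb, rfl⟩
  · rintro ⟨b, hb, rfl⟩
    exact ⟨graft_mem_odd hb, graft_anc_odd_intro (anc_root hs hs1 hb)⟩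

lemma graft_above_odd {b : ℕ} (hb : b ∈ s.verts) :
    (graft s t v p).aboveSet (2*b+1) = (s.aboveSet b).image (fun c => 2*c+1) := by
  ext z
  simp only [aboveSet, Finset.mem_filter, Finset.mem_image]
  constructor
  · rintro ⟨hz, hanc⟩
    rcases graft_mem_elim hz with ⟨a, ha, rfl⟩ | ⟨c, hc, rfl⟩
    · obtain ⟨a', e, -⟩ := graft_anc_even_elim hanc
      omega
    · rcases graft_anc_odd_elim hanc with ⟨b', e, hb'⟩ | ⟨a, e, -⟩
      · have hbb : b' = b := by omega
        subst hbb
        exact ⟨c, ⟨hc, hb'⟩, rfl⟩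
      · omega
  · rintro ⟨c, hc, rfl⟩
    exact ⟨graft_mem_odd hc.1, graft_anc_odd_intro hc.2⟩

lemma graft_above_even {a : ℕ} (ha : a ∈ t.verts) (hva : ¬ t.Anc v a) :
    (graft s t v p).aboveSet (2*a) = (t.aboveSet a).image (fun c => 2*c) := by
  ext z
  simp only [aboveSet, Finset.mem_filter, Finset.mem_image]
  constructor
  · rintro ⟨hz, hanc⟩
    rcases graft_mem_elim hz with ⟨c, hc, rfl⟩ | ⟨b, hb, rfl⟩
    · obtain ⟨a', e, h'⟩ := graft_anc_even_elim hanc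
      have haa : a' = a := by omega
      subst haa
      exact ⟨c, ⟨hc, h'⟩, rfl⟩
    · rcases graft_anc_odd_elim hanc with ⟨b', e, -⟩ | ⟨a', e, h'⟩
      · omega
      · have haa : a' = a := by omega
        exact absurd (haa ▸ h') hva
  · rintro ⟨c, hc, rfl⟩
    exact ⟨graft_mem_even hc.1, graft_anc_even_intro hc.2⟩

lemma graft_above_even_full (hs : s.WF) (hs1 : s.IsTree) {a : ℕ} (ha : a ∈ t.verts)
    (hva : t.Anc v a) :
    (graft s t v p).aboveSet (2*a)
      = (t.aboveSet a).image (fun c => 2*c) ∪ s.verts.image (fun b => 2*b+1) := by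
  ext z
  simp only [aboveSet, Finset.mem_filter, Finset.mem_image, Finset.mem_union]
  constructor
  · rintro ⟨hz, hanc⟩
    rcases graft_mem_elim hz with ⟨c, hc, rfl⟩ | ⟨b, hb, rfl⟩
    · obtain ⟨a', e, h'⟩ := graft_anc_even_elim hanc
      have haa : a' = a := by omega
      subst haa
      exact Or.inl ⟨c, ⟨hc, h'⟩, rfl⟩
    · exact Or.inr ⟨b, hb, rfl⟩
  · rintro (⟨c, hc, rfl⟩ | ⟨b, hb, rfl⟩)
    · exact ⟨graft_mem_even hc.1, graft_anc_even_intro hc.2⟩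
    · exact ⟨graft_mem_odd hb, graft_anc_cross hs hs1 hb hva⟩

end

section


variable {n : ℕ} {s t u : PForest n} {v : ℕ} {p : Fin n}

lemma mem_above_iff {x z : ℕ} : z ∈ t.aboveSet x ↔ z ∈ t.verts ∧ t.Anc z x := by
  simp [aboveSet]

lemma self_mem_above {x : ℕ} (hx : x ∈ t.verts) : x ∈ t.aboveSet x :=
  mem_above_iff.mpr ⟨hx, anc_refl x⟩

lemma parent_mem_above (ht : t.WF) {x z w : ℕ} (hz : z ∈ t.aboveSet x) (hne : z ≠ x)
    (hp : t.parent z = some w) : w ∈ t.aboveSet x := by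
  obtain ⟨hzm, hanc⟩ := mem_above_iff.mp hz
  rcases Relation.ReflTransGen.cases_head hanc with e | ⟨c, hc, h2⟩
  · exact absurd e hne
  · have hc2 : t.parent z = some c := hc
    rw [hp] at hc2; injection hc2 with e; subst e
    exact mem_above_iff.mpr ⟨(ht.1 _ _ hp).2, h2⟩

lemma parent_not_mem_above (ht : t.WF) {x w : ℕ} (hp : t.parent x = some w) :
    w ∉ t.aboveSet x := by
  obtain ⟨-, rk, hrk⟩ := ht
  intro hmem
  have hanc := (mem_above_iff.mp hmem).2
  have h1 := rank_anti hrk hanc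
  have h2 := hrk _ _ hp
  omega

lemma anc_mem_above_trans (ht : t.WF) {x z w : ℕ} (hz : z ∈ t.aboveSet x)
    (hw : t.Anc w z) (hwm : w ∈ t.verts) : w ∈ t.aboveSet x := by
  obtain ⟨hzm, hanc⟩ := mem_above_iff.mp hz
  exact mem_above_iff.mpr ⟨hwm, anc_trans hw hanc⟩

/-- the cut below a branch: `z ∉ A` is implicitly up-closed in applications -/
def cutF (t : PForest n) (A : Finset ℕ) : PForest n where
  verts := t.verts \ A
  parent := fun z => if z ∈ t.verts \ A then t.parent z else none
  color := t.color

/-- the branch above `a` as a forest in its own right -/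
def subF (t : PForest n) (a : ℕ) : PForest n where
  verts := t.aboveSet a
  parent := fun z => if z ∈ t.aboveSet a ∧ z ≠ a then t.parent z else none
  color := t.color

lemma cut_parent_closed (ht : t.WF) {a z w : ℕ} (hz : z ∈ t.verts \ t.aboveSet a)
    (hp : t.parent z = some w) : w ∈ t.verts \ t.aboveSet a := by
  rw [Finset.mem_sdiff] at hz ⊢
  refine ⟨(ht.1 _ _ hp).2, fun hw => hz.2 ?_⟩
  exact anc_mem_above_trans ht hw (anc_of_parent hp) hz.1

lemma cutF_wf (ht : t.WF) {a : ℕ} : (cutF t (t.aboveSet a)).WF := by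
  obtain ⟨hm, rk, hrk⟩ := ht
  constructor
  · intro z w hp
    simp only [cutF] at hp ⊢
    by_cases hz : z ∈ t.verts \ t.aboveSet a
    · rw [if_pos hz] at hp
      exact ⟨hz, cut_parent_closed ⟨hm, rk, hrk⟩ hz hp⟩
    · rw [if_neg hz] at hp; exact absurd hp (by simp)
  · refine ⟨rk, fun z w hp => ?_⟩
    simp only [cutF] at hp
    by_cases hz : z ∈ t.verts \ t.aboveSet a
    · rw [if_pos hz] at hp; exact hrk _ _ hp
    · rw [if_neg hz] at hp; exact absurd hp (by simp)

lemma root_not_mem_above (ht : t.WF) (ht1 : t.IsTree) {a : ℕ} (ha : a ∈ t.verts)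
    (hna : a ≠ root t) : root t ∉ t.aboveSet a := by
  intro hmem
  have hanc := (mem_above_iff.mp hmem).2
  rcases Relation.ReflTransGen.cases_head hanc with e | ⟨c, hc, h2⟩
  · exact hna e.symm
  · have : t.parent (root t) = some c := hc
    rw [parent_root ht1] at this; exact absurd this (by simp)

lemma cutF_istree (ht : t.WF) (ht1 : t.IsTree) {a : ℕ} (ha : a ∈ t.verts)
    (hna : a ≠ root t) : (cutF t (t.aboveSet a)).IsTree := by
  have hfil : ((cutF t (t.aboveSet a)).verts.filter
      fun z => (cutF t (t.aboveSet a)).parent z = none) = {root t} := by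
    ext z
    simp only [Finset.mem_filter, Finset.mem_singleton, cutF]
    constructor
    · intro hzz
      obtain ⟨hz, hpz⟩ := Finset.mem_filter.mp hzz
      rw [if_pos hz] at hpz
      exact eq_root ht1 (Finset.mem_sdiff.mp hz).1 hpz
    · rintro rfl
      have hmem : root t ∈ t.verts \ t.aboveSet a :=
        Finset.mem_sdiff.mpr ⟨root_mem ht1, root_not_mem_above ht ht1 ha hna⟩
      exact Finset.mem_filter.mpr ⟨hmem, by rw [if_pos hmem, parent_root ht1]⟩
  rw [IsTree, hfil, Finset.card_singleton]

lemma cutF_root (ht : t.WF) (ht1 : t.IsTree) {a : ℕ} (ha : a ∈ t.verts)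
    (hna : a ≠ root t) : root (cutF t (t.aboveSet a)) = root t := by
  have h1 := cutF_istree ht ht1 ha hna
  refine (eq_root h1 ?_ ?_).symm
  · exact Finset.mem_sdiff.mpr ⟨root_mem ht1, root_not_mem_above ht ht1 ha hna⟩
  · show (if _ then _ else _) = none
    rw [if_pos (Finset.mem_sdiff.mpr ⟨root_mem ht1, root_not_mem_above ht ht1 ha hna⟩),
      parent_root ht1]

lemma subF_wf (ht : t.WF) {a : ℕ} : (subF t a).WF := by
  obtain ⟨hm, rk, hrk⟩ := ht
  constructor
  · intro z w hp
    simp only [subF] at hp ⊢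
    by_cases hz : z ∈ t.aboveSet a ∧ z ≠ a
    · rw [if_pos hz] at hp
      exact ⟨hz.1, parent_mem_above ⟨hm, rk, hrk⟩ hz.1 hz.2 hp⟩
    · rw [if_neg hz] at hp; exact absurd hp (by simp)
  · refine ⟨rk, fun z w hp => ?_⟩
    simp only [subF] at hp
    by_cases hz : z ∈ t.aboveSet a ∧ z ≠ a
    · rw [if_pos hz] at hp; exact hrk _ _ hp
    · rw [if_neg hz] at hp; exact absurd hp (by simp)

lemma subF_parent_ne_none (ht : t.WF) {a z : ℕ} (hz : z ∈ t.aboveSet a) (hne : z ≠ a) :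
    ∃ w, t.parent z = some w := by
  have hanc := (mem_above_iff.mp hz).2
  rcases Relation.ReflTransGen.cases_head hanc with e | ⟨c, hc, h2⟩
  · exact absurd e hne
  · exact ⟨c, hc⟩

lemma subF_istree (ht : t.WF) {a : ℕ} (ha : a ∈ t.verts) : (subF t a).IsTree := by
  have hfil : ((subF t a).verts.filter fun z => (subF t a).parent z = none) = {a} := by
    ext z
    simp only [Finset.mem_filter, Finset.mem_singleton, subF]
    constructor
    · intro hzz
      obtain ⟨hz, hpz⟩ := Finset.mem_filter.mp hzz
      by_cases hza : z = a
      · exact hza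
      · obtain ⟨w, hw⟩ := subF_parent_ne_none ht hz hza
        rw [if_pos ⟨hz, hza⟩, hw] at hpz
        exact absurd hpz (by simp)
    · rintro rfl
      exact Finset.mem_filter.mpr ⟨self_mem_above ha, by rw [if_neg (by simp)]⟩
  rw [IsTree, hfil, Finset.card_singleton]

lemma subF_root (ht : t.WF) {a : ℕ} (ha : a ∈ t.verts) : root (subF t a) = a := by
  refine (eq_root (subF_istree ht ha) (self_mem_above ha) ?_).symm
  show (if _ then _ else _) = none
  rw [if_neg (by simp)]

lemma above_card_lt (ht : t.WF) (ht1 : t.IsTree) {a : ℕ} (ha : a ∈ t.verts)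
    (hna : a ≠ root t) : (t.aboveSet a).card < t.verts.card := by
  have hsub : t.aboveSet a ⊆ t.verts.erase (root t) := by
    intro z hz
    refine Finset.mem_erase.mpr ⟨?_, (Finset.mem_filter.mp hz).1⟩
    intro e
    exact root_not_mem_above ht ht1 ha hna (e ▸ hz)
  calc (t.aboveSet a).card ≤ _ := Finset.card_le_card hsub
    _ < t.verts.card := Finset.card_erase_lt_of_mem (root_mem ht1)

lemma cutF_card {A : Finset ℕ} (hA : A ⊆ t.verts) :
    (cutF t A).verts.card = t.verts.card - A.card := Finset.card_sdiff_of_subset hA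


lemma nearestAnc_of_parent_none (hcard : t.verts.card ≠ 0) {S : Finset ℕ} {z : ℕ}
    (hp : t.parent z = none) : t.nearestAnc S z = none := by
  obtain ⟨f, hf⟩ := Nat.exists_eq_succ_of_ne_zero hcard
  rw [nearestAnc, hf]
  simp [nearestAncAux, hp]

lemma iso'_id_of_eq (hverts : s.verts = t.verts)
    (hpar : ∀ z ∈ s.verts, s.parent z = t.parent z)
    (hcol : ∀ z ∈ s.verts, (s.parent z).isSome → t.color z = s.color z) :
    Iso' s t id := by
  refine ⟨?_, ?_, ?_⟩
  · rw [hverts]; exact Set.bijOn_id _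
  · intro z hz w hw
    simp only [id]
    rw [hpar z hz]
  · intro z hz hp
    exact hcol z hz hp

lemma restrict_above_iso (hu : u.WF) (hcard : u.verts.card ≠ 0) {x : ℕ}
    (hx : x ∈ u.verts) :
    Iso' (u.restrict (u.aboveSet x)) (subF u x) id := by
  have hSv : u.aboveSet x ∩ u.verts = u.aboveSet x := by
    apply Finset.inter_eq_left.mpr
    intro z hz; exact (Finset.mem_filter.mp hz).1
  have hpar : ∀ z ∈ (u.restrict (u.aboveSet x)).verts,
      (u.restrict (u.aboveSet x)).parent z = (subF u x).parent z := by
    intro z hz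
    simp only [restrict, hSv] at hz ⊢
    rw [if_pos hz]
    show u.nearestAnc _ z = (subF u x).parent z
    by_cases hza : z = x
    · subst hza
      have h1 : u.nearestAnc (u.aboveSet z) z = none := by
        refine nearestAnc_eq_none hu hx ?_
        intro w hw hwS
        simp only [sanc, Finset.mem_filter] at hw
        have := anc_antisymm hu hw.2.1 (mem_above_iff.mp hwS).2
        exact hw.2.2 this.symm
      rw [h1]
      show _ = (if _ then _ else _)
      rw [if_neg (by simp)]
    · obtain ⟨w, hw⟩ := subF_parent_ne_none hu hz hza
      have hwS : w ∈ u.aboveSet x := parent_mem_above hu hz hza hw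
      rw [nearestAnc_eq_some hcard hw hwS]
      show _ = (if _ then _ else _)
      rw [if_pos ⟨hz, hza⟩, hw]
  refine iso'_id_of_eq ?_ hpar ?_
  · show u.aboveSet x ∩ u.verts = u.aboveSet x
    exact hSv
  · intro z hz hp
    have hz' : z ∈ u.aboveSet x := by
      simpa only [restrict, hSv] using hz
    rw [hpar z hz] at hp
    have hza : z ≠ x := by
      intro e; subst e
      show False
      simp only [subF, if_neg (by simp : ¬ (z ∈ u.aboveSet z ∧ z ≠ z))] at hp
      exact absurd hp (by simp)
    obtain ⟨w, hw⟩ := subF_parent_ne_none hu hz' hza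
    have hwS : w ∈ u.aboveSet x := parent_mem_above hu hz' hza hw
    show (subF u x).color z = u.color (u.lastBefore _ z)
    rw [lastBefore_of_parent_mem hcard hw hwS]
    rfl

lemma restrict_cut_iso (hu : u.WF) (hcard : u.verts.card ≠ 0) {x : ℕ} :
    Iso' (u.restrict (u.verts \ u.aboveSet x)) (cutF u (u.aboveSet x)) id := by
  have hSv : (u.verts \ u.aboveSet x) ∩ u.verts = u.verts \ u.aboveSet x := by
    apply Finset.inter_eq_left.mpr
    intro z hz; exact (Finset.mem_sdiff.mp hz).1
  have hpar : ∀ z ∈ (u.restrict (u.verts \ u.aboveSet x)).verts,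
      (u.restrict (u.verts \ u.aboveSet x)).parent z
        = (cutF u (u.aboveSet x)).parent z := by
    intro z hz
    simp only [restrict, hSv] at hz ⊢
    rw [if_pos hz]
    show u.nearestAnc _ z = (cutF u (u.aboveSet x)).parent z
    cases hp : u.parent z with
    | none =>
      rw [nearestAnc_of_parent_none hcard hp]
      show _ = (if _ then _ else _)
      rw [if_pos hz, hp]
    | some w =>
      have hwS : w ∈ u.verts \ u.aboveSet x := cut_parent_closed hu hz hp
      rw [nearestAnc_eq_some hcard hp hwS]
      show _ = (if _ then _ else _)
      rw [if_pos hz, hp]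
  refine iso'_id_of_eq hSv hpar ?_
  · intro z hz hp
    have hz' : z ∈ u.verts \ u.aboveSet x := by
      simpa only [restrict, hSv] using hz
    rw [hpar z hz] at hp
    show (cutF u (u.aboveSet x)).color z = u.color (u.lastBefore _ z)
    have hp' : ((if z ∈ u.verts \ u.aboveSet x then u.parent z else none)).isSome := hp
    rw [if_pos hz'] at hp'
    obtain ⟨w, hw⟩ := Option.isSome_iff_exists.mp hp'
    have hwS : w ∈ u.verts \ u.aboveSet x := cut_parent_closed hu hz' hw
    rw [lastBefore_of_parent_mem hcard hw hwS]
    rfl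


lemma bijOn_finset_image {f : ℕ → ℕ} (hf : Function.Injective f) (s : Finset ℕ) :
    Set.BijOn f ↑s ↑(s.image f) := by
  rw [Finset.coe_image]
  exact Set.InjOn.bijOn_image hf.injOn

/-- the canonical identification of `s` with the branch above the grafted
root inside `graft s t v p`. -/
lemma iso_s_subtop (hs : s.WF) (hs1 : s.IsTree) :
    Iso' s (subF (graft s t v p) (2*root s+1)) (fun b => 2*b+1) := by
  have hverts : (subF (graft s t v p) (2*root s+1)).verts
      = s.verts.image (fun b => 2*b+1) := graft_above_top hs hs1
  refine ⟨?_, ?_, ?_⟩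
  · rw [show (subF (graft s t v p) (2*root s+1)).verts = _ from hverts]
    exact bijOn_finset_image (fun a b h => by omega) s.verts
  · intro b hb c hc
    beta_reduce
    show s.parent b = some c ↔ (if _ then _ else _) = some (2*c+1)
    by_cases hbr : b = root s
    · subst hbr
      rw [if_neg (by simp)]
      rw [parent_root hs1]
      constructor <;> intro h <;> exact absurd h (by simp)
    · have hbm : 2*b+1 ∈ (graft s t v p).aboveSet (2*root s+1) := by
        rw [graft_above_top hs hs1]
        exact Finset.mem_image.mpr ⟨b, hb, rfl⟩
      rw [if_pos ⟨hbm, by intro e; have e2 : 2*b+1 = 2*root s+1 := e; exact hbr (by omega)⟩]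
      cases hp : s.parent b with
      | none => exact absurd (eq_root hs1 hb hp) hbr
      | some c' =>
        rw [graft_parent_odd_some hp]
        constructor
        · intro h; injection h with e; subst e; rfl
        · intro h; injection h with e
          have : c' = c := by omega
          rw [← this]
  · intro b hb hp
    obtain ⟨c, hc⟩ := Option.isSome_iff_exists.mp hp
    beta_reduce
    show (graft s t v p).color _ = _
    rw [graft_color_odd_some hc]

/-- the canonical identification of `t` with the complement of the grafted
branch inside `graft s t v p`. -/
lemma iso_t_cuttop (hs : s.WF) (hs1 : s.IsTree) :
    Iso' t (cutF (graft s t v p) ((graft s t v p).aboveSet (2*root s+1)))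
      (fun a => 2*a) := by
  have hverts : (cutF (graft s t v p) ((graft s t v p).aboveSet (2*root s+1))).verts
      = t.verts.image (fun a => 2*a) := by
    show (graft s t v p).verts \ _ = _
    rw [graft_above_top hs hs1]
    ext x
    simp only [Finset.mem_sdiff, Finset.mem_image, graft, Finset.mem_union]
    constructor
    · rintro ⟨h1 | h1, h2⟩
      · exact h1
      · exact absurd h1 h2
    · rintro ⟨a, ha, rfl⟩
      exact ⟨Or.inl ⟨a, ha, rfl⟩, by rintro ⟨b, hb, e⟩; omega⟩
  have hmemcut : ∀ a ∈ t.verts, 2*a ∈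
      (graft s t v p).verts \ (graft s t v p).aboveSet (2*root s+1) := by
    intro a ha
    have h2 : 2*a ∈ (cutF (graft s t v p) ((graft s t v p).aboveSet (2*root s+1))).verts := by
      rw [hverts]; exact Finset.mem_image.mpr ⟨a, ha, rfl⟩
    exact h2
  refine ⟨?_, ?_, ?_⟩
  · rw [hverts]
    exact bijOn_finset_image (fun a b h => by omega) t.verts
  · intro a ha b hb
    beta_reduce
    show t.parent a = some b ↔ (if _ then _ else _) = some (2*b)
    rw [if_pos (hmemcut a ha), graft_parent_even]
    cases hp : t.parent a with
    | none => simp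
    | some c =>
      simp only [Option.map_some]
      constructor
      · intro h; injection h with e; subst e; rfl
      · intro h; injection h with e
        have : c = b := by omega
        rw [← this]
  · intro a ha hp
    beta_reduce
    show (graft s t v p).color _ = _
    rw [graft_color_even]

/-- identification of a branch of `t` avoiding `v` with the corresponding
branch of the graft. -/
lemma iso_subF_even (ht : t.WF) {a : ℕ} (ha : a ∈ t.verts) (hva : ¬ t.Anc v a) :
    Iso' (subF t a) (subF (graft s t v p) (2*a)) (fun z => 2*z) := by
  have hverts : (subF (graft s t v p) (2*a)).verts
      = (t.aboveSet a).image (fun z => 2*z) := graft_above_even ha hva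
  refine ⟨?_, ?_, ?_⟩
  · rw [show (subF (graft s t v p) (2*a)).verts = _ from hverts]
    exact bijOn_finset_image (fun x y h => by omega) _
  · intro z hz w hw
    have hzm : z ∈ t.aboveSet a := hz
    have hmem : 2*z ∈ (graft s t v p).aboveSet (2*a) := by
      have h2 : 2*z ∈ (subF (graft s t v p) (2*a)).verts := by
        rw [hverts]; exact Finset.mem_image.mpr ⟨z, hzm, rfl⟩
      exact h2
    beta_reduce
    show (if _ then _ else _) = some w ↔ (if _ then _ else _) = some (2*w)
    by_cases hza : z = a
    · subst hza
      rw [if_neg (by simp), if_neg (by simp)]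
      constructor <;> intro h <;> exact absurd h (by simp)
    · rw [if_pos ⟨hzm, hza⟩, if_pos ⟨hmem, by intro e; have e2 : (2:ℕ)*z = 2*a := e; exact hza (by omega)⟩,
        graft_parent_even]
      cases hp : t.parent z with
      | none => simp
      | some c =>
        simp only [Option.map_some]
        constructor
        · intro h; injection h with e; subst e; rfl
        · intro h; injection h with e
          have : c = w := by omega
          rw [← this]
  · intro z hz hp
    beta_reduce
    show (graft s t v p).color _ = t.color z
    rw [graft_color_even]

/-- cutting a branch of the `t`-side of a graft yields the graft onto the cut
tree, on the nose. -/
lemma iso_graftcut_id (hs : s.WF) (ht : t.WF) {a : ℕ} (ha : a ∈ t.verts)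
    (hva : ¬ t.Anc v a) :
    Iso' (graft s (cutF t (t.aboveSet a)) v p)
      (cutF (graft s t v p) ((graft s t v p).aboveSet (2*a))) id := by
  have hverts : (graft s (cutF t (t.aboveSet a)) v p).verts
      = (cutF (graft s t v p) ((graft s t v p).aboveSet (2*a))).verts := by
    show (cutF t (t.aboveSet a)).verts.image _ ∪ s.verts.image _
      = (graft s t v p).verts \ _
    rw [graft_above_even ha hva]
    ext x
    simp only [Finset.mem_sdiff, Finset.mem_image, Finset.mem_union, cutF,
      Finset.mem_sdiff, graft]
    constructor
    · rintro (⟨c, ⟨hc1, hc2⟩, rfl⟩ | ⟨b, hb, rfl⟩)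
      · refine ⟨Or.inl ⟨c, hc1, rfl⟩, ?_⟩
        rintro ⟨c', hc', e⟩
        have : c' = c := by omega
        exact hc2 (this ▸ hc')
      · exact ⟨Or.inr ⟨b, hb, rfl⟩, by rintro ⟨c', hc', e⟩; omega⟩
    · rintro ⟨⟨c, hc, rfl⟩ | ⟨b, hb, rfl⟩, h2⟩
      · refine Or.inl ⟨c, ⟨hc, fun hcA => h2 ⟨c, hcA, rfl⟩⟩, rfl⟩
      · exact Or.inr ⟨b, hb, rfl⟩
  refine iso'_id_of_eq hverts ?_ ?_
  · intro z hz
    have hzcut : z ∈ (graft s t v p).verts \ (graft s t v p).aboveSet (2*a) := by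
      have h2 : z ∈ (cutF (graft s t v p) ((graft s t v p).aboveSet (2*a))).verts :=
        hverts ▸ hz
      exact h2
    have hzsplit := graft_mem_elim (s := s) (t := cutF t (t.aboveSet a)) hz
    show (graft s (cutF t (t.aboveSet a)) v p).parent z = (if _ then _ else _)
    rw [if_pos hzcut]
    rcases hzsplit with ⟨c, hc, rfl⟩ | ⟨b, hb, rfl⟩
    · rw [graft_parent_even, graft_parent_even]
      have hc' : c ∈ t.verts \ t.aboveSet a := hc
      have he : (t.cutF (t.aboveSet a)).parent c = t.parent c := by
        show (if c ∈ t.verts \ t.aboveSet a then t.parent c else none) = t.parent c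
        rw [if_pos hc']
      rw [he]
    · cases hp : s.parent b with
      | some c => rw [graft_parent_odd_some hp, graft_parent_odd_some hp]
      | none => rw [graft_parent_odd_root hp hb, graft_parent_odd_root hp hb]
  · intro z hz hp
    have hzsplit := graft_mem_elim (s := s) (t := cutF t (t.aboveSet a)) hz
    show (graft s t v p).color z = _
    rcases hzsplit with ⟨c, hc, rfl⟩ | ⟨b, hb, rfl⟩
    · rw [graft_color_even]
      show _ = (graft s (cutF t (t.aboveSet a)) v p).color (2*c)
      rw [graft_color_even]
      rfl
    · cases hps : s.parent b with
      | some c =>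
        rw [graft_color_odd_some hps]
        show _ = (graft s (cutF t (t.aboveSet a)) v p).color (2*b+1)
        rw [graft_color_odd_some hps]
      | none =>
        rw [graft_color_odd_root hps]
        show _ = (graft s (cutF t (t.aboveSet a)) v p).color (2*b+1)
        rw [graft_color_odd_root hps]

end

section


variable {n : ℕ} {s t u u' s' t' : PForest n} {v : ℕ} {p : Fin n}

/-- build an `Iso'` from a parent-commuting bijection. -/
lemma iso'_of_parent_map {F : ℕ → ℕ} (hbij : Set.BijOn F ↑u.verts ↑u'.verts)
    (hpar : ∀ z ∈ u.verts, (u.parent z = none ∧ u'.parent (F z) = none) ∨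
      (∃ P ∈ u.verts, u.parent z = some P ∧ u'.parent (F z) = some (F P)))
    (hcol : ∀ z ∈ u.verts, (u.parent z).isSome → u'.color (F z) = u.color z) :
    Iso' u u' F := by
  refine ⟨hbij, ?_, hcol⟩
  intro z hz w hw
  rcases hpar z hz with ⟨h1, h2⟩ | ⟨P, hP, h1, h2⟩
  · rw [h1, h2]
    constructor <;> intro h <;> exact absurd h (by simp)
  · rw [h1, h2]
    constructor
    · intro h; injection h with e; subst e; rfl
    · intro h; injection h with e
      have := hbij.2.1 (Finset.mem_coe.mpr hw) (Finset.mem_coe.mpr hP) e.symm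
      rw [this]

/-- reassembly: a tree is isomorphic to the graft of a branch onto the rest. -/
lemma assemble_iso (ht : t.WF) (ht1 : t.IsTree) (hs' : s'.WF) (hs1' : s'.IsTree)
    {a y : ℕ} (ha : a ∈ t.verts) (hpa : t.parent a = some y) {φ : ℕ → ℕ}
    (hφ : Iso' (subF t a) s' φ) :
    Iso' t (graft s' (cutF t (t.aboveSet a)) y (t.color a))
      (fun z => if z ∈ t.aboveSet a then 2*(φ z)+1 else 2*z) := by
  set A := t.aboveSet a with hA
  set r := cutF t A with hr
  set G := graft s' r y (t.color a) with hG
  set F := fun z => if z ∈ A then 2*(φ z)+1 else 2*z with hF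
  have hy : y ∈ t.verts := (ht.1 _ _ hpa).2
  have hyA : y ∉ A := parent_not_mem_above ht hpa
  have hyr : y ∈ r.verts := Finset.mem_sdiff.mpr ⟨hy, hyA⟩
  have hsubwf := subF_wf ht (a := a)
  have hsubtree := subF_istree ht ha
  have hroot : φ a = root s' := by
    have h1 := hφ.root_eq hsubwf hsubtree hs' hs1'
    rwa [subF_root ht ha] at h1
  have hAv : ∀ z ∈ A, z ∈ t.verts := fun z hz => (Finset.mem_filter.mp hz).1
  have hφm : ∀ z ∈ A, φ z ∈ s'.verts := fun z hz => hφ.maps hz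
  have hFA : ∀ z ∈ A, F z = 2*(φ z)+1 := fun z hz => by simp only [hF, if_pos hz]
  have hFn : ∀ z, z ∉ A → F z = 2*z := fun z hz => by simp only [hF, if_neg hz]
  -- bijectivity
  have hbij : Set.BijOn F ↑t.verts ↑G.verts := by
    refine ⟨?_, ?_, ?_⟩
    · intro z hz
      by_cases hzA : z ∈ A
      · rw [hFA z hzA]; exact graft_mem_odd (hφm z hzA)
      · rw [hFn z hzA]
        exact graft_mem_even (Finset.mem_sdiff.mpr ⟨hz, hzA⟩)
    · intro z hz w hw he
      by_cases hzA : z ∈ A <;> by_cases hwA : w ∈ A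
      · rw [hFA z hzA, hFA w hwA] at he
        have : φ z = φ w := by omega
        exact hφ.1.2.1 hzA hwA this
      · rw [hFA z hzA, hFn w hwA] at he; omega
      · rw [hFn z hzA, hFA w hwA] at he; omega
      · rw [hFn z hzA, hFn w hwA] at he; omega
    · intro x hx
      rcases graft_mem_elim (Finset.mem_coe.mp hx) with ⟨c, hc, rfl⟩ | ⟨b, hb, rfl⟩
      · have hc' := Finset.mem_sdiff.mp hc
        exact ⟨c, Finset.mem_coe.mpr hc'.1, hFn c hc'.2⟩
      · obtain ⟨z, hz, rfl⟩ := hφ.1.2.2 (Finset.mem_coe.mpr hb)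
        have hzA : z ∈ A := hz
        exact ⟨z, Finset.mem_coe.mpr (hAv z hzA), hFA z hzA⟩
  -- parent structure
  have hpar : ∀ z ∈ t.verts, (t.parent z = none ∧ G.parent (F z) = none) ∨
      (∃ P ∈ t.verts, t.parent z = some P ∧ G.parent (F z) = some (F P)) := by
    intro z hz
    by_cases hzA : z ∈ A
    · by_cases hza : z = a
      · subst hza
        refine Or.inr ⟨y, hy, hpa, ?_⟩
        rw [hFA z hzA, hroot, hFn y hyA]
        exact graft_parent_odd_root (parent_root hs1') (root_mem hs1')
      · obtain ⟨w0, hw0⟩ := subF_parent_ne_none ht hzA hza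
        have hw0A : w0 ∈ A := parent_mem_above ht hzA hza hw0
        have hsubp : (subF t a).parent z = some w0 := by
          show (if _ then _ else _) = _
          rw [if_pos ⟨hzA, hza⟩, hw0]
        have hs'p : s'.parent (φ z) = some (φ w0) := hφ.parent_some hsubwf hzA hsubp
        refine Or.inr ⟨w0, hAv w0 hw0A, hw0, ?_⟩
        rw [hFA z hzA, hFA w0 hw0A]
        exact graft_parent_odd_some hs'p
    · rw [hFn z hzA]
      cases hp : t.parent z with
      | none =>
        refine Or.inl ⟨rfl, ?_⟩
        rw [graft_parent_even]
        have : r.parent z = none := by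
          show (if _ then _ else _) = _
          rw [if_pos (Finset.mem_sdiff.mpr ⟨hz, hzA⟩), hp]
        rw [this]; rfl
      | some w0 =>
        have hw0 : w0 ∈ t.verts \ A :=
          cut_parent_closed ht (Finset.mem_sdiff.mpr ⟨hz, hzA⟩) hp
        refine Or.inr ⟨w0, (Finset.mem_sdiff.mp hw0).1, rfl, ?_⟩
        rw [graft_parent_even, hFn w0 (Finset.mem_sdiff.mp hw0).2]
        have : r.parent z = some w0 := by
          show (if _ then _ else _) = _
          rw [if_pos (Finset.mem_sdiff.mpr ⟨hz, hzA⟩), hp]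
        rw [this]; rfl
  refine iso'_of_parent_map hbij hpar ?_
  intro z hz hp
  by_cases hzA : z ∈ A
  · by_cases hza : z = a
    · subst hza
      rw [hFA z hzA, hroot, graft_color_odd_root (parent_root hs1')]
    · obtain ⟨w0, hw0⟩ := subF_parent_ne_none ht hzA hza
      have hsubp : (subF t a).parent z = some w0 := by
        show (if _ then _ else _) = _
        rw [if_pos ⟨hzA, hza⟩, hw0]
      have hs'p : s'.parent (φ z) = some (φ w0) := hφ.parent_some hsubwf hzA hsubp
      rw [hFA z hzA, graft_color_odd_some hs'p]
      have := hφ.2.2 z hzA (by rw [hsubp]; rfl)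
      exact this
  · rw [hFn z hzA, graft_color_even]
    rfl

/-- transport of a graft along isomorphisms of its two pieces. -/
lemma graft_transport (hs : s.WF) (hs1 : s.IsTree) (hs' : s'.WF) (hs1' : s'.IsTree)
    (ht : t.WF) (ht' : t'.WF) {v v' : ℕ} (hv : v ∈ t.verts) {f g : ℕ → ℕ}
    (hgi : Iso' s s' g) (hfi : Iso' t t' f) (hfv : f v = v') :
    Iso' (graft s t v p) (graft s' t' v' p)
      (fun x => if x % 2 = 0 then 2 * f (x/2) else 2 * g (x/2) + 1) := by
  set F := fun x => if x % 2 = 0 then 2 * f (x/2) else 2 * g (x/2) + 1 with hF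
  have hFe : ∀ a : ℕ, F (2*a) = 2 * f a := by
    intro a; simp only [hF, two_mul_mod, two_mul_div, if_pos]
  have hFo : ∀ b : ℕ, F (2*b+1) = 2 * g b + 1 := by
    intro b
    simp only [hF, odd_mod, odd_div]
    rw [if_neg (by omega)]
  have hbij : Set.BijOn F ↑(graft s t v p).verts ↑(graft s' t' v' p).verts := by
    refine ⟨?_, ?_, ?_⟩
    · intro x hx
      rcases graft_mem_elim (Finset.mem_coe.mp hx) with ⟨a, ha, rfl⟩ | ⟨b, hb, rfl⟩
      · rw [hFe]; exact graft_mem_even (hfi.maps ha)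
      · rw [hFo]; exact graft_mem_odd (hgi.maps hb)
    · intro x hx y hy he
      rcases graft_mem_elim (Finset.mem_coe.mp hx) with ⟨a, ha, rfl⟩ | ⟨b, hb, rfl⟩ <;>
        rcases graft_mem_elim (Finset.mem_coe.mp hy) with ⟨a', ha', rfl⟩ | ⟨b', hb', rfl⟩
      · rw [hFe, hFe] at he
        have : f a = f a' := by omega
        have := hfi.1.2.1 (Finset.mem_coe.mpr ha) (Finset.mem_coe.mpr ha') this
        omega
      · rw [hFe, hFo] at he; omega
      · rw [hFo, hFe] at he; omega
      · rw [hFo, hFo] at he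
        have : g b = g b' := by omega
        have := hgi.1.2.1 (Finset.mem_coe.mpr hb) (Finset.mem_coe.mpr hb') this
        omega
    · intro x hx
      rcases graft_mem_elim (Finset.mem_coe.mp hx) with ⟨a, ha, rfl⟩ | ⟨b, hb, rfl⟩
      · obtain ⟨a0, ha0, rfl⟩ := hfi.1.2.2 (Finset.mem_coe.mpr ha)
        exact ⟨2*a0, Finset.mem_coe.mpr (graft_mem_even (Finset.mem_coe.mp ha0)), hFe a0⟩
      · obtain ⟨b0, hb0, rfl⟩ := hgi.1.2.2 (Finset.mem_coe.mpr hb)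
        exact ⟨2*b0+1, Finset.mem_coe.mpr (graft_mem_odd (Finset.mem_coe.mp hb0)), hFo b0⟩
  have hpar : ∀ z ∈ (graft s t v p).verts,
      ((graft s t v p).parent z = none ∧ (graft s' t' v' p).parent (F z) = none) ∨
      (∃ P ∈ (graft s t v p).verts, (graft s t v p).parent z = some P ∧
        (graft s' t' v' p).parent (F z) = some (F P)) := by
    intro z hz
    rcases graft_mem_elim hz with ⟨a, ha, rfl⟩ | ⟨b, hb, rfl⟩
    · rw [hFe]
      cases hp : t.parent a with
      | none =>
        refine Or.inl ⟨?_, ?_⟩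
        · rw [graft_parent_even, hp]; rfl
        · rw [graft_parent_even]
          cases hp' : t'.parent (f a) with
          | none => rfl
          | some q =>
            have hq : q ∈ t'.verts := (ht'.1 _ _ hp').2
            obtain ⟨w, hw, rfl⟩ := hfi.1.2.2 (Finset.mem_coe.mpr hq)
            have := (hfi.2.1 a ha w (Finset.mem_coe.mp hw)).mpr hp'
            rw [hp] at this
            exact absurd this (by simp)
      | some b0 =>
        have hb0 : b0 ∈ t.verts := (ht.1 _ _ hp).2
        refine Or.inr ⟨2*b0, graft_mem_even hb0, ?_, ?_⟩
        · rw [graft_parent_even, hp]; rfl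
        · rw [graft_parent_even, hfi.parent_some ht ha hp, hFe]; rfl
    · rw [hFo]
      cases hp : s.parent b with
      | some c =>
        have hc : c ∈ s.verts := (hs.1 _ _ hp).2
        refine Or.inr ⟨2*c+1, graft_mem_odd hc, graft_parent_odd_some hp, ?_⟩
        rw [hFo]
        exact graft_parent_odd_some (hgi.parent_some hs hb hp)
      | none =>
        have hbr : b = root s := eq_root hs1 hb hp
        have hgb : g b = root s' := by rw [hbr, hgi.root_eq hs hs1 hs' hs1']
        refine Or.inr ⟨2*v, graft_mem_even hv, graft_parent_odd_root hp hb, ?_⟩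
        rw [hFe, hfv]
        exact graft_parent_odd_root (hgb ▸ parent_root hs1') (hgi.maps hb)
  refine iso'_of_parent_map hbij hpar ?_
  intro z hz hp
  rcases graft_mem_elim hz with ⟨a, ha, rfl⟩ | ⟨b, hb, rfl⟩
  · rw [hFe, graft_color_even, graft_color_even]
    have hsome : (t.parent a).isSome := by
      rw [graft_parent_even] at hp
      cases hq : t.parent a with
      | none => rw [hq] at hp; exact absurd hp (by simp)
      | some w => rfl
    exact hfi.2.2 a ha hsome
  · rw [hFo]
    cases hps : s.parent b with
    | some c =>
      rw [graft_color_odd_some hps, graft_color_odd_some (hgi.parent_some hs hb hps)]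
      exact hgi.2.2 b hb (by rw [hps]; rfl)
    | none =>
      have hbr : b = root s := eq_root hs1 hb hps
      have hgb : g b = root s' := by rw [hbr, hgi.root_eq hs hs1 hs' hs1']
      rw [graft_color_odd_root hps, graft_color_odd_root (hgb ▸ parent_root hs1')]

end

section


variable {n : ℕ} {s t u u' s' t' : PForest n} {v : ℕ} {p : Fin n}

lemma above_subset_verts {x : ℕ} : t.aboveSet x ⊆ t.verts := fun z hz =>
  (Finset.mem_filter.mp hz).1

lemma Iso'.subF_iso (ht : t.WF) (ht' : t'.WF) {h : ℕ → ℕ} (hiso : Iso' t t' h)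
    {x : ℕ} (hx : x ∈ t.verts) : Iso' (subF t x) (subF t' (h x)) h := by
  have himg := hiso.above_eq ht ht' hx
  have hmaps : ∀ z ∈ t.aboveSet x, h z ∈ t'.aboveSet (h x) := by
    intro z hz
    rw [← himg]
    exact Finset.mem_image.mpr ⟨z, hz, rfl⟩
  refine ⟨⟨?_, ?_, ?_⟩, ?_, ?_⟩
  · intro z hz
    exact hmaps z hz
  · exact hiso.1.2.1.mono (by exact_mod_cast above_subset_verts)
  · intro z hz
    have hz' : z ∈ t'.aboveSet (h x) := hz
    rw [← himg] at hz'
    obtain ⟨y, hy, rfl⟩ := Finset.mem_image.mp hz'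
    exact ⟨y, hy, rfl⟩
  · intro z hz w hw
    have hzv : z ∈ t.verts := above_subset_verts hz
    have hwv : w ∈ t.verts := above_subset_verts hw
    by_cases hzx : z = x
    · subst hzx
      show (if _ then _ else _) = _ ↔ (if _ then _ else _) = _
      rw [if_neg (by simp), if_neg (by simp)]
      constructor <;> intro hh <;> exact absurd hh (by simp)
    · have hhzx : h z ≠ h x := fun e => hzx (hiso.1.2.1 hzv hx e)
      show (if _ then _ else _) = _ ↔ (if _ then _ else _) = _
      rw [if_pos ⟨hz, hzx⟩, if_pos ⟨hmaps z hz, hhzx⟩]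
      exact hiso.2.1 z hzv w hwv
  · intro z hz hp
    have hzv : z ∈ t.verts := above_subset_verts hz
    have hzx : z ≠ x := by
      intro e; subst e
      have : (subF t z).parent z = none := by
        show (if _ then _ else _) = _
        rw [if_neg (by simp)]
      rw [this] at hp; exact absurd hp (by simp)
    have hp' : (t.parent z).isSome := by
      have : (subF t x).parent z = t.parent z := by
        show (if _ then _ else _) = _
        rw [if_pos ⟨hz, hzx⟩]
      rwa [this] at hp
    exact hiso.2.2 z hzv hp'

lemma cut_mem_iff {x z : ℕ} : z ∈ (cutF t (t.aboveSet x)).verts ↔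
    z ∈ t.verts ∧ z ∉ t.aboveSet x := Finset.mem_sdiff

lemma Iso'.cutF_iso (ht : t.WF) (ht' : t'.WF) {h : ℕ → ℕ} (hiso : Iso' t t' h)
    {x : ℕ} (hx : x ∈ t.verts) :
    Iso' (cutF t (t.aboveSet x)) (cutF t' (t'.aboveSet (h x))) h := by
  have himg := hiso.above_eq ht ht' hx
  have hmaps : ∀ z, z ∈ t.verts → z ∉ t.aboveSet x → h z ∈ t'.verts \ t'.aboveSet (h x) := by
    intro z hzv hzA
    refine Finset.mem_sdiff.mpr ⟨hiso.maps hzv, fun hmem => hzA ?_⟩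
    rw [← himg] at hmem
    obtain ⟨y, hy, he⟩ := Finset.mem_image.mp hmem
    have : y = z := hiso.1.2.1 (Finset.mem_coe.mpr (above_subset_verts hy))
      (Finset.mem_coe.mpr hzv) he
    exact this ▸ hy
  refine ⟨⟨?_, ?_, ?_⟩, ?_, ?_⟩
  · intro z hz
    have hz' := Finset.mem_sdiff.mp hz
    exact hmaps z hz'.1 hz'.2
  · refine hiso.1.2.1.mono ?_
    intro z hz
    exact Finset.mem_coe.mpr (Finset.mem_sdiff.mp (Finset.mem_coe.mp hz)).1
  · intro z hz
    have hz' := Finset.mem_sdiff.mp hz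
    obtain ⟨y, hy, rfl⟩ := hiso.1.2.2 (Finset.mem_coe.mpr hz'.1)
    have hym : y ∈ t.verts := Finset.mem_coe.mp hy
    refine ⟨y, Finset.mem_coe.mpr (Finset.mem_sdiff.mpr ⟨hym, fun hyA => hz'.2 ?_⟩), rfl⟩
    rw [← himg]
    exact Finset.mem_image.mpr ⟨y, hyA, rfl⟩
  · intro z hz w hw
    have hz' := Finset.mem_sdiff.mp hz
    have hw' := Finset.mem_sdiff.mp hw
    show (if _ then _ else _) = _ ↔ (if _ then _ else _) = _
    rw [if_pos (Finset.mem_sdiff.mpr hz'), if_pos (hmaps z hz'.1 hz'.2)]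
    exact hiso.2.1 z hz'.1 w hw'.1
  · intro z hz hp
    have hz' := Finset.mem_sdiff.mp hz
    have hp' : (t.parent z).isSome := by
      have he : (cutF t (t.aboveSet x)).parent z = t.parent z := by
        show (if _ then _ else _) = _
        rw [if_pos (Finset.mem_sdiff.mpr hz')]
      rwa [he] at hp
    exact hiso.2.2 z hz'.1 hp'


lemma above_disjoint (ht : t.WF) {bv bw ρ z : ℕ} (hbv : t.parent bv = some ρ)
    (hbw : t.parent bw = some ρ) (hne : bv ≠ bw)
    (h1 : z ∈ t.aboveSet bv) (h2 : z ∈ t.aboveSet bw) : False :=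
  hne (child_unique ht (mem_above_iff.mp h1).2 (mem_above_iff.mp h2).2 hbv hbw)

lemma complement_closed (ht : t.WF) {b z w : ℕ} (hz : z ∉ t.aboveSet b)
    (hzv : z ∈ t.verts) (hp : t.parent z = some w) : w ∉ t.aboveSet b := by
  intro hw
  exact hz (anc_mem_above_trans ht hw (anc_of_parent hp) hzv)

/-- extend an automorphism of a branch by the identity. -/
lemma extend_branch_iso (ht : t.WF) {b : ℕ} (hb : b ∈ t.verts) {k' : ℕ → ℕ}
    (hk' : Iso' (subF t b) (subF t b) k') :
    Iso' t t (fun z => if z ∈ t.aboveSet b then k' z else z) := by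
  have hsw := subF_wf ht (a := b)
  have hst := subF_istree ht hb
  have hkb : k' b = b := by
    have h1 := hk'.root_eq hsw hst hsw hst
    rwa [subF_root ht hb] at h1
  have hmaps : ∀ z ∈ t.aboveSet b, k' z ∈ t.aboveSet b := fun z hz => hk'.maps hz
  set F := fun z => if z ∈ t.aboveSet b then k' z else z with hF
  have hFA : ∀ z ∈ t.aboveSet b, F z = k' z := fun z hz => by simp only [hF, if_pos hz]
  have hFn : ∀ z, z ∉ t.aboveSet b → F z = z := fun z hz => by simp only [hF, if_neg hz]
  have hbij : Set.BijOn F ↑t.verts ↑t.verts := by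
    refine ⟨?_, ?_, ?_⟩
    · intro z hz
      by_cases hzA : z ∈ t.aboveSet b
      · rw [hFA z hzA]; exact above_subset_verts (hmaps z hzA)
      · rw [hFn z hzA]; exact hz
    · intro z hz w hw he
      by_cases hzA : z ∈ t.aboveSet b <;> by_cases hwA : w ∈ t.aboveSet b
      · rw [hFA z hzA, hFA w hwA] at he
        exact hk'.1.2.1 hzA hwA he
      · rw [hFA z hzA, hFn w hwA] at he
        exact absurd (he ▸ hmaps z hzA) hwA
      · rw [hFn z hzA, hFA w hwA] at he
        exact absurd (he ▸ hmaps w hwA) hzA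
      · rwa [hFn z hzA, hFn w hwA] at he
    · intro x hx
      by_cases hxA : x ∈ t.aboveSet b
      · obtain ⟨z, hz, rfl⟩ := hk'.1.2.2 hxA
        have hzA : z ∈ t.aboveSet b := hz
        exact ⟨z, Finset.mem_coe.mpr (above_subset_verts hzA), hFA z hzA⟩
      · exact ⟨x, hx, hFn x hxA⟩
  have hpar : ∀ z ∈ t.verts, (t.parent z = none ∧ t.parent (F z) = none) ∨
      (∃ P ∈ t.verts, t.parent z = some P ∧ t.parent (F z) = some (F P)) := by
    intro z hz
    by_cases hzA : z ∈ t.aboveSet b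
    · by_cases hzb : z = b
      · have hkz : F z = z := by rw [hFA z hzA, hzb, hkb, ← hzb]
        cases hp : t.parent z with
        | none => exact Or.inl ⟨rfl, by rw [hkz, hp]⟩
        | some w0 =>
          have hw0 : w0 ∉ t.aboveSet b := hzb ▸ parent_not_mem_above ht hp
          refine Or.inr ⟨w0, (ht.1 _ _ hp).2, rfl, ?_⟩
          rw [hkz, hFn w0 hw0, hp]
      · obtain ⟨w0, hw0⟩ := subF_parent_ne_none ht hzA hzb
        have hw0A : w0 ∈ t.aboveSet b := parent_mem_above ht hzA hzb hw0
        have hsubp : (subF t b).parent z = some w0 := by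
          show (if _ then _ else _) = _
          rw [if_pos ⟨hzA, hzb⟩, hw0]
        have h2 : (subF t b).parent (k' z) = some (k' w0) :=
          hk'.parent_some hsw hzA hsubp
        have hkz : k' z ≠ b := by
          intro e
          exact hzb (hk'.1.2.1 hzA (self_mem_above hb) (e.trans hkb.symm))
        have h3 : t.parent (k' z) = some (k' w0) := by
          have he : (subF t b).parent (k' z) = t.parent (k' z) := by
            show (if _ then _ else _) = _
            rw [if_pos ⟨hmaps z hzA, hkz⟩]
          rwa [he] at h2
        refine Or.inr ⟨w0, above_subset_verts hw0A, hw0, ?_⟩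
        rw [hFA z hzA, hFA w0 hw0A]
        exact h3
    · cases hp : t.parent z with
      | none => exact Or.inl ⟨rfl, by rw [hFn z hzA, hp]⟩
      | some w0 =>
        have hw0 : w0 ∉ t.aboveSet b := complement_closed ht hzA hz hp
        refine Or.inr ⟨w0, (ht.1 _ _ hp).2, rfl, ?_⟩
        rw [hFn z hzA, hFn w0 hw0, hp]
  refine iso'_of_parent_map hbij hpar ?_
  intro z hz hp
  by_cases hzA : z ∈ t.aboveSet b
  · by_cases hzb : z = b
    · rw [hFA z hzA, hzb, hkb, ← hzb]
    · obtain ⟨w0, hw0⟩ := subF_parent_ne_none ht hzA hzb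
      have hsubp : (subF t b).parent z = some w0 := by
        show (if _ then _ else _) = _
        rw [if_pos ⟨hzA, hzb⟩, hw0]
      rw [hFA z hzA]
      exact hk'.2.2 z hzA (by rw [hsubp]; rfl)
  · rw [hFn z hzA]

/-- swap two sibling branches exchanged by an automorphism. -/
lemma swap_branch_iso (ht : t.WF) {bv bw ρ : ℕ} (hbv : t.parent bv = some ρ)
    (hbw : t.parent bw = some ρ) (hne : bv ≠ bw) {h : ℕ → ℕ} (hh : Iso' t t h)
    (hhb : h bv = bw) :
    Iso' t t (fun z => if z ∈ t.aboveSet bv then h z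
      else if z ∈ t.aboveSet bw then Function.invFunOn h ↑t.verts z else z) := by
  have hbvm : bv ∈ t.verts := (ht.1 _ _ hbv).1
  have hbwm : bw ∈ t.verts := (ht.1 _ _ hbw).1
  have hρm : ρ ∈ t.verts := (ht.1 _ _ hbv).2
  set g := Function.invFunOn h ↑t.verts with hgdef
  have hg : Iso' t t g := hh.symm ht
  have himg1 : (t.aboveSet bv).image h = t.aboveSet bw := by
    have := hh.above_eq ht ht hbvm
    rwa [hhb] at this
  have hgb : g bw = bv := by
    rw [← hhb]; exact hh.invOn.1 hbvm
  have himg2 : (t.aboveSet bw).image g = t.aboveSet bv := by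
    have := hg.above_eq ht ht hbwm
    rwa [hgb] at this
  have hmapsv : ∀ z ∈ t.aboveSet bv, h z ∈ t.aboveSet bw := by
    intro z hz; rw [← himg1]; exact Finset.mem_image.mpr ⟨z, hz, rfl⟩
  have hmapsw : ∀ z ∈ t.aboveSet bw, g z ∈ t.aboveSet bv := by
    intro z hz; rw [← himg2]; exact Finset.mem_image.mpr ⟨z, hz, rfl⟩
  have hdisj : ∀ z, z ∈ t.aboveSet bv → z ∈ t.aboveSet bw → False := fun z h1 h2 =>
    above_disjoint ht hbv hbw hne h1 h2
  have hρv : ρ ∉ t.aboveSet bv := parent_not_mem_above ht hbv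
  have hρw : ρ ∉ t.aboveSet bw := parent_not_mem_above ht hbw
  set F := fun z => if z ∈ t.aboveSet bv then h z
      else if z ∈ t.aboveSet bw then g z else z with hF
  have hFv : ∀ z ∈ t.aboveSet bv, F z = h z := fun z hz => by
    simp only [hF, if_pos hz]
  have hFw : ∀ z ∈ t.aboveSet bw, F z = g z := fun z hz => by
    simp only [hF, if_neg (fun hzv => hdisj z hzv hz), if_pos hz]
  have hFn : ∀ z, z ∉ t.aboveSet bv → z ∉ t.aboveSet bw → F z = z := fun z h1 h2 => by
    simp only [hF, if_neg h1, if_neg h2]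
  have hbij : Set.BijOn F ↑t.verts ↑t.verts := by
    refine ⟨?_, ?_, ?_⟩
    · intro z hz
      by_cases h1 : z ∈ t.aboveSet bv
      · rw [hFv z h1]; exact above_subset_verts (hmapsv z h1)
      · by_cases h2 : z ∈ t.aboveSet bw
        · rw [hFw z h2]; exact above_subset_verts (hmapsw z h2)
        · rw [hFn z h1 h2]; exact hz
    · intro z hz w hw he
      by_cases h1 : z ∈ t.aboveSet bv <;> by_cases h1' : w ∈ t.aboveSet bv
      · rw [hFv z h1, hFv w h1'] at he; exact hh.1.2.1 hz hw he
      · rw [hFv z h1] at he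
        by_cases h2' : w ∈ t.aboveSet bw
        · rw [hFw w h2'] at he
          exact absurd (he ▸ hmapsv z h1) (fun hmem => hdisj _ (hmapsw w h2') hmem)
        · rw [hFn w h1' h2'] at he
          exact absurd (he ▸ hmapsv z h1) h2'
      · rw [hFv w h1'] at he
        by_cases h2 : z ∈ t.aboveSet bw
        · rw [hFw z h2] at he
          exact absurd (he ▸ hmapsw z h2) (fun hmem => hdisj _ hmem (hmapsv w h1'))
        · rw [hFn z h1 h2] at he
          exact absurd (h2 (by rw [he]; exact hmapsv w h1')) not_false
      · by_cases h2 : z ∈ t.aboveSet bw <;> by_cases h2' : w ∈ t.aboveSet bw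
        · rw [hFw z h2, hFw w h2'] at he; exact hg.1.2.1 hz hw he
        · rw [hFw z h2, hFn w h1' h2'] at he
          exact absurd (he ▸ hmapsw z h2) h1'
        · rw [hFn z h1 h2, hFw w h2'] at he
          exact absurd (he ▸ hmapsw w h2') (fun hmem => h1 (he ▸ hmem))
        · rwa [hFn z h1 h2, hFn w h1' h2'] at he
    · intro x hx
      by_cases h1 : x ∈ t.aboveSet bw
      · rw [← himg1] at h1
        obtain ⟨z, hz, rfl⟩ := Finset.mem_image.mp h1
        exact ⟨z, Finset.mem_coe.mpr (above_subset_verts hz), hFv z hz⟩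
      · by_cases h2 : x ∈ t.aboveSet bv
        · rw [← himg2] at h2
          obtain ⟨z, hz, rfl⟩ := Finset.mem_image.mp h2
          exact ⟨z, Finset.mem_coe.mpr (above_subset_verts hz), hFw z hz⟩
        · exact ⟨x, hx, hFn x h2 h1⟩
  have hpar : ∀ z ∈ t.verts, (t.parent z = none ∧ t.parent (F z) = none) ∨
      (∃ P ∈ t.verts, t.parent z = some P ∧ t.parent (F z) = some (F P)) := by
    intro z hz
    by_cases h1 : z ∈ t.aboveSet bv
    · by_cases hzb : z = bv
      · subst hzb
        refine Or.inr ⟨ρ, hρm, hbv, ?_⟩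
        rw [hFv z h1, hhb, hFn ρ hρv hρw, hbw]
      · obtain ⟨w0, hw0⟩ := subF_parent_ne_none ht h1 hzb
        have hw0A : w0 ∈ t.aboveSet bv := parent_mem_above ht h1 hzb hw0
        refine Or.inr ⟨w0, above_subset_verts hw0A, hw0, ?_⟩
        rw [hFv z h1, hFv w0 hw0A]
        exact hh.parent_some ht hz hw0
    · by_cases h2 : z ∈ t.aboveSet bw
      · by_cases hzb : z = bw
        · subst hzb
          refine Or.inr ⟨ρ, hρm, hbw, ?_⟩
          rw [hFw z h2, hgb, hFn ρ hρv hρw, hbv]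
        · obtain ⟨w0, hw0⟩ := subF_parent_ne_none ht h2 hzb
          have hw0A : w0 ∈ t.aboveSet bw := parent_mem_above ht h2 hzb hw0
          refine Or.inr ⟨w0, above_subset_verts hw0A, hw0, ?_⟩
          rw [hFw z h2, hFw w0 hw0A]
          exact hg.parent_some ht hz hw0
      · cases hp : t.parent z with
        | none => exact Or.inl ⟨rfl, by rw [hFn z h1 h2, hp]⟩
        | some w0 =>
          have hw1 : w0 ∉ t.aboveSet bv := complement_closed ht h1 hz hp
          have hw2 : w0 ∉ t.aboveSet bw := complement_closed ht h2 hz hp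
          refine Or.inr ⟨w0, (ht.1 _ _ hp).2, rfl, ?_⟩
          rw [hFn z h1 h2, hFn w0 hw1 hw2, hp]
  refine iso'_of_parent_map hbij hpar ?_
  intro z hz hp
  by_cases h1 : z ∈ t.aboveSet bv
  · rw [hFv z h1]; exact hh.2.2 z hz hp
  · by_cases h2 : z ∈ t.aboveSet bw
    · rw [hFw z h2]; exact hg.2.2 z hz hp
    · rw [hFn z h1 h2]

/-- if some automorphism carries `v` to `w` then some automorphism swaps them. -/
lemma swap_lemma : ∀ (N : ℕ) (t : PForest n), t.WF → t.IsTree → t.verts.card ≤ N →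
    ∀ {v w : ℕ} {h : ℕ → ℕ}, Iso' t t h → v ∈ t.verts → h v = w →
    ∃ k, Iso' t t k ∧ k v = w ∧ k w = v := by
  intro N
  induction N with
  | zero =>
    intro t ht ht1 hcard v w h hh hv hhv
    have := Finset.card_pos.mpr ⟨v, hv⟩
    omega
  | succ N ih =>
    intro t ht ht1 hcard v w h hh hv hhv
    have hw : w ∈ t.verts := hhv ▸ hh.maps hv
    by_cases hvw : v = w
    · subst hvw
      exact ⟨id, iso'_refl t, rfl, rfl⟩
    · have hvr : v ≠ root t := by
        rintro rfl
        rw [hh.root_eq ht ht1 ht ht1] at hhv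
        exact hvw hhv
      have hwr : w ≠ root t := by
        rintro rfl
        have h2 := hh.root_eq ht ht1 ht ht1
        have := hh.1.2.1 (Finset.mem_coe.mpr hv) (Finset.mem_coe.mpr (root_mem ht1))
          (hhv.trans h2.symm)
        exact hvw this
      obtain ⟨bv, hbva, hbvp⟩ := exists_child ht (anc_root ht ht1 hv) hvr
      obtain ⟨bw, hbwa, hbwp⟩ := exists_child ht (anc_root ht ht1 hw) hwr
      have hbvm : bv ∈ t.verts := (ht.1 _ _ hbvp).1
      have hbwm : bw ∈ t.verts := (ht.1 _ _ hbwp).1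
      have hhbv : h bv = bw := by
        have ha1 : t.Anc w (h bv) := by
          have := hh.anc ht hv hbva
          rwa [hhv] at this
        have hp1 : t.parent (h bv) = some (root t) := by
          have := hh.parent_some ht hbvm hbvp
          rwa [hh.root_eq ht ht1 ht ht1] at this
        exact child_unique ht ha1 hbwa hp1 hbwp
      by_cases hbb : bv = bw
      · subst hbb
        have hsub_iso : Iso' (subF t bv) (subF t bv) h := by
          have h2 := hh.subF_iso ht ht hbvm
          rwa [hhbv] at h2
        have hvmem : v ∈ (subF t bv).verts := Finset.mem_filter.mpr ⟨hv, hbva⟩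
        have hbvr : bv ≠ root t := by
          intro e
          rw [e, parent_root ht1] at hbvp
          exact absurd hbvp (by simp)
        have hcard' : (subF t bv).verts.card ≤ N := by
          have := above_card_lt ht ht1 hbvm hbvr
          have h3 : (subF t bv).verts.card = (t.aboveSet bv).card := rfl
          omega
        obtain ⟨k', hk', hk'1, hk'2⟩ := ih (subF t bv) (subF_wf ht)
          (subF_istree ht hbvm) hcard' hsub_iso hvmem hhv
        have hwmem : w ∈ t.aboveSet bv := Finset.mem_filter.mpr ⟨hw, hbwa⟩
        have hvmem' : v ∈ t.aboveSet bv := Finset.mem_filter.mpr ⟨hv, hbva⟩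
        refine ⟨_, extend_branch_iso ht hbvm hk', ?_, ?_⟩
        · simp only [if_pos hvmem']; exact hk'1
        · simp only [if_pos hwmem]; exact hk'2
      · have hvmem : v ∈ t.aboveSet bv := Finset.mem_filter.mpr ⟨hv, hbva⟩
        have hwmem : w ∈ t.aboveSet bw := Finset.mem_filter.mpr ⟨hw, hbwa⟩
        have hwnv : w ∉ t.aboveSet bv := fun hmem =>
          above_disjoint ht hbvp hbwp hbb hmem hwmem
        refine ⟨_, swap_branch_iso ht hbvp hbwp hbb hh hhbv, ?_, ?_⟩
        · simp only [if_pos hvmem]; exact hhv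
        · simp only [if_neg hwnv, if_pos hwmem]
          rw [← hhv]
          exact hh.invOn.1 hv

end

section


variable {n : ℕ} {s t u u' s' t' : PForest n} {v : ℕ} {p : Fin n}

/-- replace a branch and permute the rest: glue an isomorphism of branches with
an isomorphism of the complements matching at the attachment points. -/
lemma branch_replace_iso (ht : t.WF) {a a' y y' : ℕ}
    (ha : a ∈ t.verts) (ha' : a' ∈ t.verts)
    (hpa : t.parent a = some y) (hpa' : t.parent a' = some y')
    {M R : ℕ → ℕ} (hM : Iso' (subF t a) (subF t a') M)
    (hR : Iso' (cutF t (t.aboveSet a)) (cutF t (t.aboveSet a')) R)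
    (hRy : R y = y') (hcol : t.color a' = t.color a) :
    Iso' t t (fun z => if z ∈ t.aboveSet a then M z else R z) := by
  have hya : y ∉ t.aboveSet a := parent_not_mem_above ht hpa
  have hym : y ∈ t.verts := (ht.1 _ _ hpa).2
  have hMa : M a = a' := by
    have h1 := hM.root_eq (subF_wf ht) (subF_istree ht ha) (subF_wf ht) (subF_istree ht ha')
    rwa [subF_root ht ha, subF_root ht ha'] at h1
  have hMmaps : ∀ z ∈ t.aboveSet a, M z ∈ t.aboveSet a' := fun z hz => hM.maps hz
  have hRmaps : ∀ z, z ∈ t.verts → z ∉ t.aboveSet a →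
      R z ∈ t.verts ∧ R z ∉ t.aboveSet a' := by
    intro z h1 h2
    have := hR.maps (show z ∈ (cutF t (t.aboveSet a)).verts from Finset.mem_sdiff.mpr ⟨h1, h2⟩)
    exact Finset.mem_sdiff.mp this
  set F := fun z => if z ∈ t.aboveSet a then M z else R z with hF
  have hFA : ∀ z ∈ t.aboveSet a, F z = M z := fun z hz => by simp only [hF, if_pos hz]
  have hFn : ∀ z, z ∉ t.aboveSet a → F z = R z := fun z hz => by simp only [hF, if_neg hz]
  have hbij : Set.BijOn F ↑t.verts ↑t.verts := by
    refine ⟨?_, ?_, ?_⟩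
    · intro z hz
      by_cases hzA : z ∈ t.aboveSet a
      · rw [hFA z hzA]; exact above_subset_verts (hMmaps z hzA)
      · rw [hFn z hzA]; exact (hRmaps z hz hzA).1
    · intro z hz w hw he
      by_cases hzA : z ∈ t.aboveSet a <;> by_cases hwA : w ∈ t.aboveSet a
      · rw [hFA z hzA, hFA w hwA] at he; exact hM.1.2.1 hzA hwA he
      · rw [hFA z hzA, hFn w hwA] at he
        exact absurd (he ▸ hMmaps z hzA) (hRmaps w hw hwA).2
      · rw [hFn z hzA, hFA w hwA] at he
        exact absurd (he.symm ▸ hMmaps w hwA) (hRmaps z hz hzA).2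
      · rw [hFn z hzA, hFn w hwA] at he
        have := hR.1.2.1 (Finset.mem_coe.mpr (Finset.mem_sdiff.mpr ⟨hz, hzA⟩))
          (Finset.mem_coe.mpr (Finset.mem_sdiff.mpr ⟨hw, hwA⟩)) he
        exact this
    · intro x hx
      by_cases hxA : x ∈ t.aboveSet a'
      · obtain ⟨z, hz, rfl⟩ := hM.1.2.2 hxA
        have hzA : z ∈ t.aboveSet a := hz
        exact ⟨z, Finset.mem_coe.mpr (above_subset_verts hzA), hFA z hzA⟩
      · obtain ⟨z, hz, rfl⟩ := hR.1.2.2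
          (Finset.mem_coe.mpr (Finset.mem_sdiff.mpr ⟨Finset.mem_coe.mp hx, hxA⟩))
        have hz' := Finset.mem_sdiff.mp (Finset.mem_coe.mp hz)
        exact ⟨z, Finset.mem_coe.mpr hz'.1, hFn z hz'.2⟩
  have hRpar : ∀ z, z ∈ t.verts → z ∉ t.aboveSet a →
      (t.parent z = none ∧ t.parent (R z) = none) ∨
      (∃ P ∈ t.verts, P ∉ t.aboveSet a ∧ t.parent z = some P ∧ t.parent (R z) = some (R P)) := by
    intro z h1 h2
    have hzc : z ∈ (cutF t (t.aboveSet a)).verts := Finset.mem_sdiff.mpr ⟨h1, h2⟩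
    cases hp : t.parent z with
    | none =>
      refine Or.inl ⟨rfl, ?_⟩
      have hcz : (cutF t (t.aboveSet a)).parent z = none := by
        show (if _ then _ else _) = _
        rw [if_pos (Finset.mem_sdiff.mpr ⟨h1, h2⟩), hp]
      cases hp' : t.parent (R z) with
      | none => rfl
      | some q' =>
        have hRz := hRmaps z h1 h2
        have hq' : q' ∉ t.aboveSet a' := complement_closed ht hRz.2 hRz.1 hp'
        have hcz' : (cutF t (t.aboveSet a')).parent (R z) = some q' := by
          show (if _ then _ else _) = _
          rw [if_pos (Finset.mem_sdiff.mpr ⟨hRz.1, hRz.2⟩), hp']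
        -- transport back along hR
        have hq'm : q' ∈ (cutF t (t.aboveSet a')).verts :=
          Finset.mem_sdiff.mpr ⟨(ht.1 _ _ hp').2, hq'⟩
        obtain ⟨P, hP, rfl⟩ := hR.1.2.2 (Finset.mem_coe.mpr hq'm)
        have := (hR.2.1 z hzc P (Finset.mem_coe.mp hP)).mpr hcz'
        rw [hcz] at this
        exact absurd this (by simp)
    | some w0 =>
      have hw0 : w0 ∈ t.verts \ t.aboveSet a := cut_parent_closed ht hzc hp
      have hw0' := Finset.mem_sdiff.mp hw0
      have hcz : (cutF t (t.aboveSet a)).parent z = some w0 := by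
        show (if _ then _ else _) = _
        rw [if_pos (Finset.mem_sdiff.mpr ⟨h1, h2⟩), hp]
      have h3 : (cutF t (t.aboveSet a')).parent (R z) = some (R w0) :=
        hR.parent_some (cutF_wf ht) hzc hcz
      have hRz := hRmaps z h1 h2
      have h4 : t.parent (R z) = some (R w0) := by
        have he : (cutF t (t.aboveSet a')).parent (R z) = t.parent (R z) := by
          show (if _ then _ else _) = _
          rw [if_pos (Finset.mem_sdiff.mpr ⟨hRz.1, hRz.2⟩)]
        rwa [he] at h3
      exact Or.inr ⟨w0, hw0'.1, hw0'.2, rfl, h4⟩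
  have hpar : ∀ z ∈ t.verts, (t.parent z = none ∧ t.parent (F z) = none) ∨
      (∃ P ∈ t.verts, t.parent z = some P ∧ t.parent (F z) = some (F P)) := by
    intro z hz
    by_cases hzA : z ∈ t.aboveSet a
    · by_cases hza : z = a
      · refine Or.inr ⟨y, hym, hza ▸ hpa, ?_⟩
        rw [hFA z hzA, hza, hMa, hFn y hya, hRy]
        exact hpa'
      · obtain ⟨w0, hw0⟩ := subF_parent_ne_none ht hzA hza
        have hw0A : w0 ∈ t.aboveSet a := parent_mem_above ht hzA hza hw0
        have hsubp : (subF t a).parent z = some w0 := by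
          show (if _ then _ else _) = _
          rw [if_pos ⟨hzA, hza⟩, hw0]
        have h2 : (subF t a').parent (M z) = some (M w0) :=
          hM.parent_some (subF_wf ht) hzA hsubp
        have hMza : M z ≠ a' := by
          intro e
          exact hza (hM.1.2.1 hzA (self_mem_above ha) (e.trans hMa.symm))
        have h3 : t.parent (M z) = some (M w0) := by
          have he : (subF t a').parent (M z) = t.parent (M z) := by
            show (if _ then _ else _) = _
            rw [if_pos ⟨hMmaps z hzA, hMza⟩]
          rwa [he] at h2
        refine Or.inr ⟨w0, above_subset_verts hw0A, hw0, ?_⟩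
        rw [hFA z hzA, hFA w0 hw0A]
        exact h3
    · rcases hRpar z hz hzA with ⟨h1, h2⟩ | ⟨P, hP, hPA, h1, h2⟩
      · exact Or.inl ⟨h1, by rw [hFn z hzA]; exact h2⟩
      · refine Or.inr ⟨P, hP, h1, ?_⟩
        rw [hFn z hzA, hFn P hPA]
        exact h2
  refine iso'_of_parent_map hbij hpar ?_
  intro z hz hp
  by_cases hzA : z ∈ t.aboveSet a
  · by_cases hza : z = a
    · rw [hFA z hzA, hza, hMa, hcol, ← hza]
    · obtain ⟨w0, hw0⟩ := subF_parent_ne_none ht hzA hza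
      have hsubp : (subF t a).parent z = some w0 := by
        show (if _ then _ else _) = _
        rw [if_pos ⟨hzA, hza⟩, hw0]
      rw [hFA z hzA]
      exact hM.2.2 z hzA (by rw [hsubp]; rfl)
  · rw [hFn z hzA]
    have hzc : z ∈ (cutF t (t.aboveSet a)).verts := Finset.mem_sdiff.mpr ⟨hz, hzA⟩
    have hcz : (cutF t (t.aboveSet a)).parent z = t.parent z := by
      show (if _ then _ else _) = _
      rw [if_pos (Finset.mem_sdiff.mpr ⟨hz, hzA⟩)]
    exact hR.2.2 z hzc (by rw [hcz]; exact hp)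


/-- exchange two incomparable branches and permute the rest. -/
lemma branch_exchange_iso (ht : t.WF) {a₁ a₂ y₁ y₂ : ℕ}
    (ha₁ : a₁ ∈ t.verts) (ha₂ : a₂ ∈ t.verts)
    (hp₁ : t.parent a₁ = some y₁) (hp₂ : t.parent a₂ = some y₂)
    (hanc₁ : ¬ t.Anc a₁ a₂) (hanc₂ : ¬ t.Anc a₂ a₁)
    {M₁ M₂ R : ℕ → ℕ}
    (hM₁ : Iso' (subF t a₁) (subF t a₂) M₁) (hM₂ : Iso' (subF t a₂) (subF t a₁) M₂)
    (hRmaps : ∀ z, z ∈ t.verts → z ∉ t.aboveSet a₁ → z ∉ t.aboveSet a₂ →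
      R z ∈ t.verts ∧ R z ∉ t.aboveSet a₁ ∧ R z ∉ t.aboveSet a₂)
    (hRinj : ∀ z w, z ∈ t.verts → z ∉ t.aboveSet a₁ → z ∉ t.aboveSet a₂ →
      w ∈ t.verts → w ∉ t.aboveSet a₁ → w ∉ t.aboveSet a₂ → R z = R w → z = w)
    (hRsurj : ∀ x, x ∈ t.verts → x ∉ t.aboveSet a₁ → x ∉ t.aboveSet a₂ →
      ∃ z, z ∈ t.verts ∧ z ∉ t.aboveSet a₁ ∧ z ∉ t.aboveSet a₂ ∧ R z = x)
    (hRpar : ∀ z, z ∈ t.verts → z ∉ t.aboveSet a₁ → z ∉ t.aboveSet a₂ →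
      (t.parent z = none ∧ t.parent (R z) = none) ∨
      (∃ P, P ∈ t.verts ∧ P ∉ t.aboveSet a₁ ∧ P ∉ t.aboveSet a₂ ∧
        t.parent z = some P ∧ t.parent (R z) = some (R P)))
    (hRcol : ∀ z, z ∈ t.verts → z ∉ t.aboveSet a₁ → z ∉ t.aboveSet a₂ →
      (t.parent z).isSome → t.color (R z) = t.color z)
    (hRy₁ : R y₁ = y₂) (hRy₂ : R y₂ = y₁)
    (hcol₁ : t.color a₂ = t.color a₁) :
    Iso' t t (fun z => if z ∈ t.aboveSet a₁ then M₁ z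
      else if z ∈ t.aboveSet a₂ then M₂ z else R z) := by
  have hdisj : ∀ z, z ∈ t.aboveSet a₁ → z ∈ t.aboveSet a₂ → False := by
    intro z h1 h2
    rcases anc_total (mem_above_iff.mp h1).2 (mem_above_iff.mp h2).2 with h | h
    · exact hanc₁ h
    · exact hanc₂ h
  have hM₁a : M₁ a₁ = a₂ := by
    have h1 := hM₁.root_eq (subF_wf ht) (subF_istree ht ha₁) (subF_wf ht) (subF_istree ht ha₂)
    rwa [subF_root ht ha₁, subF_root ht ha₂] at h1
  have hM₂a : M₂ a₂ = a₁ := by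
    have h1 := hM₂.root_eq (subF_wf ht) (subF_istree ht ha₂) (subF_wf ht) (subF_istree ht ha₁)
    rwa [subF_root ht ha₂, subF_root ht ha₁] at h1
  have hy₁m : y₁ ∈ t.verts := (ht.1 _ _ hp₁).2
  have hy₂m : y₂ ∈ t.verts := (ht.1 _ _ hp₂).2
  have hy₁1 : y₁ ∉ t.aboveSet a₁ := parent_not_mem_above ht hp₁
  have hy₂2 : y₂ ∉ t.aboveSet a₂ := parent_not_mem_above ht hp₂
  have hy₁2 : y₁ ∉ t.aboveSet a₂ := by
    intro hmem
    exact hanc₁ (anc_head hp₁ (mem_above_iff.mp hmem).2)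
  have hy₂1 : y₂ ∉ t.aboveSet a₁ := by
    intro hmem
    exact hanc₂ (anc_head hp₂ (mem_above_iff.mp hmem).2)
  have hM₁maps : ∀ z ∈ t.aboveSet a₁, M₁ z ∈ t.aboveSet a₂ := fun z hz => hM₁.maps hz
  have hM₂maps : ∀ z ∈ t.aboveSet a₂, M₂ z ∈ t.aboveSet a₁ := fun z hz => hM₂.maps hz
  set F := fun z => if z ∈ t.aboveSet a₁ then M₁ z
      else if z ∈ t.aboveSet a₂ then M₂ z else R z with hF
  have hF1 : ∀ z ∈ t.aboveSet a₁, F z = M₁ z := fun z hz => by simp only [hF, if_pos hz]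
  have hF2 : ∀ z ∈ t.aboveSet a₂, F z = M₂ z := fun z hz => by
    simp only [hF, if_neg (fun h1 => hdisj z h1 hz), if_pos hz]
  have hFn : ∀ z, z ∉ t.aboveSet a₁ → z ∉ t.aboveSet a₂ → F z = R z := fun z h1 h2 => by
    simp only [hF, if_neg h1, if_neg h2]
  have hbij : Set.BijOn F ↑t.verts ↑t.verts := by
    refine ⟨?_, ?_, ?_⟩
    · intro z hz
      by_cases h1 : z ∈ t.aboveSet a₁
      · rw [hF1 z h1]; exact above_subset_verts (hM₁maps z h1)
      · by_cases h2 : z ∈ t.aboveSet a₂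
        · rw [hF2 z h2]; exact above_subset_verts (hM₂maps z h2)
        · rw [hFn z h1 h2]; exact (hRmaps z hz h1 h2).1
    · intro z hz w hw he
      by_cases h1 : z ∈ t.aboveSet a₁ <;> by_cases h1' : w ∈ t.aboveSet a₁
      · rw [hF1 z h1, hF1 w h1'] at he; exact hM₁.1.2.1 h1 h1' he
      · rw [hF1 z h1] at he
        by_cases h2' : w ∈ t.aboveSet a₂
        · rw [hF2 w h2'] at he
          exact absurd (he ▸ hM₁maps z h1) (fun hm => hdisj _ (he ▸ hM₂maps w h2') hm)
        · rw [hFn w h1' h2'] at he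
          exact absurd (he ▸ hM₁maps z h1) (hRmaps w hw h1' h2').2.2
      · rw [hF1 w h1'] at he
        by_cases h2 : z ∈ t.aboveSet a₂
        · rw [hF2 z h2] at he
          exact absurd (he.symm ▸ hM₁maps w h1') (fun hm => hdisj _ (hM₂maps z h2) hm)
        · rw [hFn z h1 h2] at he
          exact absurd (he.symm ▸ hM₁maps w h1') (hRmaps z hz h1 h2).2.2
      · by_cases h2 : z ∈ t.aboveSet a₂ <;> by_cases h2' : w ∈ t.aboveSet a₂
        · rw [hF2 z h2, hF2 w h2'] at he; exact hM₂.1.2.1 h2 h2' he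
        · rw [hF2 z h2, hFn w h1' h2'] at he
          exact absurd (he ▸ hM₂maps z h2) (hRmaps w hw h1' h2').2.1
        · rw [hFn z h1 h2, hF2 w h2'] at he
          exact absurd (he.symm ▸ hM₂maps w h2') (hRmaps z hz h1 h2).2.1
        · rw [hFn z h1 h2, hFn w h1' h2'] at he
          exact hRinj z w hz h1 h2 hw h1' h2' he
    · intro x hx
      by_cases h1 : x ∈ t.aboveSet a₂
      · obtain ⟨z, hz, rfl⟩ := hM₁.1.2.2 h1
        have hz' : z ∈ t.aboveSet a₁ := hz
        exact ⟨z, Finset.mem_coe.mpr (above_subset_verts hz'), hF1 z hz'⟩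
      · by_cases h2 : x ∈ t.aboveSet a₁
        · obtain ⟨z, hz, rfl⟩ := hM₂.1.2.2 h2
          have hz' : z ∈ t.aboveSet a₂ := hz
          exact ⟨z, Finset.mem_coe.mpr (above_subset_verts hz'),
            hF2 z hz'⟩
        · obtain ⟨z, hzm, hz1, hz2, rfl⟩ := hRsurj x (Finset.mem_coe.mp hx) h2 h1
          exact ⟨z, Finset.mem_coe.mpr hzm, hFn z hz1 hz2⟩
  have hsub_par : ∀ (b b' : ℕ) (hb : b ∈ t.verts) (hb' : b' ∈ t.verts)
      (M : ℕ → ℕ), Iso' (subF t b) (subF t b') M → ∀ z ∈ t.aboveSet b, z ≠ b →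
      ∃ w0 ∈ t.aboveSet b, t.parent z = some w0 ∧ t.parent (M z) = some (M w0) := by
    intro b b' hb hb' M hM z hz hzb
    obtain ⟨w0, hw0⟩ := subF_parent_ne_none ht hz hzb
    have hw0A : w0 ∈ t.aboveSet b := parent_mem_above ht hz hzb hw0
    have hsubp : (subF t b).parent z = some w0 := by
      show (if _ then _ else _) = _
      rw [if_pos ⟨hz, hzb⟩, hw0]
    have h2 : (subF t b').parent (M z) = some (M w0) :=
      hM.parent_some (subF_wf ht) hz hsubp
    have hMroot : M b = b' := by
      have h1 := hM.root_eq (subF_wf ht) (subF_istree ht hb) (subF_wf ht) (subF_istree ht hb')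
      rwa [subF_root ht hb, subF_root ht hb'] at h1
    have hMzb : M z ≠ b' := by
      intro e
      exact hzb (hM.1.2.1 hz (self_mem_above hb) (e.trans hMroot.symm))
    have h3 : t.parent (M z) = some (M w0) := by
      have he : (subF t b').parent (M z) = t.parent (M z) := by
        show (if _ then _ else _) = _
        rw [if_pos ⟨hM.maps hz, hMzb⟩]
      rwa [he] at h2
    exact ⟨w0, hw0A, hw0, h3⟩
  have hpar : ∀ z ∈ t.verts, (t.parent z = none ∧ t.parent (F z) = none) ∨
      (∃ P ∈ t.verts, t.parent z = some P ∧ t.parent (F z) = some (F P)) := by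
    intro z hz
    by_cases h1 : z ∈ t.aboveSet a₁
    · by_cases hzb : z = a₁
      · refine Or.inr ⟨y₁, hy₁m, hzb ▸ hp₁, ?_⟩
        rw [hF1 z h1, hzb, hM₁a, hFn y₁ hy₁1 hy₁2, hRy₁]
        exact hp₂
      · obtain ⟨w0, hw0A, hw0, h3⟩ := hsub_par a₁ a₂ ha₁ ha₂ M₁ hM₁ z h1 hzb
        refine Or.inr ⟨w0, above_subset_verts hw0A, hw0, ?_⟩
        rw [hF1 z h1, hF1 w0 hw0A]
        exact h3
    · by_cases h2 : z ∈ t.aboveSet a₂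
      · by_cases hzb : z = a₂
        · refine Or.inr ⟨y₂, hy₂m, hzb ▸ hp₂, ?_⟩
          rw [hF2 z h2, hzb, hM₂a, hFn y₂ hy₂1 hy₂2, hRy₂]
          exact hp₁
        · obtain ⟨w0, hw0A, hw0, h3⟩ := hsub_par a₂ a₁ ha₂ ha₁ M₂ hM₂ z h2 hzb
          refine Or.inr ⟨w0, above_subset_verts hw0A, hw0, ?_⟩
          rw [hF2 z h2, hF2 w0 hw0A]
          exact h3
      · rcases hRpar z hz h1 h2 with ⟨hn1, hn2⟩ | ⟨P, hPm, hP1, hP2, he1, he2⟩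
        · exact Or.inl ⟨hn1, by rw [hFn z h1 h2]; exact hn2⟩
        · refine Or.inr ⟨P, hPm, he1, ?_⟩
          rw [hFn z h1 h2, hFn P hP1 hP2]
          exact he2
  refine iso'_of_parent_map hbij hpar ?_
  intro z hz hp
  by_cases h1 : z ∈ t.aboveSet a₁
  · by_cases hzb : z = a₁
    · rw [hF1 z h1, hzb, hM₁a, hcol₁, ← hzb]
    · obtain ⟨w0, hw0⟩ := subF_parent_ne_none ht h1 hzb
      have hsubp : (subF t a₁).parent z = some w0 := by
        show (if _ then _ else _) = _
        rw [if_pos ⟨h1, hzb⟩, hw0]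
      rw [hF1 z h1]
      exact hM₁.2.2 z h1 (by rw [hsubp]; rfl)
  · by_cases h2 : z ∈ t.aboveSet a₂
    · by_cases hzb : z = a₂
      · rw [hF2 z h2, hzb, hM₂a, ← hcol₁, ← hzb]
      · obtain ⟨w0, hw0⟩ := subF_parent_ne_none ht h2 hzb
        have hsubp : (subF t a₂).parent z = some w0 := by
          show (if _ then _ else _) = _
          rw [if_pos ⟨h2, hzb⟩, hw0]
        rw [hF2 z h2]
        exact hM₂.2.2 z h2 (by rw [hsubp]; rfl)
    · rw [hFn z h1 h2]
      exact hRcol z hz h1 h2 hp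

end

section


variable {n : ℕ} {s t : PForest n} {v w : ℕ} {p q : Fin n}

lemma Iso'.parent_none {s t : PForest n} {f : ℕ → ℕ} (htw : t.WF) (h : Iso' s t f)
    {z : ℕ} (hz : z ∈ s.verts) (hp : s.parent z = none) : t.parent (f z) = none := by
  cases hq : t.parent (f z) with
  | none => rfl
  | some q =>
    have hqm := (htw.1 _ _ hq).2
    obtain ⟨w, hw, rfl⟩ := h.1.2.2 (Finset.mem_coe.mpr hqm)
    have := (h.2.1 z hz w (Finset.mem_coe.mp hw)).mpr hq
    rw [hp] at this
    exact absurd this (by simp)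

lemma anc_root_eq (hs1 : s.IsTree) {b : ℕ} (h : s.Anc (root s) b) : b = root s := by
  rcases Relation.ReflTransGen.cases_head h with e | ⟨c, hc, h2⟩
  · exact e.symm
  · have : s.parent (root s) = some c := hc
    rw [parent_root hs1] at this
    exact absurd this (by simp)

lemma dblinj : Function.Injective (fun c : ℕ => 2*c) := by
  intro a b h
  have h2 : 2*a = 2*b := h
  omega

lemma oddinj : Function.Injective (fun c : ℕ => 2*c+1) := by
  intro a b h
  have h2 : 2*a+1 = 2*b+1 := h
  omega

lemma key_caseA (hs : s.WF) (hs1 : s.IsTree) (ht : t.WF) (ht1 : t.IsTree)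
    (hv : v ∈ t.verts) (hw : w ∈ t.verts) {Φ : ℕ → ℕ}
    (hΦ : Iso' (graft s t v p) (graft s t w q) Φ)
    (htop : Φ (2*root s+1) = 2*root s+1) :
    q = p ∧ ∃ k, Iso' t t k ∧ k v = w := by
  have hu : (graft s t v p).WF := graft_wf hs ht hv
  have hu' : (graft s t w q).WF := graft_wf hs ht hw
  have htopm : 2*root s+1 ∈ (graft s t v p).verts := graft_mem_odd (root_mem hs1)
  have hptop : (graft s t v p).parent (2*root s+1) = some (2*v) :=
    graft_parent_odd_root (parent_root hs1) (root_mem hs1)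
  have hptop' : (graft s t w q).parent (2*root s+1) = some (2*w) :=
    graft_parent_odd_root (parent_root hs1) (root_mem hs1)
  have hqp : q = p := by
    have h1 := hΦ.2.2 _ htopm (by rw [hptop]; rfl)
    rw [htop] at h1
    rw [graft_color_odd_root (parent_root hs1), graft_color_odd_root (parent_root hs1)] at h1
    exact h1
  have hoddimg : ((graft s t v p).aboveSet (2*root s+1)).image Φ
      = (graft s t w q).aboveSet (2*root s+1) := by
    have h1 := hΦ.above_eq hu hu' htopm
    rwa [htop] at h1
  have heven : ∀ a ∈ t.verts, ∃ a', a' ∈ t.verts ∧ Φ (2*a) = 2*a' := by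
    intro a ha
    have hmem : Φ (2*a) ∈ (graft s t w q).verts := hΦ.maps (graft_mem_even ha)
    rcases graft_mem_elim hmem with ⟨a', ha', he⟩ | ⟨b', hb', he⟩
    · exact ⟨a', ha', he⟩
    · exfalso
      have hmem2 : Φ (2*a) ∈ (graft s t w q).aboveSet (2*root s+1) := by
        rw [graft_above_top hs hs1, he]
        exact Finset.mem_image.mpr ⟨b', hb', rfl⟩
      rw [← hoddimg] at hmem2
      obtain ⟨ζ, hζ, hζe⟩ := Finset.mem_image.mp hmem2
      rw [graft_above_top hs hs1] at hζ
      obtain ⟨b0, hb0, rfl⟩ := Finset.mem_image.mp hζ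
      have h3 : 2*b0+1 = 2*a := hΦ.1.2.1 (Finset.mem_coe.mpr (graft_mem_odd hb0))
        (Finset.mem_coe.mpr (graft_mem_even ha)) hζe
      omega
  set k := fun a => Φ (2*a) / 2 with hk
  have hke : ∀ a ∈ t.verts, Φ (2*a) = 2 * k a ∧ k a ∈ t.verts := by
    intro a ha
    obtain ⟨a', ha', he⟩ := heven a ha
    have h2 : k a = a' := by simp only [hk]; omega
    exact ⟨by rw [he, h2], h2 ▸ ha'⟩
  have hbijk : Set.BijOn k ↑t.verts ↑t.verts := by
    refine ⟨?_, ?_, ?_⟩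
    · intro a ha; exact (hke a (Finset.mem_coe.mp ha)).2
    · intro a ha a' ha' he
      have h1 : Φ (2*a) = Φ (2*a') := by
        rw [(hke a (Finset.mem_coe.mp ha)).1, (hke a' (Finset.mem_coe.mp ha')).1, he]
      have := hΦ.1.2.1 (Finset.mem_coe.mpr (graft_mem_even (Finset.mem_coe.mp ha)))
        (Finset.mem_coe.mpr (graft_mem_even (Finset.mem_coe.mp ha'))) h1
      omega
    · intro b hb
      have hbm : b ∈ t.verts := Finset.mem_coe.mp hb
      obtain ⟨ζ, hζ, hζe⟩ := hΦ.1.2.2 (Finset.mem_coe.mpr (graft_mem_even hbm))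
      rcases graft_mem_elim (Finset.mem_coe.mp hζ) with ⟨a0, ha0, rfl⟩ | ⟨b0, hb0, rfl⟩
      · refine ⟨a0, Finset.mem_coe.mpr ha0, ?_⟩
        have := (hke a0 ha0).1
        rw [hζe] at this
        simp only [hk]
        omega
      · exfalso
        have hmem2 : Φ (2*b0+1) ∈ (graft s t w q).aboveSet (2*root s+1) := by
          rw [← hoddimg]
          refine Finset.mem_image.mpr ⟨2*b0+1, ?_, rfl⟩
          rw [graft_above_top hs hs1]
          exact Finset.mem_image.mpr ⟨b0, hb0, rfl⟩
        rw [graft_above_top hs hs1, hζe] at hmem2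
        obtain ⟨b1, hb1, he1⟩ := Finset.mem_image.mp hmem2
        omega
  have hpar : ∀ a ∈ t.verts, (t.parent a = none ∧ t.parent (k a) = none) ∨
      (∃ P ∈ t.verts, t.parent a = some P ∧ t.parent (k a) = some (k P)) := by
    intro a ha
    obtain ⟨hka, hkam⟩ := hke a ha
    cases hp : t.parent a with
    | none =>
      refine Or.inl ⟨rfl, ?_⟩
      have h1 : (graft s t v p).parent (2*a) = none := by
        rw [graft_parent_even, hp]; rfl
      have h2 := hΦ.parent_none hu' (graft_mem_even ha) h1
      rw [hka, graft_parent_even] at h2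
      cases hq : t.parent (k a) with
      | none => rfl
      | some c => rw [hq] at h2; exact absurd h2 (by simp)
    | some b =>
      have hbm : b ∈ t.verts := (ht.1 _ _ hp).2
      have h1 : (graft s t v p).parent (2*a) = some (2*b) := by
        rw [graft_parent_even, hp]; rfl
      have h2 := hΦ.parent_some hu (graft_mem_even ha) h1
      rw [hka, (hke b hbm).1, graft_parent_even] at h2
      refine Or.inr ⟨b, hbm, rfl, ?_⟩
      cases hq : t.parent (k a) with
      | none => rw [hq] at h2; exact absurd h2 (by simp)
      | some c =>
        rw [hq] at h2
        simp only [Option.map_some] at h2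
        injection h2 with e
        have h3 : c = k b := by omega
        rw [h3]
  have hcol : ∀ a ∈ t.verts, (t.parent a).isSome → t.color (k a) = t.color a := by
    intro a ha hsome
    have hsome2 : ((graft s t v p).parent (2*a)).isSome := by
      rw [graft_parent_even]
      obtain ⟨b, hb⟩ := Option.isSome_iff_exists.mp hsome
      rw [hb]; rfl
    have h1 := hΦ.2.2 (2*a) (graft_mem_even ha) hsome2
    rw [(hke a ha).1, graft_color_even, graft_color_even] at h1
    exact h1
  have hkv : k v = w := by
    have h2 := hΦ.parent_some hu htopm hptop
    rw [htop, hptop'] at h2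
    injection h2 with e
    have := (hke v hv).1
    simp only [hk] at *
    omega
  exact ⟨hqp, k, iso'_of_parent_map hbijk hpar hcol, hkv⟩

lemma image_top_spec (hs : s.WF) (hs1 : s.IsTree) (ht : t.WF) (ht1 : t.IsTree)
    (hv : v ∈ t.verts) (hw : w ∈ t.verts) {Φ : ℕ → ℕ}
    (hΦ : Iso' (graft s t v p) (graft s t w q) Φ)
    (hne : Φ (2*root s+1) ≠ 2*root s+1) :
    ∃ a y, a ∈ t.verts ∧ Φ (2*root s+1) = 2*a ∧ ¬ t.Anc w a ∧ t.parent a = some y ∧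
      Φ (2*v) = 2*y ∧ (t.aboveSet a).card = s.verts.card := by
  have hu : (graft s t v p).WF := graft_wf hs ht hv
  have hu' : (graft s t w q).WF := graft_wf hs ht hw
  have htopm : 2*root s+1 ∈ (graft s t v p).verts := graft_mem_odd (root_mem hs1)
  have hptop : (graft s t v p).parent (2*root s+1) = some (2*v) :=
    graft_parent_odd_root (parent_root hs1) (root_mem hs1)
  have hcard1 : ((graft s t w q).aboveSet (Φ (2*root s+1))).card = s.verts.card := by
    have h1 := hΦ.above_eq hu hu' htopm
    have h2 : ((graft s t v p).aboveSet (2*root s+1)).card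
        = ((graft s t w q).aboveSet (Φ (2*root s+1))).card := by
      rw [← h1, Finset.card_image_of_injOn (hΦ.1.2.1.mono
        (by exact_mod_cast above_subset_verts))]
    rw [← h2, graft_above_top hs hs1,
      Finset.card_image_of_injective _ oddinj]
  have hmem : Φ (2*root s+1) ∈ (graft s t w q).verts := hΦ.maps htopm
  rcases graft_mem_elim hmem with ⟨a, ha, he⟩ | ⟨b, hb, he⟩
  · -- even case
    have hnAnc : ¬ t.Anc w a := by
      intro hAnc
      have h3 := hcard1
      rw [he, graft_above_even_full hs hs1 ha hAnc] at h3
      have hdis : Disjoint ((t.aboveSet a).image (fun c => 2*c))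
          (s.verts.image (fun b => 2*b+1)) := by
        rw [Finset.disjoint_left]
        rintro x hx hy
        simp only [Finset.mem_image] at hx hy
        obtain ⟨c, _, rfl⟩ := hx
        obtain ⟨b0, _, e0⟩ := hy
        omega
      rw [Finset.card_union_of_disjoint hdis,
        Finset.card_image_of_injective _ dblinj,
        Finset.card_image_of_injective _ oddinj] at h3
      have : a ∈ t.aboveSet a := self_mem_above ha
      have := Finset.card_pos.mpr ⟨a, this⟩
      omega
    have hcard2 : (t.aboveSet a).card = s.verts.card := by
      have h3 := hcard1
      rw [he, graft_above_even ha hnAnc,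
        Finset.card_image_of_injective _ dblinj] at h3
      exact h3
    cases hpa : t.parent a with
    | none =>
      exfalso
      have h2 := hΦ.parent_some hu htopm hptop
      rw [he, graft_parent_even, hpa] at h2
      exact absurd h2 (by simp)
    | some y =>
      have h2 := hΦ.parent_some hu htopm hptop
      rw [he, graft_parent_even, hpa] at h2
      simp only [Option.map_some] at h2
      injection h2 with e
      exact ⟨a, y, ha, he, hnAnc, hpa, e.symm, hcard2⟩
  · -- odd case: contradiction
    exfalso
    have h3 := hcard1
    rw [he, graft_above_odd hb,
      Finset.card_image_of_injective _ oddinj] at h3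
    have hsub : s.aboveSet b ⊆ s.verts := above_subset_verts
    have heq : s.aboveSet b = s.verts := Finset.eq_of_subset_of_card_le hsub (le_of_eq h3.symm)
    have hroot : root s ∈ s.aboveSet b := heq ▸ root_mem hs1
    have : b = root s := anc_root_eq hs1 (mem_above_iff.mp hroot).2
    rw [he, this] at hne
    exact hne rfl

lemma key_caseB_tau (hs : s.WF) (hs1 : s.IsTree) (ht : t.WF) (ht1 : t.IsTree)
    (hv : v ∈ t.verts) (hw : w ∈ t.verts) {Φ : ℕ → ℕ}
    (hΦ : Iso' (graft s t v p) (graft s t w q) Φ)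
    {a a' : ℕ} (ha : a ∈ t.verts) (ha' : a' ∈ t.verts)
    (hxa : Φ (2*a) = 2*root s+1) (hx : Φ (2*root s+1) = 2*a')
    (hva : ¬ t.Anc v a) (hwa' : ¬ t.Anc w a') :
    Iso' (cutF t (t.aboveSet a)) (cutF t (t.aboveSet a')) (fun z => Φ (2*z) / 2) := by
  have hu : (graft s t v p).WF := graft_wf hs ht hv
  have hu' : (graft s t w q).WF := graft_wf hs ht hw
  have htopm : 2*root s+1 ∈ (graft s t v p).verts := graft_mem_odd (root_mem hs1)
  have ham : 2*a ∈ (graft s t v p).verts := graft_mem_even ha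
  have f1 : ((t.aboveSet a).image (fun c => 2*c)).image Φ
      = s.verts.image (fun b => 2*b+1) := by
    have h1 := hΦ.above_eq hu hu' ham
    rw [hxa, graft_above_top hs hs1, graft_above_even ha hva] at h1
    exact h1
  have f2 : (s.verts.image (fun b => 2*b+1)).image Φ
      = (t.aboveSet a').image (fun c => 2*c) := by
    have h1 := hΦ.above_eq hu hu' htopm
    rw [hx, graft_above_top hs hs1, graft_above_even ha' hwa'] at h1
    exact h1
  set τ := fun z => Φ (2*z) / 2 with hτdef
  have hτ : ∀ z, z ∈ t.verts → z ∉ t.aboveSet a →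
      Φ (2*z) = 2 * τ z ∧ τ z ∈ t.verts ∧ τ z ∉ t.aboveSet a' := by
    intro z hzm hzA
    have hmem : Φ (2*z) ∈ (graft s t w q).verts := hΦ.maps (graft_mem_even hzm)
    rcases graft_mem_elim hmem with ⟨z', hz', he⟩ | ⟨b', hb', he⟩
    · have hτz : τ z = z' := by simp only [hτdef]; omega
      refine ⟨by rw [he, hτz], hτz ▸ hz', ?_⟩
      rw [hτz]
      intro hmem'
      have h2 : 2*z' ∈ (t.aboveSet a').image (fun c => 2*c) :=
        Finset.mem_image.mpr ⟨z', hmem', rfl⟩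
      rw [← f2] at h2
      obtain ⟨ζ, hζ, hζe⟩ := Finset.mem_image.mp h2
      obtain ⟨b0, hb0, rfl⟩ := Finset.mem_image.mp hζ
      rw [← he] at hζe
      have h3 : 2*b0+1 = 2*z := hΦ.1.2.1 (Finset.mem_coe.mpr (graft_mem_odd hb0))
        (Finset.mem_coe.mpr (graft_mem_even hzm)) hζe
      omega
    · exfalso
      have h2 : Φ (2*z) ∈ s.verts.image (fun b => 2*b+1) := by
        rw [he]; exact Finset.mem_image.mpr ⟨b', hb', rfl⟩
      rw [← f1] at h2
      obtain ⟨ζ, hζ, hζe⟩ := Finset.mem_image.mp h2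
      obtain ⟨c0, hc0, rfl⟩ := Finset.mem_image.mp hζ
      have h3 : 2*c0 = 2*z := hΦ.1.2.1
        (Finset.mem_coe.mpr (graft_mem_even (above_subset_verts hc0)))
        (Finset.mem_coe.mpr (graft_mem_even hzm)) hζe
      have : c0 = z := by omega
      exact hzA (this ▸ hc0)
  have hbij : Set.BijOn τ ↑(cutF t (t.aboveSet a)).verts ↑(cutF t (t.aboveSet a')).verts := by
    refine ⟨?_, ?_, ?_⟩
    · intro z hz
      have hz' := Finset.mem_sdiff.mp (Finset.mem_coe.mp hz)
      obtain ⟨-, h2, h3⟩ := hτ z hz'.1 hz'.2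
      exact Finset.mem_coe.mpr (Finset.mem_sdiff.mpr ⟨h2, h3⟩)
    · intro z hz z2 hz2 he
      have hz' := Finset.mem_sdiff.mp (Finset.mem_coe.mp hz)
      have hz2' := Finset.mem_sdiff.mp (Finset.mem_coe.mp hz2)
      have h1 : Φ (2*z) = Φ (2*z2) := by
        rw [(hτ z hz'.1 hz'.2).1, (hτ z2 hz2'.1 hz2'.2).1, he]
      have := hΦ.1.2.1 (Finset.mem_coe.mpr (graft_mem_even hz'.1))
        (Finset.mem_coe.mpr (graft_mem_even hz2'.1)) h1
      omega
    · intro x hx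
      have hx' := Finset.mem_sdiff.mp (Finset.mem_coe.mp hx)
      obtain ⟨ζ, hζ, hζe⟩ := hΦ.1.2.2 (Finset.mem_coe.mpr (graft_mem_even hx'.1))
      rcases graft_mem_elim (Finset.mem_coe.mp hζ) with ⟨z0, hz0, rfl⟩ | ⟨b0, hb0, rfl⟩
      · have hz0A : z0 ∉ t.aboveSet a := by
          intro hmem
          have h2 : Φ (2*z0) ∈ s.verts.image (fun b => 2*b+1) := by
            rw [← f1]
            exact Finset.mem_image.mpr ⟨2*z0, Finset.mem_image.mpr ⟨z0, hmem, rfl⟩, rfl⟩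
          rw [hζe] at h2
          obtain ⟨b1, hb1, he1⟩ := Finset.mem_image.mp h2
          omega
        refine ⟨z0, Finset.mem_coe.mpr (Finset.mem_sdiff.mpr ⟨hz0, hz0A⟩), ?_⟩
        have := (hτ z0 hz0 hz0A).1
        rw [hζe] at this
        simp only [hτdef]
        omega
      · exfalso
        have h2 : Φ (2*b0+1) ∈ (t.aboveSet a').image (fun c => 2*c) := by
          rw [← f2]
          exact Finset.mem_image.mpr ⟨2*b0+1, Finset.mem_image.mpr ⟨b0, hb0, rfl⟩, rfl⟩
        rw [hζe] at h2
        obtain ⟨c1, hc1, he1⟩ := Finset.mem_image.mp h2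
        have he2 : 2*c1 = 2*x := he1
        have hcx : c1 = x := by omega
        exact hx'.2 (hcx ▸ hc1)
  have hpar : ∀ z ∈ (cutF t (t.aboveSet a)).verts,
      ((cutF t (t.aboveSet a)).parent z = none ∧
        (cutF t (t.aboveSet a')).parent (τ z) = none) ∨
      (∃ P ∈ (cutF t (t.aboveSet a)).verts, (cutF t (t.aboveSet a)).parent z = some P ∧
        (cutF t (t.aboveSet a')).parent (τ z) = some (τ P)) := by
    intro z hzc
    have hz' := Finset.mem_sdiff.mp hzc
    obtain ⟨hτz, hτm, hτA⟩ := hτ z hz'.1 hz'.2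
    have hcz : ∀ o, t.parent z = o → (cutF t (t.aboveSet a)).parent z = o := by
      intro o ho
      show (if _ then _ else _) = o
      rw [if_pos (Finset.mem_sdiff.mpr hz'), ho]
    have hcz' : ∀ o, t.parent (τ z) = o → (cutF t (t.aboveSet a')).parent (τ z) = o := by
      intro o ho
      show (if _ then _ else _) = o
      rw [if_pos (Finset.mem_sdiff.mpr ⟨hτm, hτA⟩), ho]
    cases hp : t.parent z with
    | none =>
      refine Or.inl ⟨hcz none hp, ?_⟩
      have h1 : (graft s t v p).parent (2*z) = none := by
        rw [graft_parent_even, hp]; rfl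
      have h2 := hΦ.parent_none hu' (graft_mem_even hz'.1) h1
      rw [hτz, graft_parent_even] at h2
      refine hcz' none ?_
      cases hq : t.parent (τ z) with
      | none => rfl
      | some c => rw [hq] at h2; exact absurd h2 (by simp)
    | some w0 =>
      have hw0 : w0 ∈ t.verts \ t.aboveSet a :=
        cut_parent_closed ht (Finset.mem_sdiff.mpr hz') hp
      have hw0' := Finset.mem_sdiff.mp hw0
      obtain ⟨hτw0, hτw0m, hτw0A⟩ := hτ w0 hw0'.1 hw0'.2
      have h1 : (graft s t v p).parent (2*z) = some (2*w0) := by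
        rw [graft_parent_even, hp]; rfl
      have h2 := hΦ.parent_some hu (graft_mem_even hz'.1) h1
      rw [hτz, hτw0, graft_parent_even] at h2
      refine Or.inr ⟨w0, hw0, hcz _ hp, hcz' _ ?_⟩
      cases hq : t.parent (τ z) with
      | none => rw [hq] at h2; exact absurd h2 (by simp)
      | some c =>
        rw [hq] at h2
        simp only [Option.map_some] at h2
        injection h2 with e
        have h3 : c = τ w0 := by omega
        rw [h3]
  refine iso'_of_parent_map hbij hpar ?_
  intro z hzc hp
  have hz' := Finset.mem_sdiff.mp hzc
  obtain ⟨hτz, hτm, hτA⟩ := hτ z hz'.1 hz'.2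
  have hp' : (t.parent z).isSome := by
    have he : (cutF t (t.aboveSet a)).parent z = t.parent z := by
      show (if _ then _ else _) = _
      rw [if_pos (Finset.mem_sdiff.mpr hz')]
    rwa [he] at hp
  have hsome2 : ((graft s t v p).parent (2*z)).isSome := by
    rw [graft_parent_even]
    obtain ⟨b, hb⟩ := Option.isSome_iff_exists.mp hp'
    rw [hb]; rfl
  have h1 := hΦ.2.2 (2*z) (graft_mem_even hz'.1) hsome2
  rw [hτz, graft_color_even, graft_color_even] at h1
  exact h1

end

section


variable {n : ℕ}

lemma key_lemma : ∀ (N : ℕ) (s t : PForest n) (v w : ℕ) (p q : Fin n),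
    s.WF → s.IsTree → t.WF → t.IsTree → t.verts.card ≤ N → v ∈ t.verts → w ∈ t.verts →
    (∃ Φ, Iso' (graft s t v p) (graft s t w q) Φ) →
    q = p ∧ ∃ k, Iso' t t k ∧ k v = w := by
  intro N
  induction N with
  | zero =>
    intro s t v w p q _ _ _ _ hcard hv _ _
    have := Finset.card_pos.mpr ⟨v, hv⟩
    omega
  | succ N ih =>
    intro s t v w p q hs hs1 ht ht1 hcard hv hw hEx
    obtain ⟨Φ, hΦ⟩ := hEx
    by_cases htop : Φ (2*root s+1) = 2*root s+1
    · exact key_caseA hs hs1 ht ht1 hv hw hΦ htop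
    · obtain ⟨a', y', ha', hx, hwa', hpa', hΦv, hca'⟩ :=
        image_top_spec hs hs1 ht ht1 hv hw hΦ htop
      have hu : (graft s t v p).WF := graft_wf hs ht hv
      have hu' : (graft s t w q).WF := graft_wf hs ht hw
      have htopm : 2*root s+1 ∈ (graft s t v p).verts := graft_mem_odd (root_mem hs1)
      have htopm' : 2*root s+1 ∈ (graft s t w q).verts := graft_mem_odd (root_mem hs1)
      have hΨ := hΦ.symm hu'
      set Ψ := Function.invFunOn Φ ↑(graft s t v p).verts with hΨdef
      have hinv := hΦ.invOn
      have hΨtop : Ψ (2*root s+1) ≠ 2*root s+1 := by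
        intro e
        have h2 : Φ (Ψ (2*root s+1)) = 2*root s+1 := hinv.2 (Finset.mem_coe.mpr htopm')
        rw [e] at h2
        exact htop h2
      obtain ⟨a, y, ha, hxa0, hva, hpa, hΨw, hca⟩ :=
        image_top_spec hs hs1 ht ht1 hw hv hΨ hΨtop
      have hΦa : Φ (2*a) = 2*root s+1 := by
        rw [← hxa0]; exact hinv.2 (Finset.mem_coe.mpr htopm')
      have hΦy : Φ (2*y) = 2*w := by
        have h2 : Φ (Ψ (2*w)) = 2*w := hinv.2 (Finset.mem_coe.mpr (graft_mem_even hw))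
        rw [hΨw] at h2; exact h2
      have hym : y ∈ t.verts := (ht.1 _ _ hpa).2
      have hy'm : y' ∈ t.verts := (ht.1 _ _ hpa').2
      have hcq : t.color a = q := by
        have hsome : ((graft s t v p).parent (2*a)).isSome := by
          rw [graft_parent_even, hpa]; rfl
        have h1 := hΦ.2.2 (2*a) (graft_mem_even ha) hsome
        rw [hΦa, graft_color_odd_root (parent_root hs1), graft_color_even] at h1
        exact h1.symm
      have hc'p : t.color a' = p := by
        have hsome : ((graft s t v p).parent (2*root s+1)).isSome := by
          rw [graft_parent_odd_root (parent_root hs1) (root_mem hs1)]; rfl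
        have h1 := hΦ.2.2 _ htopm hsome
        rw [hx, graft_color_even, graft_color_odd_root (parent_root hs1)] at h1
        exact h1
      have hτiso := key_caseB_tau hs hs1 ht ht1 hv hw hΦ ha ha' hΦa hx hva hwa'
      have hτv : Φ (2*v)/2 = y' := by rw [hΦv]; omega
      have hτy : Φ (2*y)/2 = w := by rw [hΦy]; omega
      have hanr : a ≠ root t := by
        intro e; rw [e, parent_root ht1] at hpa; exact absurd hpa (by simp)
      have ha'nr : a' ≠ root t := by
        intro e; rw [e, parent_root ht1] at hpa'; exact absurd hpa' (by simp)
      have hrwf : (cutF t (t.aboveSet a)).WF := cutF_wf ht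
      have hr1 : (cutF t (t.aboveSet a)).IsTree := cutF_istree ht ht1 ha hanr
      have hvA : v ∉ t.aboveSet a := fun hm => hva (mem_above_iff.mp hm).2
      have hvr : v ∈ (cutF t (t.aboveSet a)).verts := Finset.mem_sdiff.mpr ⟨hv, hvA⟩
      have hyr : y ∈ (cutF t (t.aboveSet a)).verts :=
        Finset.mem_sdiff.mpr ⟨hym, parent_not_mem_above ht hpa⟩
      -- φ₁ : subF t a ≅ s
      have hsub_u : Iso' (subF (graft s t v p) (2*a))
          (subF (graft s t w q) (2*root s+1)) Φ := by
        have h1 := hΦ.subF_iso hu hu' (graft_mem_even ha)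
        rwa [hΦa] at h1
      have hsubA := iso_subF_even (s := s) (p := p) ht ha hva
      have hstop' := iso_s_subtop (t := t) (v := w) (p := q) hs hs1
      have hsubwfa : (subF t a).WF := subF_wf ht
      have hφ₁ := Iso'.comp hsubwfa (Iso'.comp hsubwfa hsubA hsub_u)
        (hstop'.symm (subF_wf hu'))
      -- φ' : s ≅ subF t a'
      have hstop := iso_s_subtop (t := t) (v := v) (p := p) hs hs1
      have hsub_u2 : Iso' (subF (graft s t v p) (2*root s+1))
          (subF (graft s t w q) (2*a')) Φ := by
        have h1 := hΦ.subF_iso hu hu' htopm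
        rwa [hx] at h1
      have hsubA' := iso_subF_even (s := s) (v := w) (p := q) ht ha' hwa'
      have hφ' := Iso'.comp hs (Iso'.comp hs hstop hsub_u2) (hsubA'.symm (subF_wf hu'))
      -- assembled iso t ≅ graft s r y q
      have hasm := assemble_iso ht ht1 hs hs1 ha hpa hφ₁
      rw [hcq] at hasm
      -- chain for IH
      have e1 := iso_graftcut_id (p := p) hs ht ha hva
      have e2 : Iso' (cutF (graft s t v p) ((graft s t v p).aboveSet (2*a)))
          (cutF (graft s t w q) ((graft s t w q).aboveSet (2*root s+1))) Φ := by
        have h1 := hΦ.cutF_iso hu hu' (graft_mem_even ha)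
        rwa [hΦa] at h1
      have e3 := iso_t_cuttop (t := t) (v := w) (p := q) hs hs1
      have e3s := e3.symm (cutF_wf hu')
      have hgwf : (graft s (cutF t (t.aboveSet a)) v p).WF := graft_wf hs hrwf hvr
      have chain := Iso'.comp hgwf (Iso'.comp hgwf (Iso'.comp hgwf e1 e2) e3s) hasm
      have hscard : 1 ≤ s.verts.card := Finset.card_pos.mpr ⟨root s, root_mem hs1⟩
      have haboveone : 1 ≤ (t.aboveSet a).card := Finset.card_pos.mpr ⟨a, self_mem_above ha⟩
      have hrcard : (cutF t (t.aboveSet a)).verts.card ≤ N := by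
        have h1 : (cutF t (t.aboveSet a)).verts.card
            = t.verts.card - (t.aboveSet a).card := cutF_card above_subset_verts
        omega
      obtain ⟨hqp, k₀, hk₀, hk₀v⟩ := ih s (cutF t (t.aboveSet a)) v y p q hs hs1
        hrwf hr1 hrcard hvr hyr ⟨_, chain⟩
      obtain ⟨k', hk', hk'v, hk'y⟩ := swap_lemma _ (cutF t (t.aboveSet a)) hrwf hr1
        le_rfl hk₀ hvr hk₀v
      refine ⟨hqp, ?_⟩
      have hM := Iso'.comp hsubwfa hφ₁ hφ'
      have hR := Iso'.comp hrwf hk' hτiso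
      have hRy : ((fun z => Φ (2*z)/2) ∘ k') y = y' := by
        show Φ (2*(k' y))/2 = y'
        rw [hk'y]
        exact hτv
      have hcol : t.color a' = t.color a := by rw [hc'p, hcq, hqp]
      have hglue := branch_replace_iso ht ha ha' hpa hpa' hM hR hRy hcol
      refine ⟨_, hglue, ?_⟩
      simp only [if_neg hvA]
      show Φ (2*(k' v))/2 = w
      rw [hk'v]
      exact hτy

end

section


variable {n : ℕ} {s t t' u : PForest n}

lemma isIsoFn_refl (t : PForest n) : IsIsoFn t t (Equiv.refl _) := by
  constructor
  · intro v w; rfl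
  · intro v _; rfl

lemma IsIsoFn.parent_some' {e : {x // x ∈ t.verts} ≃ {x // x ∈ t'.verts}}
    (ht : t.WF) (he : IsIsoFn t t' e) {v : {x // x ∈ t.verts}} {w : ℕ}
    (hp : t.parent (v : ℕ) = some w) :
    t'.parent ((e v : ℕ)) = some ((e ⟨w, (ht.1 _ _ hp).2⟩ : ℕ)) :=
  (he.1 v ⟨w, (ht.1 _ _ hp).2⟩).mp hp

lemma IsIsoFn.isSome' {e : {x // x ∈ t.verts} ≃ {x // x ∈ t'.verts}}
    (ht : t.WF) (he : IsIsoFn t t' e) {v : {x // x ∈ t.verts}}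
    (hp : (t.parent (v : ℕ)).isSome) : (t'.parent ((e v : ℕ))).isSome := by
  obtain ⟨w, hw⟩ := Option.isSome_iff_exists.mp hp
  rw [he.parent_some' ht hw]
  rfl

lemma IsIsoFn.trans' {e f : {x // x ∈ t.verts} ≃ {x // x ∈ t.verts}}
    (ht : t.WF) (he : IsIsoFn t t e) (hf : IsIsoFn t t f) :
    IsIsoFn t t (e.trans f) := by
  constructor
  · intro v w
    rw [he.1 v w]
    exact hf.1 (e v) (e w)
  · intro v hp
    have h1 := he.2 v hp
    have h2 := hf.2 (e v) (he.isSome' ht hp)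
    simp only [Equiv.trans_apply]
    rw [h2, h1]

lemma IsIsoFn.symm' {e : {x // x ∈ t.verts} ≃ {x // x ∈ t.verts}}
    (ht : t.WF) (he : IsIsoFn t t e) : IsIsoFn t t e.symm := by
  constructor
  · intro v w
    have := he.1 (e.symm v) (e.symm w)
    rw [Equiv.apply_symm_apply, Equiv.apply_symm_apply] at this
    exact this.symm
  · intro v hp
    have hps : (t.parent ((e.symm v : ℕ))).isSome := by
      obtain ⟨w, hw⟩ := Option.isSome_iff_exists.mp hp
      have hwm : w ∈ t.verts := (ht.1 _ _ hw).2
      have := (he.1 (e.symm v) (e.symm ⟨w, hwm⟩)).mpr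
      rw [Equiv.apply_symm_apply, Equiv.apply_symm_apply] at this
      rw [this hw]
      rfl
    have := he.2 (e.symm v) hps
    rw [Equiv.apply_symm_apply] at this
    exact this.symm

/-- value-explicit conversion from subtype-equiv isomorphisms. -/
lemma isIsoFn_toIso' {e : {x // x ∈ t.verts} ≃ {x // x ∈ t'.verts}}
    (he : IsIsoFn t t' e) :
    Iso' t t' (fun x => if hx : x ∈ t.verts then (e ⟨x, hx⟩ : ℕ) else x) := by
  refine ⟨⟨?_, ?_, ?_⟩, ?_, ?_⟩
  · intro x hx
    have hx' : x ∈ t.verts := Finset.mem_coe.mp hx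
    simp only [hx', dif_pos]
    exact (e ⟨x, hx'⟩).2
  · intro a ha b hb hab
    have ha' : a ∈ t.verts := Finset.mem_coe.mp ha
    have hb' : b ∈ t.verts := Finset.mem_coe.mp hb
    simp only [ha', hb', dif_pos] at hab
    have := e.injective (Subtype.ext hab)
    exact congrArg Subtype.val this
  · intro y hy
    have hy' : y ∈ t'.verts := Finset.mem_coe.mp hy
    refine ⟨(e.symm ⟨y, hy'⟩ : ℕ), Finset.mem_coe.mpr (e.symm ⟨y, hy'⟩).2, ?_⟩
    simp only [(e.symm ⟨y, hy'⟩).2, dif_pos]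
    rw [show (⟨(e.symm ⟨y, hy'⟩ : ℕ), (e.symm ⟨y, hy'⟩).2⟩ : {x // x ∈ t.verts})
      = e.symm ⟨y, hy'⟩ from rfl]
    simp
  · intro a ha b hb
    simp only [ha, hb, dif_pos]
    exact he.1 ⟨a, ha⟩ ⟨b, hb⟩
  · intro a ha hp
    simp only [ha, dif_pos]
    exact he.2 ⟨a, ha⟩ hp

/-- value-explicit conversion to subtype-equiv isomorphisms. -/
lemma iso'_toIsIsoFn {f : ℕ → ℕ} (h : Iso' t t' f) :
    ∃ e : {x // x ∈ t.verts} ≃ {x // x ∈ t'.verts},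
      IsIsoFn t t' e ∧ ∀ x (hx : x ∈ t.verts), (e ⟨x, hx⟩ : ℕ) = f x := by
  have hbij : Function.Bijective (fun x : {x // x ∈ t.verts} =>
      (⟨f x, h.maps x.2⟩ : {x // x ∈ t'.verts})) := by
    constructor
    · rintro ⟨a, ha⟩ ⟨b, hb⟩ hab
      simp only [Subtype.mk.injEq] at hab
      exact Subtype.ext (h.1.2.1 ha hb hab)
    · rintro ⟨y, hy⟩
      obtain ⟨x, hx, rfl⟩ := h.1.2.2 hy
      exact ⟨⟨x, hx⟩, rfl⟩
  refine ⟨Equiv.ofBijective _ hbij, ⟨?_, ?_⟩, ?_⟩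
  · rintro ⟨a, ha⟩ ⟨b, hb⟩
    exact h.2.1 a ha b hb
  · rintro ⟨a, ha⟩ hp
    exact h.2.2 a ha hp
  · intro x hx
    rfl

lemma iso'_congr {f f' : ℕ → ℕ} (h : Iso' t t' f)
    (he : ∀ x ∈ t.verts, f x = f' x) : Iso' t t' f' := by
  refine ⟨⟨?_, ?_, ?_⟩, ?_, ?_⟩
  · intro x hx
    rw [← he x (Finset.mem_coe.mp hx)]
    exact h.1.1 hx
  · intro a ha b hb hab
    rw [← he a (Finset.mem_coe.mp ha), ← he b (Finset.mem_coe.mp hb)] at hab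
    exact h.1.2.1 ha hb hab
  · intro y hy
    obtain ⟨x, hx, rfl⟩ := h.1.2.2 hy
    exact ⟨x, hx, (he x (Finset.mem_coe.mp hx)).symm⟩
  · intro a ha b hb
    rw [← he a ha, ← he b hb]
    exact h.2.1 a ha b hb
  · intro a ha hp
    rw [← he a ha]
    exact h.2.2 a ha hp

end

section


variable {n : ℕ} {s t u A B : PForest n} {v : ℕ} {p : Fin n}

lemma wf_of_parent_eq (hB : B.WF) (hverts : A.verts = B.verts)
    (hpar : ∀ z ∈ A.verts, A.parent z = B.parent z)
    (hoff : ∀ z, z ∉ A.verts → A.parent z = none) : A.WF := by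
  obtain ⟨hm, rk, hrk⟩ := hB
  constructor
  · intro z w hp
    by_cases hz : z ∈ A.verts
    · rw [hpar z hz] at hp
      have := hm _ _ hp
      exact ⟨hz, hverts ▸ this.2⟩
    · rw [hoff z hz] at hp; exact absurd hp (by simp)
  · refine ⟨rk, fun z w hp => ?_⟩
    by_cases hz : z ∈ A.verts
    · rw [hpar z hz] at hp; exact hrk _ _ hp
    · rw [hoff z hz] at hp; exact absurd hp (by simp)

lemma restrict_verts_above {x : ℕ} :
    (u.restrict (u.aboveSet x)).verts = u.aboveSet x := by
  show u.aboveSet x ∩ u.verts = u.aboveSet x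
  exact Finset.inter_eq_left.mpr (fun z hz => above_subset_verts hz)

lemma restrict_verts_cut {x : ℕ} :
    (u.restrict (u.verts \ u.aboveSet x)).verts = u.verts \ u.aboveSet x := by
  show (u.verts \ u.aboveSet x) ∩ u.verts = u.verts \ u.aboveSet x
  exact Finset.inter_eq_left.mpr (fun z hz => (Finset.mem_sdiff.mp hz).1)

lemma restrict_above_parent_eq (hu : u.WF) (hucard : u.verts.card ≠ 0) {x : ℕ}
    (hx : x ∈ u.verts) :
    ∀ z ∈ u.aboveSet x, (u.restrict (u.aboveSet x)).parent z = (subF u x).parent z := by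
  intro z hz
  have hz2 : z ∈ u.aboveSet x ∩ u.verts := Finset.mem_inter.mpr ⟨hz, above_subset_verts hz⟩
  show (if _ then _ else _) = _
  rw [if_pos hz2]
  by_cases hza : z = x
  · subst hza
    have h1 : u.nearestAnc (u.aboveSet z) z = none := by
      refine nearestAnc_eq_none hu hx ?_
      intro w hw hwS
      simp only [sanc, Finset.mem_filter] at hw
      have := anc_antisymm hu hw.2.1 (mem_above_iff.mp hwS).2
      exact hw.2.2 this.symm
    rw [h1]
    show _ = (if _ then _ else _)
    rw [if_neg (by simp)]
  · obtain ⟨w, hw⟩ := subF_parent_ne_none hu hz hza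
    have hwS : w ∈ u.aboveSet x := parent_mem_above hu hz hza hw
    rw [nearestAnc_eq_some hucard hw hwS]
    show _ = (if _ then _ else _)
    rw [if_pos ⟨hz, hza⟩, hw]

lemma restrict_cut_parent_eq (hu : u.WF) (hucard : u.verts.card ≠ 0) {x : ℕ} :
    ∀ z ∈ u.verts \ u.aboveSet x,
      (u.restrict (u.verts \ u.aboveSet x)).parent z
        = (cutF u (u.aboveSet x)).parent z := by
  intro z hz
  have hz2 : z ∈ (u.verts \ u.aboveSet x) ∩ u.verts :=
    Finset.mem_inter.mpr ⟨hz, (Finset.mem_sdiff.mp hz).1⟩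
  show (if _ then _ else _) = _
  rw [if_pos hz2]
  cases hp : u.parent z with
  | none =>
    rw [nearestAnc_of_parent_none hucard hp]
    show _ = (if _ then _ else _)
    rw [if_pos hz, hp]
  | some w =>
    have hwS : w ∈ u.verts \ u.aboveSet x := cut_parent_closed hu hz hp
    rw [nearestAnc_eq_some hucard hp hwS]
    show _ = (if _ then _ else _)
    rw [if_pos hz, hp]

lemma restrict_above_wf (hu : u.WF) (hucard : u.verts.card ≠ 0) {x : ℕ}
    (hx : x ∈ u.verts) : (u.restrict (u.aboveSet x)).WF := by
  refine wf_of_parent_eq (subF_wf hu) (by rw [restrict_verts_above]; rfl) ?_ ?_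
  · intro z hz
    exact restrict_above_parent_eq hu hucard hx z (restrict_verts_above ▸ hz)
  · intro z hz
    show (if _ then _ else _) = none
    rw [if_neg]
    intro hmem
    exact hz (by rw [restrict_verts_above]; exact (Finset.mem_inter.mp hmem).1)

lemma restrict_cut_wf (hu : u.WF) (hucard : u.verts.card ≠ 0) {x : ℕ} :
    (u.restrict (u.verts \ u.aboveSet x)).WF := by
  refine wf_of_parent_eq (cutF_wf hu (a := x)) (by rw [restrict_verts_cut]; rfl) ?_ ?_
  · intro z hz
    exact restrict_cut_parent_eq hu hucard z (restrict_verts_cut ▸ hz)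
  · intro z hz
    show (if _ then _ else _) = none
    rw [if_neg]
    intro hmem
    exact hz (by rw [restrict_verts_cut]; exact (Finset.mem_inter.mp hmem).1)

end

section


variable {n : ℕ} {s t : PForest n} {v : ℕ} {p : Fin n}

lemma ucard_ne (hs1 : s.IsTree) : (graft s t v p).verts.card ≠ 0 :=
  (Finset.card_pos.mpr ⟨2*root s+1, graft_mem_odd (root_mem hs1)⟩).ne'

/-- the image of the grafted edge under any automorphism is a good edge. -/
lemma good_of_aut (hs : s.WF) (hs1 : s.IsTree) (ht : t.WF) (ht1 : t.IsTree)
    (hv : v ∈ t.verts)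
    {e : {x // x ∈ (graft s t v p).verts} ≃ {x // x ∈ (graft s t v p).verts}}
    (he : IsIsoFn (graft s t v p) (graft s t v p) e) {x : ℕ}
    (hex : (e ⟨2*root s+1, graft_mem_odd (root_mem hs1)⟩ : ℕ) = x) :
    x ∈ (graft s t v p).verts ∧
    ((graft s t v p).parent x).isSome ∧
    PIso ((graft s t v p).restrict ((graft s t v p).aboveSet x)) s ∧
    PIso ((graft s t v p).restrict
      ((graft s t v p).verts \ (graft s t v p).aboveSet x)) t := by
  have hu : (graft s t v p).WF := graft_wf hs ht hv
  have hucard : (graft s t v p).verts.card ≠ 0 := ucard_ne hs1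
  have htopm : 2*root s+1 ∈ (graft s t v p).verts := graft_mem_odd (root_mem hs1)
  have hptop : (graft s t v p).parent (2*root s+1) = some (2*v) :=
    graft_parent_odd_root (parent_root hs1) (root_mem hs1)
  have hfe := isIsoFn_toIso' he
  set fe := fun x => if hx : x ∈ (graft s t v p).verts
    then ((e ⟨x, hx⟩ : {x // x ∈ (graft s t v p).verts}) : ℕ) else x with hfedef
  have hfetop : fe (2*root s+1) = x := by
    simp only [hfedef, dif_pos htopm]
    exact hex
  have hx : x ∈ (graft s t v p).verts := by
    rw [← hfetop]; exact hfe.maps htopm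
  refine ⟨hx, ?_, ?_, ?_⟩
  · have h1 := hfe.isSome hu htopm (by rw [hptop]; rfl)
    rwa [hfetop] at h1
  · have hsub := hfe.subF_iso hu hu htopm
    rw [hfetop] at hsub
    have c1 := restrict_above_iso hu hucard hx
    have c2 := hsub.symm (subF_wf hu)
    have c3 := (iso_s_subtop (t := t) (v := v) (p := p) hs hs1).symm (subF_wf hu)
    exact PIso.of_iso' (Iso'.comp (restrict_above_wf hu hucard hx) c1
      (Iso'.comp (subF_wf hu) c2 c3))
  · have hcut := hfe.cutF_iso hu hu htopm
    rw [hfetop] at hcut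
    have d1 := restrict_cut_iso hu hucard (x := x)
    have d2 := hcut.symm (cutF_wf hu)
    have d3 := (iso_t_cuttop (t := t) (v := v) (p := p) hs hs1).symm (cutF_wf hu)
    exact PIso.of_iso' (Iso'.comp (restrict_cut_wf hu hucard) d1
      (Iso'.comp (cutF_wf hu) d2 d3))

/-- every good edge is the image of the grafted edge under some automorphism. -/
lemma aut_of_good (hs : s.WF) (hs1 : s.IsTree) (ht : t.WF) (ht1 : t.IsTree)
    (hv : v ∈ t.verts) {x : ℕ} (hx : x ∈ (graft s t v p).verts)
    (hsome : ((graft s t v p).parent x).isSome)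
    (hPa : PIso ((graft s t v p).restrict ((graft s t v p).aboveSet x)) s)
    (hPc : PIso ((graft s t v p).restrict
      ((graft s t v p).verts \ (graft s t v p).aboveSet x)) t) :
    ∃ e, IsIsoFn (graft s t v p) (graft s t v p) e ∧
      (e ⟨2*root s+1, graft_mem_odd (root_mem hs1)⟩ : ℕ) = x := by
  have hu : (graft s t v p).WF := graft_wf hs ht hv
  have hucard : (graft s t v p).verts.card ≠ 0 := ucard_ne hs1
  have htopm : 2*root s+1 ∈ (graft s t v p).verts := graft_mem_odd (root_mem hs1)
  have hptop : (graft s t v p).parent (2*root s+1) = some (2*v) :=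
    graft_parent_odd_root (parent_root hs1) (root_mem hs1)
  obtain ⟨f₀, hf₀⟩ := hPa.to_iso'
  have ψ₁ := Iso'.comp (subF_wf hu)
    ((restrict_above_iso hu hucard hx).symm (subF_wf hu)) hf₀
  have hcardx : ((graft s t v p).aboveSet x).card = s.verts.card := ψ₁.card_eq
  rcases graft_mem_elim hx with ⟨a, ha, rfl⟩ | ⟨b, hb, rfl⟩
  swap
  · -- odd: x must be the top
    have h3 := hcardx
    rw [graft_above_odd hb, Finset.card_image_of_injective _ oddinj] at h3
    have heq : s.aboveSet b = s.verts :=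
      Finset.eq_of_subset_of_card_le above_subset_verts (le_of_eq h3.symm)
    have hroot : root s ∈ s.aboveSet b := heq ▸ root_mem hs1
    have hbr : b = root s := anc_root_eq hs1 (mem_above_iff.mp hroot).2
    refine ⟨Equiv.refl _, isIsoFn_refl _, ?_⟩
    rw [hbr]
    rfl
  · -- even case
    have hva : ¬ t.Anc v a := by
      intro hAnc
      have h3 := hcardx
      rw [graft_above_even_full hs hs1 ha hAnc] at h3
      have hdis : Disjoint ((t.aboveSet a).image (fun c => 2*c))
          (s.verts.image (fun b => 2*b+1)) := by
        rw [Finset.disjoint_left]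
        rintro z hz hy
        simp only [Finset.mem_image] at hz hy
        obtain ⟨c, _, rfl⟩ := hz
        obtain ⟨b0, _, e0⟩ := hy
        omega
      rw [Finset.card_union_of_disjoint hdis,
        Finset.card_image_of_injective _ dblinj,
        Finset.card_image_of_injective _ oddinj] at h3
      have h4 := Finset.card_pos.mpr ⟨a, self_mem_above ha⟩
      omega
    obtain ⟨y, hy⟩ : ∃ y, t.parent a = some y := by
      rw [graft_parent_even] at hsome
      cases hq : t.parent a with
      | none => rw [hq] at hsome; exact absurd hsome (by simp)
      | some y => exact ⟨y, rfl⟩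
    have hym : y ∈ t.verts := (ht.1 _ _ hy).2
    have hanr : a ≠ root t := by
      intro e0; rw [e0, parent_root ht1] at hy; exact absurd hy (by simp)
    have hrwf : (cutF t (t.aboveSet a)).WF := cutF_wf ht
    have hr1 : (cutF t (t.aboveSet a)).IsTree := cutF_istree ht ht1 ha hanr
    have hvA : v ∉ t.aboveSet a := fun hm => hva (mem_above_iff.mp hm).2
    have hyA : y ∉ t.aboveSet a := parent_not_mem_above ht hy
    have hvr : v ∈ (cutF t (t.aboveSet a)).verts := Finset.mem_sdiff.mpr ⟨hv, hvA⟩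
    have hyr : y ∈ (cutF t (t.aboveSet a)).verts := Finset.mem_sdiff.mpr ⟨hym, hyA⟩
    have φ := Iso'.comp (subF_wf ht) (iso_subF_even (s := s) (p := p) ht ha hva) ψ₁
    obtain ⟨f₁, hf₁⟩ := hPc.to_iso'
    have hgwf : (graft s (cutF t (t.aboveSet a)) v p).WF := graft_wf hs hrwf hvr
    have ψ := Iso'.comp hgwf (iso_graftcut_id (p := p) hs ht ha hva)
      (Iso'.comp (cutF_wf hu) ((restrict_cut_iso hu hucard).symm (cutF_wf hu)) hf₁)
    have hasm := assemble_iso ht ht1 hs hs1 ha hy φ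
    have chain := Iso'.comp hgwf ψ hasm
    obtain ⟨hcp, k₀, hk₀, hk₀v⟩ := key_lemma (cutF t (t.aboveSet a)).verts.card
      s (cutF t (t.aboveSet a)) v y p (t.color a) hs hs1 hrwf hr1 le_rfl hvr hyr ⟨_, chain⟩
    obtain ⟨k', hk', hk'v, hk'y⟩ := swap_lemma _ (cutF t (t.aboveSet a)) hrwf hr1
      le_rfl hk₀ hvr hk₀v
    -- the glue at the level of the graft
    have hp₂ : (graft s t v p).parent (2*a) = some (2*y) := by
      rw [graft_parent_even, hy]; rfl
    have hanc₁ : ¬ (graft s t v p).Anc (2*root s+1) (2*a) := by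
      intro h
      rcases graft_anc_odd_elim h with ⟨b', e0, -⟩ | ⟨a0, e0, hAnc⟩
      · omega
      · have : a0 = a := by omega
        exact hva (this ▸ hAnc)
    have hanc₂ : ¬ (graft s t v p).Anc (2*a) (2*root s+1) := by
      intro h
      obtain ⟨a', e0, -⟩ := graft_anc_even_elim h
      omega
    have hsubtop_wf : (subF (graft s t v p) (2*root s+1)).WF := subF_wf hu
    have M₁ := Iso'.comp hsubtop_wf
      ((iso_s_subtop (t := t) (v := v) (p := p) hs hs1).symm hsubtop_wf)
      (Iso'.comp hs (φ.symm hs) (iso_subF_even (s := s) (p := p) ht ha hva))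
    have M₂ := Iso'.comp (subF_wf hu) ψ₁ (iso_s_subtop (t := t) (v := v) (p := p) hs hs1)
    -- complement region facts
    have habove_top : (graft s t v p).aboveSet (2*root s+1)
        = s.verts.image (fun b => 2*b+1) := graft_above_top hs hs1
    have habove_x : (graft s t v p).aboveSet (2*a)
        = (t.aboveSet a).image (fun c => 2*c) := graft_above_even ha hva
    have hC : ∀ z, z ∈ (graft s t v p).verts →
        z ∉ (graft s t v p).aboveSet (2*root s+1) →
        z ∉ (graft s t v p).aboveSet (2*a) →
        ∃ c, z = 2*c ∧ c ∈ (cutF t (t.aboveSet a)).verts := by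
      intro z hz h1 h2
      rcases graft_mem_elim hz with ⟨c, hc, rfl⟩ | ⟨b0, hb0, rfl⟩
      · refine ⟨c, rfl, Finset.mem_sdiff.mpr ⟨hc, fun hmem => h2 ?_⟩⟩
        rw [habove_x]
        exact Finset.mem_image.mpr ⟨c, hmem, rfl⟩
      · exact absurd (by rw [habove_top]; exact Finset.mem_image.mpr ⟨b0, hb0, rfl⟩) h1
    have hCmem : ∀ c, c ∈ (cutF t (t.aboveSet a)).verts →
        2*c ∈ (graft s t v p).verts ∧
        2*c ∉ (graft s t v p).aboveSet (2*root s+1) ∧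
        2*c ∉ (graft s t v p).aboveSet (2*a) := by
      intro c hc
      have hc' := Finset.mem_sdiff.mp hc
      refine ⟨graft_mem_even hc'.1, ?_, ?_⟩
      · rw [habove_top]
        rintro hmem
        obtain ⟨b0, -, e0⟩ := Finset.mem_image.mp hmem
        omega
      · rw [habove_x]
        rintro hmem
        obtain ⟨c0, hc0, e0⟩ := Finset.mem_image.mp hmem
        have : c0 = c := by omega
        exact hc'.2 (this ▸ hc0)
    have hk'parent : ∀ c ∈ (cutF t (t.aboveSet a)).verts,
        ((cutF t (t.aboveSet a)).parent c).isSome →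
        t.parent (k' c) = (cutF t (t.aboveSet a)).parent (k' c) := by
      intro c hc _
      have hkc : k' c ∈ (cutF t (t.aboveSet a)).verts := hk'.maps hc
      show _ = (if _ then _ else _)
      rw [if_pos (Finset.mem_sdiff.mpr (Finset.mem_sdiff.mp hkc))]
    have hcutp : ∀ c ∈ (cutF t (t.aboveSet a)).verts,
        (cutF t (t.aboveSet a)).parent c = t.parent c := by
      intro c hc
      show (if _ then _ else _) = _
      rw [if_pos (Finset.mem_sdiff.mpr (Finset.mem_sdiff.mp hc))]
    set R := fun z => 2 * k' (z / 2) with hRdef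
    have hcol₁ : (graft s t v p).color (2*a) = (graft s t v p).color (2*root s+1) := by
      rw [graft_color_even, graft_color_odd_root (parent_root hs1), hcp]
    have hglue := branch_exchange_iso (t := graft s t v p) hu
      (graft_mem_odd (root_mem hs1)) hx hptop hp₂ hanc₁ hanc₂ M₁ M₂
      (R := R) ?_ ?_ ?_ ?_ ?_ ?_ ?_ hcol₁
    rotate_left
    · -- hRmaps
      intro z hz h1 h2
      obtain ⟨c, rfl, hc⟩ := hC z hz h1 h2
      have hkc : k' c ∈ (cutF t (t.aboveSet a)).verts := hk'.maps hc
      have h3 := hCmem (k' c) hkc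
      have he : R (2*c) = 2 * k' c := by simp only [hRdef, two_mul_div]
      rw [he]
      exact h3
    · -- hRinj
      intro z w hz h1 h2 hw h1' h2' he
      obtain ⟨c, rfl, hc⟩ := hC z hz h1 h2
      obtain ⟨c', rfl, hc'⟩ := hC w hw h1' h2'
      simp only [hRdef, two_mul_div] at he
      have : k' c = k' c' := by omega
      have := hk'.1.2.1 (Finset.mem_coe.mpr hc) (Finset.mem_coe.mpr hc') this
      omega
    · -- hRsurj
      intro z hz h1 h2
      obtain ⟨c', rfl, hc'⟩ := hC z hz h1 h2
      obtain ⟨c, hc, hce⟩ := hk'.1.2.2 (Finset.mem_coe.mpr hc')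
      have hcm : c ∈ (cutF t (t.aboveSet a)).verts := Finset.mem_coe.mp hc
      have h3 := hCmem c hcm
      refine ⟨2*c, h3.1, h3.2.1, h3.2.2, ?_⟩
      simp only [hRdef, two_mul_div]
      omega
    · -- hRpar
      intro z hz h1 h2
      obtain ⟨c, rfl, hc⟩ := hC z hz h1 h2
      have hc' := Finset.mem_sdiff.mp hc
      have hkc : k' c ∈ (cutF t (t.aboveSet a)).verts := hk'.maps hc
      have hkc' := Finset.mem_sdiff.mp hkc
      have hRe : R (2*c) = 2 * k' c := by simp only [hRdef, two_mul_div]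
      cases hp : t.parent c with
      | none =>
        refine Or.inl ⟨?_, ?_⟩
        · rw [graft_parent_even, hp]; rfl
        · have hrc : (cutF t (t.aboveSet a)).parent c = none := by
            rw [hcutp c hc, hp]
          have := hk'.parent_none hrwf hc hrc
          rw [hcutp _ hkc] at this
          rw [hRe, graft_parent_even, this]
          rfl
      | some d =>
        have hd : d ∈ t.verts \ t.aboveSet a := cut_parent_closed ht hc hp
        have hd' := Finset.mem_sdiff.mp hd
        have hrc : (cutF t (t.aboveSet a)).parent c = some d := by
          rw [hcutp c hc, hp]
        have h4 := hk'.parent_some hrwf hc hrc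
        rw [hcutp _ hkc] at h4
        have h5 := hCmem d hd
        refine Or.inr ⟨2*d, h5.1, h5.2.1, h5.2.2, ?_, ?_⟩
        · rw [graft_parent_even, hp]; rfl
        · have hRd : R (2*d) = 2 * k' d := by simp only [hRdef, two_mul_div]
          rw [hRe, hRd, graft_parent_even, h4]
          rfl
    · -- hRcol
      intro z hz h1 h2 hpsome
      obtain ⟨c, rfl, hc⟩ := hC z hz h1 h2
      have hRe : R (2*c) = 2 * k' c := by simp only [hRdef, two_mul_div]
      rw [hRe, graft_color_even, graft_color_even]
      have hcsome : ((cutF t (t.aboveSet a)).parent c).isSome := by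
        rw [hcutp c hc]
        rw [graft_parent_even] at hpsome
        cases hq : t.parent c with
        | none => rw [hq] at hpsome; exact absurd hpsome (by simp)
        | some d => rfl
      exact hk'.2.2 c hc hcsome
    · -- hRy₁ : R (2*v) = 2*y
      simp only [hRdef, two_mul_div]
      rw [hk'v]
    · -- hRy₂ : R (2*y) = 2*v
      simp only [hRdef, two_mul_div]
      rw [hk'y]
    · -- finish: convert to a subtype equivalence and compute the value at top
      obtain ⟨e, he, hval⟩ := iso'_toIsIsoFn hglue
      refine ⟨e, he, ?_⟩
      rw [hval _ htopm]
      have htopA : 2*root s+1 ∈ (graft s t v p).aboveSet (2*root s+1) :=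
        self_mem_above htopm
      simp only [if_pos htopA, Function.comp]
      have h1' : Function.invFunOn (fun b : ℕ => 2*b+1) ↑s.verts (2*root s+1) = root s :=
        (iso_s_subtop (t := t) (v := v) (p := p) hs hs1).invOn.1
          (Finset.mem_coe.mpr (root_mem hs1))
      rw [h1']
      have hφa := φ.root_eq (subF_wf ht) (subF_istree ht ha) hs hs1
      rw [subF_root ht ha] at hφa
      have h2 := φ.invOn.1 (Finset.mem_coe.mpr (self_mem_above (t := t) ha))
      rw [hφa] at h2
      rw [h2]

end

section


variable {n : ℕ} {s t t' : PForest n} {v : ℕ} {p : Fin n}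

/-- the subtype equivalence underlying a function-level isomorphism. -/
def iso'Equiv {f : ℕ → ℕ} (h : Iso' t t' f) :
    {x // x ∈ t.verts} ≃ {x // x ∈ t'.verts} :=
  Equiv.ofBijective (fun x : {x // x ∈ t.verts} => (⟨f x, h.maps x.2⟩ : {x // x ∈ t'.verts}))
    (by
      constructor
      · rintro ⟨a, ha⟩ ⟨b, hb⟩ hab
        simp only [Subtype.mk.injEq] at hab
        exact Subtype.ext (h.1.2.1 ha hb hab)
      · rintro ⟨y, hy⟩
        obtain ⟨x, hx, rfl⟩ := h.1.2.2 hy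
        exact ⟨⟨x, hx⟩, rfl⟩)

lemma iso'Equiv_isIsoFn {f : ℕ → ℕ} (h : Iso' t t' f) : IsIsoFn t t' (iso'Equiv h) := by
  constructor
  · rintro ⟨a, ha⟩ ⟨b, hb⟩
    exact h.2.1 a ha b hb
  · rintro ⟨a, ha⟩ hp
    exact h.2.2 a ha hp

lemma iso'Equiv_val {f : ℕ → ℕ} (h : Iso' t t' f) {x : ℕ} (hx : x ∈ t.verts) :
    ((iso'Equiv h) ⟨x, hx⟩ : ℕ) = f x := rfl

/-- dite function of a subtype equivalence -/
def dfn {t t' : PForest n} (e : {x // x ∈ t.verts} ≃ {x // x ∈ t'.verts}) : ℕ → ℕ :=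
  fun x => if hx : x ∈ t.verts then (e ⟨x, hx⟩ : ℕ) else x

lemma dfn_val {e : {x // x ∈ t.verts} ≃ {x // x ∈ t'.verts}} {x : ℕ} (hx : x ∈ t.verts) :
    dfn e x = (e ⟨x, hx⟩ : ℕ) := by
  simp only [dfn, dif_pos hx]

lemma dfn_iso' {e : {x // x ∈ t.verts} ≃ {x // x ∈ t'.verts}} (he : IsIsoFn t t' e) :
    Iso' t t' (dfn e) := isIsoFn_toIso' he

/-- parity preservation for automorphisms of a graft fixing the grafted root. -/
lemma aut_parity (hs : s.WF) (hs1 : s.IsTree) (ht : t.WF) (ht1 : t.IsTree)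
    (hv : v ∈ t.verts) {fg : ℕ → ℕ} (hfg : Iso' (graft s t v p) (graft s t v p) fg)
    (htop : fg (2*root s+1) = 2*root s+1) :
    (∀ b ∈ s.verts, ∃ b' ∈ s.verts, fg (2*b+1) = 2*b'+1) ∧
    (∀ a ∈ t.verts, ∃ a' ∈ t.verts, fg (2*a) = 2*a') := by
  have hu : (graft s t v p).WF := graft_wf hs ht hv
  have htopm : 2*root s+1 ∈ (graft s t v p).verts := graft_mem_odd (root_mem hs1)
  have hoddimg : ((graft s t v p).aboveSet (2*root s+1)).image fg
      = (graft s t v p).aboveSet (2*root s+1) := by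
    have h1 := hfg.above_eq hu hu htopm
    rwa [htop] at h1
  constructor
  · intro b hb
    have hmem : fg (2*b+1) ∈ (graft s t v p).aboveSet (2*root s+1) := by
      rw [← hoddimg]
      refine Finset.mem_image.mpr ⟨2*b+1, ?_, rfl⟩
      rw [graft_above_top hs hs1]
      exact Finset.mem_image.mpr ⟨b, hb, rfl⟩
    rw [graft_above_top hs hs1] at hmem
    obtain ⟨b', hb', he⟩ := Finset.mem_image.mp hmem
    exact ⟨b', hb', he.symm⟩
  · intro a ha
    have hmem : fg (2*a) ∈ (graft s t v p).verts := hfg.maps (graft_mem_even ha)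
    rcases graft_mem_elim hmem with ⟨a', ha', he⟩ | ⟨b', hb', he⟩
    · exact ⟨a', ha', he⟩
    · exfalso
      have hmem2 : fg (2*a) ∈ (graft s t v p).aboveSet (2*root s+1) := by
        rw [graft_above_top hs hs1, he]
        exact Finset.mem_image.mpr ⟨b', hb', rfl⟩
      rw [← hoddimg] at hmem2
      obtain ⟨ζ, hζ, hζe⟩ := Finset.mem_image.mp hmem2
      rw [graft_above_top hs hs1] at hζ
      obtain ⟨b0, hb0, rfl⟩ := Finset.mem_image.mp hζ
      have h3 : 2*b0+1 = 2*a := hfg.1.2.1 (Finset.mem_coe.mpr (graft_mem_odd hb0))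
        (Finset.mem_coe.mpr (graft_mem_even ha)) hζe
      omega

lemma stab_fix_v (hs : s.WF) (hs1 : s.IsTree) (ht : t.WF)
    (hv : v ∈ t.verts) {fg : ℕ → ℕ} (hfg : Iso' (graft s t v p) (graft s t v p) fg)
    (htop : fg (2*root s+1) = 2*root s+1) : fg (2*v) = 2*v := by
  have hu : (graft s t v p).WF := graft_wf hs ht hv
  have htopm : 2*root s+1 ∈ (graft s t v p).verts := graft_mem_odd (root_mem hs1)
  have hptop : (graft s t v p).parent (2*root s+1) = some (2*v) :=
    graft_parent_odd_root (parent_root hs1) (root_mem hs1)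
  have h2 := hfg.parent_some hu htopm hptop
  rw [htop, hptop] at h2
  injection h2 with e
  exact e.symm

lemma invOdd_val (p : Fin n) (hs : s.WF) (hs1 : s.IsTree) (ht : t.WF) (ht1 : t.IsTree)
    (hv : v ∈ t.verts) {b : ℕ} (hb : b ∈ s.verts) :
    Function.invFunOn (fun b : ℕ => 2*b+1) ↑s.verts (2*b+1) = b :=
  (iso_s_subtop (t := t) (v := v) (p := p) hs hs1).invOn.1 (Finset.mem_coe.mpr hb)

lemma invDbl_val (p : Fin n) (hs : s.WF) (hs1 : s.IsTree) (ht : t.WF) (ht1 : t.IsTree)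
    (hv : v ∈ t.verts) {a : ℕ} (ha : a ∈ t.verts) :
    Function.invFunOn (fun a : ℕ => 2*a) ↑t.verts (2*a) = a :=
  (iso_t_cuttop (t := t) (v := v) (p := p) hs hs1).invOn.1 (Finset.mem_coe.mpr ha)

lemma chainA (hs : s.WF) (hs1 : s.IsTree) (ht : t.WF) (ht1 : t.IsTree)
    (hv : v ∈ t.verts) {fg : ℕ → ℕ} (hfg : Iso' (graft s t v p) (graft s t v p) fg)
    (htop : fg (2*root s+1) = 2*root s+1) :
    Iso' s s ((Function.invFunOn (fun b : ℕ => 2*b+1) ↑s.verts ∘ fg) ∘ (fun b : ℕ => 2*b+1)) := by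
  have hu : (graft s t v p).WF := graft_wf hs ht hv
  have htopm : 2*root s+1 ∈ (graft s t v p).verts := graft_mem_odd (root_mem hs1)
  have hsub : Iso' (subF (graft s t v p) (2*root s+1))
      (subF (graft s t v p) (2*root s+1)) fg := by
    have h1 := hfg.subF_iso hu hu htopm
    rwa [htop] at h1
  exact Iso'.comp hs (iso_s_subtop (t := t) (v := v) (p := p) hs hs1)
    (Iso'.comp (subF_wf hu) hsub
      ((iso_s_subtop (t := t) (v := v) (p := p) hs hs1).symm (subF_wf hu)))

lemma chainB (hs : s.WF) (hs1 : s.IsTree) (ht : t.WF) (ht1 : t.IsTree)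
    (hv : v ∈ t.verts) {fg : ℕ → ℕ} (hfg : Iso' (graft s t v p) (graft s t v p) fg)
    (htop : fg (2*root s+1) = 2*root s+1) :
    Iso' t t ((Function.invFunOn (fun a : ℕ => 2*a) ↑t.verts ∘ fg) ∘ (fun a : ℕ => 2*a)) := by
  have hu : (graft s t v p).WF := graft_wf hs ht hv
  have htopm : 2*root s+1 ∈ (graft s t v p).verts := graft_mem_odd (root_mem hs1)
  have hcut : Iso' (cutF (graft s t v p) ((graft s t v p).aboveSet (2*root s+1)))
      (cutF (graft s t v p) ((graft s t v p).aboveSet (2*root s+1))) fg := by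
    have h1 := hfg.cutF_iso hu hu htopm
    rwa [htop] at h1
  exact Iso'.comp ht (iso_t_cuttop (t := t) (v := v) (p := p) hs hs1)
    (Iso'.comp (cutF_wf hu) hcut
      ((iso_t_cuttop (t := t) (v := v) (p := p) hs hs1).symm (cutF_wf hu)))

/-- the stabilizer of the grafted edge splits as a product. -/
lemma stab_card (hs : s.WF) (hs1 : s.IsTree) (ht : t.WF) (ht1 : t.IsTree)
    (hv : v ∈ t.verts) :
    Nat.card {e : {x // x ∈ (graft s t v p).verts} ≃ {x // x ∈ (graft s t v p).verts} //
      IsIsoFn (graft s t v p) (graft s t v p) e ∧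
      e ⟨2*root s+1, graft_mem_odd (root_mem hs1)⟩
        = ⟨2*root s+1, graft_mem_odd (root_mem hs1)⟩}
    = Nat.card {e : {x // x ∈ s.verts} ≃ {x // x ∈ s.verts} // IsIsoFn s s e}
      * Nat.card {e : {x // x ∈ t.verts} ≃ {x // x ∈ t.verts} //
          IsIsoFn t t e ∧ e ⟨v, hv⟩ = ⟨v, hv⟩} := by
  have hu : (graft s t v p).WF := graft_wf hs ht hv
  have htopm : 2*root s+1 ∈ (graft s t v p).verts := graft_mem_odd (root_mem hs1)
  rw [← Nat.card_prod]
  refine Nat.card_congr ?_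
  have hgfacts : ∀ (e0 : {x // x ∈ (graft s t v p).verts} ≃ {x // x ∈ (graft s t v p).verts})
      (he0 : IsIsoFn (graft s t v p) (graft s t v p) e0)
      (hetop : e0 ⟨2*root s+1, graft_mem_odd (root_mem hs1)⟩
        = ⟨2*root s+1, graft_mem_odd (root_mem hs1)⟩),
      Iso' (graft s t v p) (graft s t v p) (dfn e0) ∧
        dfn e0 (2*root s+1) = 2*root s+1 := by
    intro e0 he0 hetop
    exact ⟨dfn_iso' he0, by rw [dfn_val htopm]; exact congrArg Subtype.val hetop⟩
  have hfv : ∀ (ab : {e : {x // x ∈ s.verts} ≃ {x // x ∈ s.verts} // IsIsoFn s s e} ×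
      {e : {x // x ∈ t.verts} ≃ {x // x ∈ t.verts} // IsIsoFn t t e ∧ e ⟨v, hv⟩ = ⟨v, hv⟩}),
      dfn ab.2.1 v = v := by
    intro ab
    rw [dfn_val hv]
    exact congrArg Subtype.val ab.2.2.2
  refine
    { toFun := fun g =>
        (⟨iso'Equiv (chainA hs hs1 ht ht1 hv (hgfacts g.1 g.2.1 g.2.2).1
            (hgfacts g.1 g.2.1 g.2.2).2), iso'Equiv_isIsoFn _⟩,
         ⟨iso'Equiv (chainB hs hs1 ht ht1 hv (hgfacts g.1 g.2.1 g.2.2).1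
            (hgfacts g.1 g.2.1 g.2.2).2), iso'Equiv_isIsoFn _, ?_⟩),
      invFun := fun ab =>
        ⟨iso'Equiv (graft_transport (p := p) hs hs1 hs hs1 ht ht hv
            (dfn_iso' ab.1.2) (dfn_iso' ab.2.2.1) (hfv ab)), iso'Equiv_isIsoFn _, ?_⟩,
      left_inv := ?_, right_inv := ?_ }
  · -- the B-component fixes v
    apply Subtype.ext
    rw [iso'Equiv_val]
    show Function.invFunOn (fun a : ℕ => 2*a) ↑t.verts (dfn g.1 (2*v)) = v
    rw [stab_fix_v hs hs1 ht hv (hgfacts g.1 g.2.1 g.2.2).1 (hgfacts g.1 g.2.1 g.2.2).2]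
    exact invDbl_val p hs hs1 ht ht1 hv hv
  · -- the assembled automorphism fixes the top
    apply Subtype.ext
    rw [iso'Equiv_val]
    show (if (2*root s+1) % 2 = 0 then 2 * dfn ab.2.1 ((2*root s+1)/2)
      else 2 * dfn ab.1.1 ((2*root s+1)/2) + 1) = 2*root s+1
    rw [if_neg (by omega), odd_div]
    have h1 : dfn ab.1.1 (root s) = root s :=
      (dfn_iso' ab.1.2).root_eq hs hs1 hs hs1
    rw [h1]
  · -- left inverse
    intro g
    apply Subtype.ext
    apply Equiv.ext
    intro z
    apply Subtype.ext
    rw [iso'Equiv_val]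
    obtain ⟨hgi, hgt⟩ := hgfacts g.1 g.2.1 g.2.2
    have hpar := aut_parity hs hs1 ht ht1 hv hgi hgt
    rcases graft_mem_elim z.2 with ⟨a, ha, hza⟩ | ⟨b, hb, hzb⟩
    · -- even vertex
      have hz2 : (z : ℕ) = 2*a := hza
      rw [hz2]
      show (if (2*a) % 2 = 0 then 2 * dfn _ ((2*a)/2) else _) = _
      rw [if_pos (two_mul_mod a), two_mul_div]
      rw [dfn_val ha, iso'Equiv_val]
      show 2 * Function.invFunOn (fun a : ℕ => 2*a) ↑t.verts (dfn g.1 (2*a))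
        = ((g.1 z : ℕ))
      obtain ⟨a', ha', he⟩ := hpar.2 a ha
      rw [he, invDbl_val p hs hs1 ht ht1 hv ha', ← he]
      rw [show dfn g.1 (2*a) = (g.1 ⟨2*a, graft_mem_even ha⟩ : ℕ) from dfn_val (graft_mem_even ha)]
      congr 2
      apply Subtype.ext
      exact hz2.symm
    · -- odd vertex
      have hz2 : (z : ℕ) = 2*b+1 := hzb
      rw [hz2]
      show (if (2*b+1) % 2 = 0 then _ else 2 * dfn _ ((2*b+1)/2) + 1) = _
      rw [if_neg (by omega), odd_div]
      rw [dfn_val hb, iso'Equiv_val]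
      show 2 * Function.invFunOn (fun b : ℕ => 2*b+1) ↑s.verts (dfn g.1 (2*b+1)) + 1
        = ((g.1 z : ℕ))
      obtain ⟨b', hb', he⟩ := hpar.1 b hb
      rw [he, invOdd_val p hs hs1 ht ht1 hv hb', ← he]
      rw [show dfn g.1 (2*b+1) = (g.1 ⟨2*b+1, graft_mem_odd hb⟩ : ℕ) from dfn_val (graft_mem_odd hb)]
      congr 2
      apply Subtype.ext
      exact hz2.symm
  · -- right inverse
    intro ab
    apply Prod.ext
    · apply Subtype.ext
      apply Equiv.ext
      intro z
      apply Subtype.ext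
      rw [iso'Equiv_val]
      show (Function.invFunOn (fun b : ℕ => 2*b+1) ↑s.verts)
        (dfn (iso'Equiv (graft_transport (p := p) hs hs1 hs hs1 ht ht hv
          (dfn_iso' ab.1.2) (dfn_iso' ab.2.2.1) (hfv ab))) (2*(z:ℕ)+1)) = ((ab.1.1 z : ℕ))
      rw [show dfn (iso'Equiv (graft_transport (p := p) hs hs1 hs hs1 ht ht hv
          (dfn_iso' ab.1.2) (dfn_iso' ab.2.2.1) (hfv ab))) (2*(z:ℕ)+1)
        = (if (2*(z:ℕ)+1) % 2 = 0 then 2 * dfn ab.2.1 ((2*(z:ℕ)+1)/2)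
            else 2 * dfn ab.1.1 ((2*(z:ℕ)+1)/2) + 1) from by
          rw [dfn_val (graft_mem_odd z.2)]; exact iso'Equiv_val _ _]
      rw [if_neg (by omega), odd_div, dfn_val z.2]
      exact invOdd_val p hs hs1 ht ht1 hv (ab.1.1 z).2
    · apply Subtype.ext
      apply Equiv.ext
      intro z
      apply Subtype.ext
      rw [iso'Equiv_val]
      show (Function.invFunOn (fun a : ℕ => 2*a) ↑t.verts)
        (dfn (iso'Equiv (graft_transport (p := p) hs hs1 hs hs1 ht ht hv
          (dfn_iso' ab.1.2) (dfn_iso' ab.2.2.1) (hfv ab))) (2*(z:ℕ))) = ((ab.2.1 z : ℕ))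
      rw [show dfn (iso'Equiv (graft_transport (p := p) hs hs1 hs hs1 ht ht hv
          (dfn_iso' ab.1.2) (dfn_iso' ab.2.2.1) (hfv ab))) (2*(z:ℕ))
        = (if (2*(z:ℕ)) % 2 = 0 then 2 * dfn ab.2.1 ((2*(z:ℕ))/2)
            else 2 * dfn ab.1.1 ((2*(z:ℕ))/2) + 1) from by
          rw [dfn_val (graft_mem_even z.2)]; exact iso'Equiv_val _ _]
      rw [if_pos (two_mul_mod _), two_mul_div, dfn_val z.2]
      exact invDbl_val p hs hs1 ht ht1 hv (ab.2.1 z).2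

end

section


variable {n : ℕ} {s t : PForest n} {v : ℕ} {p : Fin n}

def autSubgroup (t : PForest n) (ht : t.WF) : Subgroup (Equiv.Perm {x // x ∈ t.verts}) where
  carrier := {e | IsIsoFn t t e}
  one_mem' := isIsoFn_refl t
  mul_mem' := by
    intro a b ha hb
    show IsIsoFn t t (a * b)
    rw [Equiv.Perm.mul_def]
    exact IsIsoFn.trans' ht hb ha
  inv_mem' := by
    intro a ha
    show IsIsoFn t t a⁻¹
    rw [Equiv.Perm.inv_def]
    exact IsIsoFn.symm' ht ha

lemma mem_autSubgroup {ht : t.WF} {e : Equiv.Perm {x // x ∈ t.verts}} :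
    e ∈ autSubgroup t ht ↔ IsIsoFn t t e := Iff.rfl

lemma autCount_eq (ht : t.WF) : autCount t = Nat.card ↥(autSubgroup t ht) :=
  Nat.card_congr (Equiv.subtypeEquivRight (fun e => Iff.rfl))

lemma subgroup_os (ht : t.WF) (b : {x // x ∈ t.verts}) :
    Nat.card ↑(MulAction.orbit ↥(autSubgroup t ht) b) *
      Nat.card ↥(MulAction.stabilizer ↥(autSubgroup t ht) b)
      = Nat.card ↥(autSubgroup t ht) := by
  have h := MulAction.card_orbit_mul_card_stabilizer_eq_card_group ↥(autSubgroup t ht) b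
  simpa [Nat.card_eq_fintype_card] using h

lemma orbit_card_eq_orbitCount (ht : t.WF) (hv : v ∈ t.verts) :
    Nat.card ↑(MulAction.orbit ↥(autSubgroup t ht) (⟨v, hv⟩ : {x // x ∈ t.verts}))
      = orbitCount t v hv := by
  refine Nat.card_congr (Equiv.subtypeEquivRight ?_)
  intro w
  rw [MulAction.mem_orbit_iff]
  constructor
  · rintro ⟨g, hg⟩
    exact ⟨g.1, g.2, hg⟩
  · rintro ⟨e, he, hev⟩
    exact ⟨⟨e, he⟩, hev⟩

lemma stab_card_eq (ht : t.WF) (b : {x // x ∈ t.verts}) :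
    Nat.card ↥(MulAction.stabilizer ↥(autSubgroup t ht) b)
      = Nat.card {e : {x // x ∈ t.verts} ≃ {x // x ∈ t.verts} //
          IsIsoFn t t e ∧ e b = b} := by
  refine Nat.card_congr ?_
  exact
  { toFun := fun g => ⟨g.1.1, g.1.2, g.2⟩
    invFun := fun e => ⟨⟨e.1, e.2.1⟩, e.2.2⟩
    left_inv := fun g => rfl
    right_inv := fun e => rfl }

lemma orbit_top_eq_nCount (hs : s.WF) (hs1 : s.IsTree) (ht : t.WF) (ht1 : t.IsTree)
    (hv : v ∈ t.verts) :
    Nat.card ↑(MulAction.orbit ↥(autSubgroup (graft s t v p) (graft_wf hs ht hv))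
      (⟨2*root s+1, graft_mem_odd (root_mem hs1)⟩ : {x // x ∈ (graft s t v p).verts}))
      = nCount s t (graft s t v p) := by
  have hcard : Nat.card {x // x ∈ ((graft s t v p).verts.filter
      fun x => ((graft s t v p).parent x).isSome ∧
        PIso ((graft s t v p).restrict ((graft s t v p).aboveSet x)) s ∧
        PIso ((graft s t v p).restrict
          ((graft s t v p).verts \ (graft s t v p).aboveSet x)) t)}
      = nCount s t (graft s t v p) := by
    rw [Nat.card_eq_fintype_card]
    exact Fintype.card_coe _
  refine Eq.trans (Nat.card_congr ?_) hcard
  refine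
  { toFun := fun z => ⟨(z.1 : ℕ), ?_⟩
    invFun := fun x => ⟨⟨x.1, (Finset.mem_filter.mp x.2).1⟩, ?_⟩
    left_inv := ?_
    right_inv := ?_ }
  · obtain ⟨g, hg⟩ := MulAction.mem_orbit_iff.mp z.2
    have hgood := good_of_aut hs hs1 ht ht1 hv g.2 (congrArg Subtype.val hg)
    exact Finset.mem_filter.mpr ⟨hgood.1, hgood.2.1, hgood.2.2.1, hgood.2.2.2⟩
  · have hx := Finset.mem_filter.mp x.2
    obtain ⟨e, he, hval⟩ := aut_of_good hs hs1 ht ht1 hv hx.1 hx.2.1 hx.2.2.1 hx.2.2.2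
    exact MulAction.mem_orbit_iff.mpr ⟨⟨e, he⟩, Subtype.ext hval⟩
  · intro z
    apply Subtype.ext
    apply Subtype.ext
    rfl
  · intro x
    apply Subtype.ext
    rfl

end

end PForest
end

/- STATEMENT 6: for u = s ∘_v^p t one has
a_s · a_t · n(s,t,u) = a_u · m(v,t). -/



open PForest in
theorem aut_graft_count {n : ℕ} (s t : PForest n)
    (hs : s.WF ∧ s.IsTree) (ht : t.WF ∧ t.IsTree)
    (v : ℕ) (hv : v ∈ t.verts) (p : Fin n) :
    autCount s * autCount t * nCount s t (graft s t v p)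
      = autCount (graft s t v p) * orbitCount t v hv := by
  obtain ⟨hsw, hs1⟩ := hs
  obtain ⟨htw, ht1⟩ := ht
  have hu : (graft s t v p).WF := graft_wf hsw htw hv
  have hOSt := subgroup_os htw (⟨v, hv⟩ : {x // x ∈ t.verts})
  have hOSu := subgroup_os hu
    (⟨2*root s+1, graft_mem_odd (root_mem hs1)⟩ : {x // x ∈ (graft s t v p).verts})
  rw [orbit_card_eq_orbitCount htw hv, stab_card_eq htw, ← autCount_eq htw] at hOSt
  have hnc : Nat.card ↑(MulAction.orbit ↥(autSubgroup (graft s t v p) hu)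
      (⟨2*root s+1, graft_mem_odd (root_mem hs1)⟩ : {x // x ∈ (graft s t v p).verts}))
      = nCount s t (graft s t v p) := orbit_top_eq_nCount hsw hs1 htw ht1 hv
  rw [hnc, stab_card_eq hu, ← autCount_eq hu] at hOSu
  have hsplit := stab_card (p := p) hsw hs1 htw ht1 hv
  rw [hsplit] at hOSu
  have hAs : Nat.card {e : {x // x ∈ s.verts} ≃ {x // x ∈ s.verts} // IsIsoFn s s e}
      = autCount s := rfl
  rw [hAs] at hOSu
  rw [← hOSt, ← hOSu]
  ring
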